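/- arXiv:2408.13558 — 8 statements merged into one kernel-verified Lean document; each statement's English description precedes it below -/
import Mathlib

section
/- Let A be a finite abelian group and let G = A ⋊₋₁ C₂ be the generalized dihedral group over A, i.e. the semidirect product of A with the cyclic group of order 2 in which the nontrivial element of C₂ acts on A by inversion. Then the ordered Davenport constant of G equals d(A) + 2, where d(A) is the small Davenport constant of A. Concretely: (i) every list of elements of G of length at least d(A) + 2 has a nonempty order-preserving (not necessarily contiguous) sublist whose product, taken in the given order, equals the identity; and (ii) there exists a list of elements of G of length d(A) + 1 with no such nonempty sublist. -/
/-- A list (ordered sequence) over `G` is product-one free if no nonempty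
order-preserving sublist has product equal to the identity. -/
def OrderedProductOneFree {G : Type*} [Group G] (l : List G) : Prop :=
  ∀ t : List G, t.Sublist l → t ≠ [] → t.prod ≠ 1

/-- The ordered Davenport constant: the smallest `k` such that every list of
elements of `G` of length at least `k` has a nonempty sublist with product one. -/
noncomputable def orderedDavenport (G : Type*) [Group G] : ℕ :=
  sInf {k : ℕ | ∀ l : List G, k ≤ l.length → ¬ OrderedProductOneFree l}
/-- A multiset (sequence) over `G` is product-one free if no nonempty submultiset
admits an ordering of its terms whose product is the identity. -/
def ProductOneFreeM {G : Type*} [Group G] (s : Multiset G) : Prop :=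
  ∀ t : Multiset G, t ≤ s → t ≠ 0 → ∀ l : List G, (l : Multiset G) = t → l.prod ≠ 1

/-- The small Davenport constant: the maximal cardinality of a product-one free
multiset over `G`. -/
noncomputable def smallDavenport (G : Type*) [Group G] : ℕ :=
  sSup {n : ℕ | ∃ s : Multiset G, ProductOneFreeM s ∧ Multiset.card s = n}
/-- The action of `C₂ = Multiplicative (ZMod 2)` on a commutative group `A` in which the
nontrivial element acts by the inversion automorphism `x ↦ x⁻¹`. -/
noncomputable def invActionHom (A : Type*) [CommGroup A] :
    Multiplicative (ZMod 2) →* MulAut A :=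
  AddMonoidHom.toMultiplicativeLeft
    (ZMod.lift 2 ⟨zmultiplesHom (Additive (MulAut A)) (Additive.ofMul (MulEquiv.inv A)), by
      show (2 : ℤ) • Additive.ofMul (MulEquiv.inv A) = 0
      have h : (MulEquiv.inv A) ^ (2 : ℤ) = 1 := by
        ext x
        simp [zpow_two, pow_two, MulAut.mul_apply]
      rw [show ((2 : ℤ) • Additive.ofMul (MulEquiv.inv A)) =
            Additive.ofMul ((MulEquiv.inv A) ^ (2 : ℤ)) from rfl, h]
      rfl⟩)

namespace DavAux

open SemidirectProduct List

variable {A : Type*} [CommGroup A]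

abbrev GG (A : Type*) [CommGroup A] := A ⋊[invActionHom A] Multiplicative (ZMod 2)

def tau2 : Multiplicative (ZMod 2) := Multiplicative.ofAdd 1

lemma tau2_mul_tau2 : tau2 * tau2 = 1 := by decide

lemma eq_tau2 : ∀ {s : Multiplicative (ZMod 2)}, s ≠ 1 → s = tau2 := by decide

lemma tau2_ne_one : tau2 ≠ 1 := by decide

lemma phi_tau (a : A) : invActionHom A tau2 a = a⁻¹ := by rfl

lemma phi_one (a : A) : invActionHom A 1 a = a := by simp

lemma rot_eq_inl {g : GG A} (h : g.right = 1) : g = inl g.left := by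
  ext
  · simp
  · simp [h]

lemma refl_eq_mk {g : GG A} (h : g.right ≠ 1) : g = ⟨g.left, tau2⟩ :=
  SemidirectProduct.ext rfl (eq_tau2 h)

lemma rot_prod {C : List (GG A)} (h : ∀ g ∈ C, g.right = 1) :
    C.prod = inl (C.map SemidirectProduct.left).prod := by
  induction C with
  | nil => simp
  | cons g C ih =>
    rw [prod_cons, map_cons, prod_cons, map_mul,
      ih (fun x hx => h x (mem_cons_of_mem _ hx))]
    congr 1
    exact rot_eq_inl (h g mem_cons_self)

lemma compl {W Z : List (GG A)} (h : W <+ Z) :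
    ∃ C, C <+ Z ∧ (C.map SemidirectProduct.left).prod * (W.map SemidirectProduct.left).prod
      = (Z.map SemidirectProduct.left).prod := by
  induction h with
  | slnil => exact ⟨[], Sublist.slnil, by simp⟩
  | @cons l₁ l₂ g h ih =>
    obtain ⟨C, hC, hp⟩ := ih
    exact ⟨g :: C, hC.cons₂ g, by simp only [map_cons, prod_cons]; rw [mul_assoc, hp]⟩
  | @cons_cons l₁ l₂ g h ih =>
    obtain ⟨C, hC, hp⟩ := ih
    exact ⟨C, hC.cons g, by simp only [map_cons, prod_cons]; rw [mul_left_comm, hp]⟩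

lemma refl_mul_inl {g : GG A} (h : g.right ≠ 1) (c : A) :
    g * inl c = ⟨g.left * c⁻¹, tau2⟩ := by
  ext
  · rw [mul_left, eq_tau2 h]
    simp [phi_tau]
  · rw [mul_right, eq_tau2 h]
    simp

lemma refl_mul_refl {g w : GG A} (hg : g.right ≠ 1) (hw : w.right ≠ 1) :
    g * w = inl (g.left * w.left⁻¹) := by
  ext
  · rw [mul_left, eq_tau2 hg]
    simp [phi_tau]
  · rw [mul_right, eq_tau2 hg, eq_tau2 hw]
    simp [tau2_mul_tau2]

lemma inl_mul_any (c : A) (w : GG A) : inl c * w = ⟨c * w.left, w.right⟩ := by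
  ext
  · rw [mul_left]
    simp [phi_one]
  · rw [mul_right]
    simp


/-- Rotation test. -/
def isR (g : GG A) : Bool := decide (g.right = 1)

noncomputable def items : List (GG A) → List A
  | [] => []
  | g :: rest =>
    if g.right = 1 then g.left :: items rest
    else
      match (rest.dropWhile isR).head? with
      | none => items rest
      | some z => (g.left * (((rest.takeWhile isR).map SemidirectProduct.left).prod)⁻¹ *
          z.left⁻¹) :: items rest

lemma items_nil : items ([] : List (GG A)) = [] := rfl

lemma items_rot {g : GG A} (h : g.right = 1) (rest : List (GG A)) :
    items (g :: rest) = g.left :: items rest := by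
  rw [items, if_pos h]

lemma items_refl_nil {g : GG A} (hg : g.right ≠ 1) {rest : List (GG A)}
    (hd : rest.dropWhile isR = []) : items (g :: rest) = items rest := by
  rw [items, if_neg hg, hd]
  rfl

lemma items_refl_cons {g : GG A} (hg : g.right ≠ 1) {rest : List (GG A)} {y : GG A}
    {rest' : List (GG A)} (hdr : rest.dropWhile isR = y :: rest') :
    items (g :: rest) =
      (g.left * (((rest.takeWhile isR).map SemidirectProduct.left).prod)⁻¹ * y.left⁻¹)
        :: items rest := by
  rw [items, if_neg hg, hdr]
  rfl

lemma items_rot_append {Z : List (GG A)} (h : ∀ g ∈ Z, g.right = 1) (l : List (GG A)) :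
    items (Z ++ l) = Z.map SemidirectProduct.left ++ items l := by
  induction Z with
  | nil => simp
  | cons g Z ih =>
    rw [cons_append, items_rot (h g mem_cons_self), map_cons, cons_append,
      ih (fun x hx => h x (mem_cons_of_mem _ hx))]

lemma items_all_rot {l : List (GG A)} (h : ∀ g ∈ l, g.right = 1) :
    items l = l.map SemidirectProduct.left := by
  rw [← append_nil l, items_rot_append h, items_nil, append_nil, append_nil]

lemma length_items : ∀ l : List (GG A), l.length ≤ (items l).length + 1 := by
  intro l
  induction l with
  | nil => simp
  | cons g rest ih =>
    by_cases hg : g.right = 1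
    · rw [items_rot hg]
      simpa using ih
    · by_cases hd : rest.dropWhile isR = []
      · rw [items_refl_nil hg hd]
        have hall : ∀ x ∈ rest, x.right = 1 := by
          intro x hx
          have := List.dropWhile_eq_nil_iff.1 hd x hx
          exact of_decide_eq_true this
        rw [items_all_rot hall]
        simp
      · rcases hdr : rest.dropWhile isR with _ | ⟨y, rest'⟩
        · exact absurd hdr hd
        · rw [items_refl_cons hg hdr]
          simpa using ih

lemma rot_of_takeWhile {rest : List (GG A)} :
    ∀ g ∈ rest.takeWhile isR, g.right = 1 := by
  intro g hg
  have h := List.mem_takeWhile_imp hg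
  simpa [isR] using h

lemma refl_of_dropWhile_cons {rest : List (GG A)} {y : GG A} {rest' : List (GG A)}
    (hdr : rest.dropWhile isR = y :: rest') : y.right ≠ 1 := by
  have h := List.head_dropWhile_not isR (l := rest) (by rw [hdr]; simp)
  simp only [hdr, List.head_cons, isR, decide_eq_false_iff_not] at h
  exact h

lemma realize (n : ℕ) :
    (∀ l : List (GG A), l.length ≤ n → ∀ M : List A, M <+ items l → M ≠ [] →
      ∃ t : List (GG A), t <+ l ∧ t ≠ [] ∧ t.prod = SemidirectProduct.inl M.prod) ∧
    (∀ l : List (GG A), l.length ≤ n → ∀ y : GG A, y.right ≠ 1 → ∀ M : List A,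
      M <+ items (y :: l) →
      ∃ t : List (GG A), t <+ (y :: l) ∧ t ≠ [] ∧ t.prod = ⟨y.left * (M.prod)⁻¹, tau2⟩) := by
  induction n with
  | zero =>
    constructor
    · intro l hl M hM hMne
      rw [List.length_eq_zero_iff.1 (Nat.le_zero.1 hl)] at hM
      rw [items_nil] at hM
      exact absurd (List.sublist_nil.1 hM) hMne
    · intro l hl y hy M hM
      rw [List.length_eq_zero_iff.1 (Nat.le_zero.1 hl)] at hM ⊢
      rw [items_refl_nil hy (show List.dropWhile isR ([] : List (GG A)) = [] from rfl),
        items_nil] at hM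
      rw [List.sublist_nil.1 hM]
      refine ⟨[y], by simp, by simp, ?_⟩
      rw [List.prod_singleton, List.prod_nil]
      exact SemidirectProduct.ext (by simp) (eq_tau2 hy)
  | succ n ih =>
    obtain ⟨ihA, ihB⟩ := ih
    have hA : ∀ l : List (GG A), l.length ≤ n + 1 → ∀ M : List A, M <+ items l → M ≠ [] →
        ∃ t : List (GG A), t <+ l ∧ t ≠ [] ∧ t.prod = SemidirectProduct.inl M.prod := by
      intro l hl M hM hMne
      match l with
      | [] =>
        rw [items_nil] at hM
        exact absurd (List.sublist_nil.1 hM) hMne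
      | x :: rest =>
        have hrl : rest.length ≤ n := by simpa using hl
        by_cases hx : x.right = 1
        · rw [items_rot hx] at hM
          rcases List.sublist_cons_iff.1 hM with h | ⟨M', rfl, hM'⟩
          · obtain ⟨t, ht, htne, htp⟩ := ihA rest hrl M h hMne
            exact ⟨t, ht.cons x, htne, htp⟩
          · by_cases hM'e : M' = []
            · subst hM'e
              refine ⟨[x], (List.nil_sublist rest).cons₂ x, by simp, ?_⟩
              rw [List.prod_singleton, List.prod_cons, List.prod_nil, mul_one]
              exact rot_eq_inl hx
            · obtain ⟨t, ht, htne, htp⟩ := ihA rest hrl M' hM' hM'e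
              refine ⟨x :: t, ht.cons₂ x, by simp, ?_⟩
              rw [List.prod_cons, List.prod_cons, htp, rot_eq_inl hx, ← map_mul]
              simp
        · by_cases hd : rest.dropWhile isR = []
          · rw [items_refl_nil hx hd] at hM
            obtain ⟨t, ht, htne, htp⟩ := ihA rest hrl M hM hMne
            exact ⟨t, ht.cons x, htne, htp⟩
          · rcases hdr : rest.dropWhile isR with _ | ⟨y, rest'⟩
            · exact absurd hdr hd
            · rw [items_refl_cons hx hdr] at hM
              set Z := rest.takeWhile isR with hZdef
              have hZ : ∀ g ∈ Z, g.right = 1 := rot_of_takeWhile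
              have hy : y.right ≠ 1 := refl_of_dropWhile_cons hdr
              have hrest2 : rest = Z ++ y :: rest' := by
                rw [hZdef, ← hdr, List.takeWhile_append_dropWhile]
              rcases List.sublist_cons_iff.1 hM with h | ⟨M', rfl, hM'⟩
              · obtain ⟨t, ht, htne, htp⟩ := ihA rest hrl M h hMne
                exact ⟨t, ht.cons x, htne, htp⟩
              · have hir : items rest = Z.map SemidirectProduct.left ++ items (y :: rest') := by
                  conv_lhs => rw [hrest2]
                  rw [items_rot_append hZ]
                rw [hir] at hM'
                obtain ⟨W, M'', rfl, hW, hM''⟩ := List.sublist_append_iff.1 hM'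
                obtain ⟨W₀, hW₀, rfl⟩ := List.sublist_map_iff.1 hW
                obtain ⟨C, hC, hCp⟩ := compl hW₀
                have hr'l : rest'.length ≤ n := by
                  have := congrArg List.length hrest2
                  simp only [List.length_append, List.length_cons] at this
                  omega
                obtain ⟨t'', ht'', ht''ne, ht''p⟩ := ihB rest' hr'l y hy M'' hM''
                refine ⟨x :: (C ++ t''), ?_, by simp, ?_⟩
                · refine (hC.append ht'').cons₂ x |>.trans ?_
                  rw [← hrest2]
                · rw [List.prod_cons, List.prod_append,
                    rot_prod (fun g hg' => hZ g (hC.subset hg')), ht''p, inl_mul_any]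
                  rw [show (⟨y.left * M''.prod⁻¹, tau2⟩ : GG A).left = y.left * M''.prod⁻¹ from rfl,
                    show (⟨y.left * M''.prod⁻¹, tau2⟩ : GG A).right = tau2 from rfl]
                  rw [refl_mul_refl hx (show tau2 ≠ 1 from tau2_ne_one)]
                  congr 1
                  rw [show (⟨(C.map SemidirectProduct.left).prod * (y.left * M''.prod⁻¹),
                    tau2⟩ : GG A).left = (C.map SemidirectProduct.left).prod *
                    (y.left * M''.prod⁻¹) from rfl]
                  rw [List.prod_cons, List.prod_append, ← hCp]
                  simp [mul_inv_rev, mul_comm, mul_left_comm, mul_assoc]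
    refine ⟨hA, ?_⟩
    intro l hl y hy M hM
    by_cases hd : l.dropWhile isR = []
    · have hall : ∀ g ∈ l, g.right = 1 := by
        intro g hg
        exact of_decide_eq_true (List.dropWhile_eq_nil_iff.1 hd g hg)
      rw [items_refl_nil hy hd, items_all_rot hall] at hM
      obtain ⟨M₀, hM₀, rfl⟩ := List.sublist_map_iff.1 hM
      refine ⟨y :: M₀, hM₀.cons₂ y, by simp, ?_⟩
      rw [List.prod_cons, rot_prod (fun g hg => hall g (hM₀.subset hg)),
        refl_mul_inl hy]
    · rcases hdr : l.dropWhile isR with _ | ⟨z, rest''⟩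
      · exact absurd hdr hd
      · rw [items_refl_cons hy hdr] at hM
        set Z := l.takeWhile isR with hZdef
        have hZ : ∀ g ∈ Z, g.right = 1 := rot_of_takeWhile
        have hz : z.right ≠ 1 := refl_of_dropWhile_cons hdr
        have hl2 : l = Z ++ z :: rest'' := by
          rw [hZdef, ← hdr, List.takeWhile_append_dropWhile]
        have hil : items l = Z.map SemidirectProduct.left ++ items (z :: rest'') := by
          conv_lhs => rw [hl2]
          rw [items_rot_append hZ]
        have hlen : Z.length + rest''.length + 1 = l.length := by
          rw [hl2]; simp only [List.length_append, List.length_cons]; omega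
        rcases List.sublist_cons_iff.1 hM with h | ⟨M₃, rfl, hM₃⟩
        · rw [hil] at h
          obtain ⟨W, M₄, rfl, hW, hM₄⟩ := List.sublist_append_iff.1 h
          obtain ⟨W₀, hW₀, rfl⟩ := List.sublist_map_iff.1 hW
          by_cases h4 : M₄ = []
          · subst h4
            refine ⟨y :: W₀, (hW₀.trans (by rw [hl2]; exact (Z.sublist_append_left _))).cons₂ y,
              by simp, ?_⟩
            rw [List.prod_cons, rot_prod (fun g hg => hZ g (hW₀.subset hg)), refl_mul_inl hy]
            rw [List.append_nil]
          · obtain ⟨t₄, ht₄, ht₄ne, ht₄p⟩ := hA (z :: rest'') (by simp only [List.length_cons]; omega) M₄ hM₄ h4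
            refine ⟨y :: (W₀ ++ t₄), ((hW₀.append ht₄).trans (by rw [← hl2])).cons₂ y,
              by simp, ?_⟩
            rw [List.prod_cons, List.prod_append, rot_prod (fun g hg => hZ g (hW₀.subset hg)),
              ht₄p, ← map_mul, refl_mul_inl hy, List.prod_append]
        · rw [hil] at hM₃
          obtain ⟨W, M₄, rfl, hW, hM₄⟩ := List.sublist_append_iff.1 hM₃
          obtain ⟨W₀, hW₀, rfl⟩ := List.sublist_map_iff.1 hW
          obtain ⟨C, hC, hCp⟩ := compl hW₀
          obtain ⟨t₄, ht₄, ht₄ne, ht₄p⟩ := ihB rest'' (by omega) z hz M₄ hM₄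
          refine ⟨C ++ t₄, ((hC.append ht₄).trans (by rw [← hl2])).cons y,
            by simp [ht₄ne], ?_⟩
          rw [List.prod_append, rot_prod (fun g hg => hZ g (hC.subset hg)), ht₄p, inl_mul_any]
          refine SemidirectProduct.ext ?_ rfl
          rw [show (⟨z.left * M₄.prod⁻¹, tau2⟩ : GG A).left = z.left * M₄.prod⁻¹ from rfl]
          show (C.map SemidirectProduct.left).prod * (z.left * M₄.prod⁻¹) = _
          rw [List.prod_cons, List.prod_append, ← hCp]
          simp only [mul_inv_rev, mul_comm, mul_left_comm, mul_assoc, inv_inv]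
          rw [mul_left_comm y.left z.left, mul_inv_cancel_left]
          simp only [mul_inv_cancel_left]

end DavAux

namespace DavAux
section Davenport
open List

variable (A : Type*) [CommGroup A] [Finite A]

lemma exists_prod_one_of_card {L : List A} (h : Nat.card A ≤ L.length) :
    ∃ t, t <+ L ∧ t ≠ [] ∧ t.prod = 1 := by
  have : Fintype A := Fintype.ofFinite A
  have hcard : Fintype.card A < Fintype.card (Fin (L.length + 1)) := by
    rw [Fintype.card_fin]
    have := Nat.card_eq_fintype_card (α := A)
    omega
  obtain ⟨i, j, hne, hfe⟩ := Fintype.exists_ne_map_eq_of_card_lt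
    (fun i : Fin (L.length + 1) => (L.take i).prod) hcard
  have key : ∀ i j : Fin (L.length + 1), (i : ℕ) < j →
      (L.take i).prod = (L.take j).prod → ∃ t, t <+ L ∧ t ≠ [] ∧ t.prod = 1 := by
    intro i j hij hpe
    refine ⟨(L.drop i).take (j - i), ((L.drop i).take_sublist _).trans (L.drop_sublist i), ?_, ?_⟩
    · have hjl : (j : ℕ) ≤ L.length := Fin.is_le j
      have : ((L.drop i).take (j - i)).length = j - i := by
        rw [List.length_take, List.length_drop]
        omega
      intro hnil
      rw [hnil] at this
      simp at this
      omega
    · have hsplit : L.take j = L.take i ++ (L.drop i).take (j - i) := by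
        have : (j : ℕ) = i + (j - i) := by omega
        rw [this, List.take_add]
        congr 2
        omega
      rw [hsplit, List.prod_append] at hpe
      exact (mul_eq_left.1 hpe.symm)
  rcases Ne.lt_or_gt hne with h' | h'
  · exact key i j h' hfe
  · exact key j i h' hfe.symm

lemma pf_card_le {s : Multiset A} (h : ProductOneFreeM s) : Multiset.card s ≤ Nat.card A := by
  by_contra hc
  push_neg at hc
  obtain ⟨t, ht, htne, htp⟩ := exists_prod_one_of_card A
    (L := s.toList) (by rw [Multiset.length_toList]; omega)
  refine h ↑t ?_ ?_ t rfl htp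
  · rw [← Multiset.coe_toList s]
    exact Multiset.coe_le.2 ht.subperm
  · simpa using htne

lemma davSet_bddAbove : BddAbove {n : ℕ | ∃ s : Multiset A, ProductOneFreeM s ∧
    Multiset.card s = n} := by
  refine ⟨Nat.card A, ?_⟩
  rintro n ⟨s, hs, rfl⟩
  exact pf_card_le A hs

lemma davSet_zero_mem : 0 ∈ {n : ℕ | ∃ s : Multiset A, ProductOneFreeM s ∧
    Multiset.card s = n} := by
  refine ⟨0, ?_, rfl⟩
  intro t ht htne l hl
  exact absurd (Multiset.le_zero.1 ht) htne

lemma pf_le_smallDavenport {s : Multiset A} (h : ProductOneFreeM s) :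
    Multiset.card s ≤ smallDavenport A :=
  le_csSup (davSet_bddAbove A) ⟨s, h, rfl⟩

lemma exists_extremal : ∃ s : Multiset A, ProductOneFreeM s ∧
    Multiset.card s = smallDavenport A :=
  Nat.sSup_mem ⟨0, davSet_zero_mem A⟩ (davSet_bddAbove A)

lemma exists_subone {L : List A} (h : smallDavenport A + 1 ≤ L.length) :
    ∃ M, M <+ L ∧ M ≠ [] ∧ M.prod = 1 := by
  have hnpf : ¬ ProductOneFreeM (↑L : Multiset A) := by
    intro hpf
    have := pf_le_smallDavenport A hpf
    rw [Multiset.coe_card] at this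
    omega
  unfold ProductOneFreeM at hnpf
  push_neg at hnpf
  obtain ⟨t, hts, htne, l₀, hl₀, hprod⟩ := hnpf
  have : l₀ <+~ L := by
    rw [← Multiset.coe_le, hl₀]
    exact hts
  obtain ⟨M, hMperm, hMsub⟩ := this
  refine ⟨M, hMsub, ?_, ?_⟩
  · intro hnil
    apply htne
    have hl0nil : l₀ = [] := List.perm_nil.1 (hnil ▸ hMperm).symm
    rw [← hl₀, hl0nil]
    rfl
  · rw [hMperm.prod_eq, hprod]

end Davenport
end DavAux

namespace DavAux

open SemidirectProduct List

variable {A : Type*} [CommGroup A]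

lemma prod_right (t : List (GG A)) :
    t.prod.right = (t.map SemidirectProduct.right).prod := by
  induction t with
  | nil => simp
  | cons g t ih => rw [prod_cons, mul_right, map_cons, prod_cons, ih]

lemma lower_example [Finite A] : ∃ l : List (GG A),
    l.length = smallDavenport A + 1 ∧ OrderedProductOneFree l := by
  obtain ⟨s, hs, hcard⟩ := exists_extremal A
  refine ⟨s.toList.map SemidirectProduct.inl ++ [⟨1, tau2⟩], ?_, ?_⟩
  · simp [hcard]
  · intro t ht htne hprod
    obtain ⟨t₁, t₂, rfl, ht₁, ht₂⟩ := sublist_append_iff.1 ht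
    obtain ⟨u, hu, rfl⟩ := sublist_map_iff.1 ht₁
    rcases sublist_cons_iff.1 ht₂ with h2 | ⟨r, rfl, hr⟩
    · rw [sublist_nil.1 h2, append_nil] at hprod htne
      rw [← map_list_prod] at hprod
      have hu1 : u.prod = 1 := inl_injective (by rw [hprod, map_one])
      have hune : u ≠ [] := by rintro rfl; exact htne rfl
      refine hs ↑u ?_ (by simpa using hune) u rfl hu1
      calc (↑u : Multiset A) ≤ ↑s.toList := Multiset.coe_le.2 hu.subperm
        _ = s := Multiset.coe_toList s
    · have hr0 : r = [] := sublist_nil.1 hr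
      subst hr0
      have h1 := congrArg SemidirectProduct.right hprod
      rw [prod_right] at h1
      simp only [map_append, List.map_map, map_cons, map_nil, prod_append, prod_cons,
        prod_nil] at h1
      have h2 : (List.map (SemidirectProduct.right ∘ (SemidirectProduct.inl :
          A →* GG A)) u).prod = 1 := by
        have he : (SemidirectProduct.right ∘ ((SemidirectProduct.inl : A →* GG A) : A → GG A))
            = fun _ => (1 : Multiplicative (ZMod 2)) := by
          funext a
          simp [Function.comp]
        rw [he]
        simp
      rw [h2, one_mul] at h1
      have h4 : SemidirectProduct.right (1 : GG A) = 1 := rfl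
      rw [h4, mul_one] at h1
      exact tau2_ne_one h1

end DavAux

/-- For a finite abelian group `A` and `G = A ⋊₋₁ C₂` (the generalized
dihedral group, the nontrivial element of `C₂` acting by inversion), the ordered Davenport
constant of `G` equals `d(A) + 2`: (i) every list over `G` of length at least `d(A) + 2`
has a nonempty sublist with product one, and (ii) there is a product-one free list of
length `d(A) + 1`. -/
theorem orderedDavenport_generalizedDihedral (A : Type*) [CommGroup A] [Finite A] :
    (∀ l : List (A ⋊[invActionHom A] Multiplicative (ZMod 2)),
        smallDavenport A + 2 ≤ l.length → ¬ OrderedProductOneFree l) ∧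
    (∃ l : List (A ⋊[invActionHom A] Multiplicative (ZMod 2)),
        l.length = smallDavenport A + 1 ∧ OrderedProductOneFree l) := by
  constructor
  · intro l hlen hOPF
    have h1 : smallDavenport A + 1 ≤ (DavAux.items l).length := by
      have := DavAux.length_items l
      omega
    obtain ⟨M, hM, hMne, hMp⟩ := DavAux.exists_subone A h1
    obtain ⟨t, ht, htne, htp⟩ := (DavAux.realize (A := A) l.length).1 l le_rfl M hM hMne
    exact hOPF t ht htne (by rw [htp, hMp, map_one])
  · exact DavAux.lower_example
end

section
/- Let A be a finite abelian group and let G = A ⋊₋₁ C₂ be the generalized dihedral group over A (the nontrivial element of C₂ acts on A by inversion). Then the small Davenport constant of G equals d(A) + 1; that is: (i) there exists a multiset over G of cardinality d(A) + 1 such that no nonempty submultiset admits an ordering of its terms whose product is the identity, and (ii) every multiset over G of cardinality d(A) + 2 has a nonempty submultiset admitting an ordering of its terms whose product is the identity. -/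
open Multiset SemidirectProduct

section GenGroup
variable {Γ : Type*} [Group Γ]

lemma pof_zero : ProductOneFreeM (0 : Multiset Γ) := by
  intro t ht hne
  rw [Multiset.le_zero] at ht
  exact absurd ht hne

lemma pof_card_lt [Finite Γ] (s : Multiset Γ) (h : ProductOneFreeM s) :
    Multiset.card s < Nat.card Γ := by
  by_contra hlt
  push_neg at hlt
  set N := Nat.card Γ with hN
  obtain ⟨l, hl⟩ : ∃ l : List Γ, (l : Multiset Γ) = s := ⟨s.toList, s.coe_toList⟩
  have hlen : N ≤ l.length := by
    have h2 : Multiset.card (l : Multiset Γ) = l.length := Multiset.coe_card l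
    rw [hl] at h2; omega
  have key : ∀ i j : Fin (N + 1), (i : ℕ) < (j : ℕ) →
      (l.take i).prod = (l.take j).prod → False := by
    intro i j hij heq
    set seg := (l.take j).drop i with hseg
    have htj : l.take (j : ℕ) = l.take (i : ℕ) ++ seg := by
      rw [hseg]
      conv_lhs => rw [← List.take_append_drop (i : ℕ) (l.take (j : ℕ))]
      rw [List.take_take, min_eq_left hij.le]
    have hp : seg.prod = 1 := by
      have := heq
      rw [htj, List.prod_append] at this
      exact (left_eq_mul.mp this)
    have hlenseg : seg ≠ [] := by
      have : seg.length = min (j : ℕ) l.length - (i : ℕ) := by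
        simp [hseg]
      have hj : (j : ℕ) ≤ l.length := by omega
      intro hnil
      rw [hnil] at this
      simp at this
      omega
    have hsub : seg.Sublist l := ((List.drop_sublist _ _).trans (List.take_sublist _ _))
    have hle : (seg : Multiset Γ) ≤ s := by
      rw [← hl]
      exact Multiset.coe_le.mpr hsub.subperm
    exact h (seg : Multiset Γ) hle (by simpa using hlenseg) seg rfl hp
  have : Fintype Γ := Fintype.ofFinite Γ
  have hcard : Fintype.card Γ < Fintype.card (Fin (N + 1)) := by
    simp [hN, Nat.card_eq_fintype_card]
  obtain ⟨i, j, hij, heq⟩ :=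
    Fintype.exists_ne_map_eq_of_card_lt (fun i : Fin (N + 1) => (l.take (i : ℕ)).prod) hcard
  rcases lt_or_gt_of_ne (fun hvv : (i : ℕ) = (j : ℕ) => hij (Fin.ext hvv)) with hlt2 | hlt2
  · exact key i j hlt2 heq
  · exact key j i hlt2 heq.symm

lemma dav_bddAbove (Γ : Type*) [Group Γ] [Finite Γ] :
    BddAbove {n : ℕ | ∃ s : Multiset Γ, ProductOneFreeM s ∧ Multiset.card s = n} := by
  refine ⟨Nat.card Γ, fun n hn => ?_⟩
  obtain ⟨s, hs, rfl⟩ := hn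
  exact (pof_card_lt s hs).le

lemma exists_pof_card (Γ : Type*) [Group Γ] [Finite Γ] :
    ∃ s : Multiset Γ, ProductOneFreeM s ∧ Multiset.card s = smallDavenport Γ := by
  have h := Nat.sSup_mem (s := {n : ℕ | ∃ s : Multiset Γ, ProductOneFreeM s ∧ Multiset.card s = n})
    ⟨0, 0, pof_zero, rfl⟩ (dav_bddAbove Γ)
  exact h

lemma not_pof_of_gt [Finite Γ] (s : Multiset Γ) (h : smallDavenport Γ < Multiset.card s) :
    ¬ ProductOneFreeM s := by
  intro hp
  have h2 : Multiset.card s ≤ smallDavenport Γ := le_csSup (dav_bddAbove Γ) ⟨s, hp, rfl⟩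
  omega

end GenGroup

section MultisetHelpers
variable {α β : Type*}

lemma exists_of_le_map' {f : α → β} {s : Multiset α} {u : Multiset β} (h : u ≤ s.map f) :
    ∃ v : Multiset α, v ≤ s ∧ v.map f = u := by
  obtain ⟨ls, rfl⟩ : ∃ l : List α, (l : Multiset α) = s := ⟨s.toList, s.coe_toList⟩
  obtain ⟨lu, rfl⟩ : ∃ l : List β, (l : Multiset β) = u := ⟨u.toList, u.coe_toList⟩
  rw [Multiset.map_coe] at h
  obtain ⟨lu', hperm, hsub⟩ := Multiset.coe_le.mp h
  obtain ⟨lv, hlv, rfl⟩ := List.sublist_map_iff.mp hsub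
  exact ⟨(lv : Multiset α), Multiset.coe_le.mpr hlv.subperm, by
    rw [Multiset.map_coe]; exact Multiset.coe_eq_coe.mpr hperm⟩

lemma split_le_add {u w₁ w₂ : Multiset α} (h : u ≤ w₁ + w₂) :
    ∃ u₁ u₂ : Multiset α, u₁ ≤ w₁ ∧ u₂ ≤ w₂ ∧ u = u₁ + u₂ := by
  classical
  refine ⟨u ∩ w₁, u - w₁, Multiset.inter_le_right, ?_, ?_⟩
  · rw [Multiset.sub_le_iff_le_add]
    exact h.trans_eq (add_comm _ _)
  · ext a
    have hc := Multiset.count_le_of_le a h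
    simp only [Multiset.count_add, Multiset.count_inter, Multiset.count_sub]
    omega

lemma map_getD_le (d : α) : ∀ (n : ℕ) (l : List α) (J : Finset ℕ), J.card ≤ n →
    (∀ i ∈ J, i < l.length) →
    J.val.map (fun i => l.getD i d) ≤ (l : Multiset α) := by
  intro n
  induction n with
  | zero =>
    intro l J hJ _
    rw [Finset.card_eq_zero.mp (Nat.le_zero.mp hJ)]
    simp
  | succ n ih =>
    intro l J hJ hmem
    rcases Finset.eq_empty_or_nonempty J with rfl | hne
    · simp
    set e := J.max' hne with he
    have heJ : e ∈ J := J.max'_mem hne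
    set J' := J.erase e with hJ'
    have h1 : ∀ i ∈ J', i < e := fun i hi =>
      lt_of_le_of_ne (J.le_max' i (Finset.mem_of_mem_erase hi)) (Finset.ne_of_mem_erase hi)
    have hcard' : J'.card ≤ n := by
      have h5 : J'.card = J.card - 1 := by rw [hJ']; exact Finset.card_erase_of_mem heJ
      have hpos := Finset.card_pos.mpr hne
      omega
    have hmem' : ∀ i ∈ J', i < (l.take e).length := by
      intro i hi
      have := hmem i (Finset.mem_of_mem_erase hi)
      simp only [List.length_take]
      exact lt_min (h1 i hi) this
    have h2 := ih (l.take e) J' hcard' hmem'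
    have h3 : J'.val.map (fun i => l.getD i d) = J'.val.map (fun i => (l.take e).getD i d) := by
      apply Multiset.map_congr rfl
      intro i hi
      have hilen : i < l.length := hmem i (Finset.mem_of_mem_erase hi)
      have hie : i < e := h1 i hi
      rw [List.getD_eq_getElem l d hilen, List.getD_eq_getElem (l.take e) d (by simpa [List.length_take] using lt_min hie hilen)]
      simp [List.getElem_take]
    have hval : J.val = e ::ₘ J'.val := by
      rw [hJ', Finset.erase_val]
      exact (Multiset.cons_erase heJ).symm
    rw [hval, Multiset.map_cons, h3]
    have helen : e < l.length := hmem e heJ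
    have hsplit : (l : Multiset α) = (l.take e : List α) + (l.getD e d ::ₘ (l.drop (e + 1) : List α)) := by
      conv_lhs => rw [← List.take_append_drop e l]
      rw [← Multiset.coe_add]
      congr 1
      rw [List.drop_eq_getElem_cons helen, List.getD_eq_getElem l d helen]
      rfl
    rw [hsplit]
    calc (l.getD e d ::ₘ J'.val.map fun i => (l.take e).getD i d)
        ≤ l.getD e d ::ₘ (l.take e : Multiset α) := Multiset.cons_le_cons _ h2
      _ ≤ (l.take e : Multiset α) + (l.getD e d ::ₘ (l.drop (e + 1) : Multiset α)) := by
          rw [Multiset.add_cons]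
          exact Multiset.cons_le_cons _ (Multiset.le_add_right _ _)

end MultisetHelpers

section GSpecific
variable {A : Type*} [CommGroup A]

local notation "τ" => Multiplicative.ofAdd (1 : ZMod 2)
local notation "G'" => A ⋊[invActionHom A] Multiplicative (ZMod 2)

lemma mul_tau (x y : G') (hx : x.right = τ) (hy : y.right = τ) :
    x * y = SemidirectProduct.inl (x.left * y.left⁻¹) := by
  ext
  · simp [hx, hy]; exact rfl
  · simp [hx, hy]; decide

lemma right_one_eq (x : G') (hx : x.right = 1) : x = SemidirectProduct.inl x.left := by
  ext
  · simp
  · simp [hx]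

lemma list_prod_inl (l : List G') (h : ∀ x ∈ l, x.right = 1) :
    l.prod = SemidirectProduct.inl (l.map SemidirectProduct.left).prod := by
  induction l with
  | nil => simp
  | cons x xs ih =>
    simp only [List.prod_cons, List.map_cons]
    rw [ih (fun y hy => h y (List.mem_cons_of_mem _ hy)), map_mul]
    congr 1
    exact right_one_eq x (h x (List.mem_cons_self))

lemma telescope (a : ℕ → A) : ∀ e s : ℕ, s ≤ e →
    ∏ i ∈ Finset.Icc s e, (a i * (a (i + 1))⁻¹) = a s * (a (e + 1))⁻¹ := by
  intro e
  induction e with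
  | zero =>
    intro s hs
    interval_cases s
    simp
  | succ e ih =>
    intro s hs
    rcases Nat.lt_or_ge s (e + 1) with h | h
    · have hse : s ≤ e := by omega
      rw [Finset.prod_Icc_succ_top (by omega), ih s hse]
      group
    · have : s = e + 1 := by omega
      subst this
      simp

lemma realize (g : ℕ → G') (hg : ∀ i, (g i).right = τ) :
    ∀ (N : ℕ) (I : Finset ℕ), I.card ≤ N →
    ∃ L : List G', (L = [] → I = ∅) ∧
      (L : Multiset G') ≤ (I ∪ I.image (· + 1)).val.map g ∧
      L.prod = SemidirectProduct.inl
        (∏ i ∈ I, ((g i).left * ((g (i + 1)).left)⁻¹)) := by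
  intro N
  induction N with
  | zero =>
    intro I hI
    rw [Finset.card_eq_zero.mp (Nat.le_zero.mp hI)]
    exact ⟨[], fun _ => rfl, by simp, by simp⟩
  | succ N ih =>
    intro I hI
    rcases Finset.eq_empty_or_nonempty I with rfl | hne
    · exact ⟨[], fun _ => rfl, by simp, by simp⟩
    set e := I.max' hne with he
    have heI : e ∈ I := I.max'_mem hne
    set S := (Finset.range (e + 1)).filter (fun j => Finset.Icc j e ⊆ I) with hS
    have heS : e ∈ S := by
      rw [hS, Finset.mem_filter]
      exact ⟨Finset.mem_range.mpr (by omega), by simp [Finset.Icc_self, heI]⟩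
    set s := S.min' ⟨e, heS⟩ with hsdef
    have hsS : s ∈ S := S.min'_mem _
    have hIcc : Finset.Icc s e ⊆ I := (Finset.mem_filter.mp hsS).2
    have hse : s ≤ e := S.min'_le e heS
    have hsI : s ∈ I := hIcc (Finset.mem_Icc.mpr ⟨le_refl s, hse⟩)
    have hpred : ∀ j ∈ I, j + 1 ≠ s := by
      intro j hj hj1
      have hjS : j ∈ S := by
        rw [hS, Finset.mem_filter]
        refine ⟨Finset.mem_range.mpr (by omega), fun i hi => ?_⟩
        rcases Finset.mem_Icc.mp hi with ⟨h1, h2⟩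
        rcases Nat.eq_or_lt_of_le h1 with rfl | hlt
        · exact hj
        · exact hIcc (Finset.mem_Icc.mpr ⟨by omega, h2⟩)
      have := S.min'_le j hjS
      omega
    set I' := I \ Finset.Icc s e with hI'
    have hI'card : I'.card ≤ N := by
      have h1 : I'.card = I.card - (Finset.Icc s e).card := by
        rw [hI']; exact Finset.card_sdiff_of_subset hIcc
      have h2 : (Finset.Icc s e).card = e + 1 - s := Nat.card_Icc s e
      omega
    have hI'lt : ∀ j ∈ I', j + 1 < s := by
      intro j hj
      rw [hI', Finset.mem_sdiff] at hj
      obtain ⟨hjI, hjn⟩ := hj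
      have hje : j ≤ e := I.le_max' j hjI
      have : ¬ (s ≤ j ∧ j ≤ e) := fun hc => hjn (Finset.mem_Icc.mpr hc)
      have hjs : j < s := by omega
      have := hpred j hjI
      omega
    obtain ⟨L', hL'ne, hL'le, hL'prod⟩ := ih I' hI'card
    refine ⟨L' ++ [g s, g (e + 1)], by simp, ?_, ?_⟩
    · -- multiset bound
      have hA'lt : ∀ j ∈ I' ∪ I'.image (· + 1), j < s := by
        intro j hj
        rcases Finset.mem_union.mp hj with h | h
        · have := hI'lt j h; omega
        · obtain ⟨i, hi, rfl⟩ := Finset.mem_image.mp h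
          exact hI'lt i hi
      have hsA' : s ∉ I' ∪ I'.image (· + 1) := fun h => lt_irrefl s (hA'lt s h)
      have heA' : e + 1 ∉ I' ∪ I'.image (· + 1) := fun h => by
        have := hA'lt _ h; omega
      have hsne : s ∉ insert (e + 1) (I' ∪ I'.image (· + 1)) := by
        intro h
        rcases Finset.mem_insert.mp h with h | h
        · omega
        · exact hsA' h
      have hsubB : insert s (insert (e + 1) (I' ∪ I'.image (· + 1))) ⊆ I ∪ I.image (· + 1) := by
        intro j hj
        rcases Finset.mem_insert.mp hj with rfl | hj
        · exact Finset.mem_union_left _ hsI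
        rcases Finset.mem_insert.mp hj with rfl | hj
        · exact Finset.mem_union_right _ (Finset.mem_image.mpr ⟨e, heI, rfl⟩)
        rcases Finset.mem_union.mp hj with h | h
        · exact Finset.mem_union_left _ ((Finset.sdiff_subset) h)
        · exact Finset.mem_union_right _ (Finset.image_subset_image (Finset.sdiff_subset) h)
      have hval : (insert s (insert (e + 1) (I' ∪ I'.image (· + 1)))).val
          = s ::ₘ (e + 1) ::ₘ (I' ∪ I'.image (· + 1)).val := by
        rw [Finset.insert_val_of_notMem hsne, Finset.insert_val_of_notMem heA']
      have hvle : (s ::ₘ (e + 1) ::ₘ (I' ∪ I'.image (· + 1)).val)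
          ≤ (I ∪ I.image (· + 1)).val := by
        rw [← hval]
        exact Finset.val_le_iff.mpr hsubB
      calc ((L' ++ [g s, g (e + 1)] : List G') : Multiset G')
          = (L' : Multiset G') + (g s ::ₘ g (e + 1) ::ₘ 0) := by
            rw [← Multiset.coe_add]
            rfl
        _ ≤ (I' ∪ I'.image (· + 1)).val.map g + (g s ::ₘ g (e + 1) ::ₘ 0) :=
            add_le_add_left hL'le _
        _ = Multiset.map g (s ::ₘ (e + 1) ::ₘ (I' ∪ I'.image (· + 1)).val) := by
            rw [Multiset.map_cons, Multiset.map_cons]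
            rw [Multiset.add_cons, Multiset.add_cons]
            simp
        _ ≤ Multiset.map g (I ∪ I.image (· + 1)).val := Multiset.map_le_map hvle
    · -- product
      rw [List.prod_append, hL'prod]
      have h2 : ([g s, g (e + 1)] : List G').prod = g s * g (e + 1) := by simp
      rw [h2, mul_tau (g s) (g (e + 1)) (hg s) (hg (e + 1)), ← map_mul]
      congr 1
      rw [← telescope (fun i => (g i).left) e s hse]
      rw [← Finset.prod_sdiff hIcc]


lemma right_prod_one (l : List G') (h : ∀ x ∈ l, x.right = 1) :
    (l.prod).right = 1 := by
  rw [list_prod_inl l h]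
  exact SemidirectProduct.right_inl _

lemma tau_ne_one : (τ : Multiplicative (ZMod 2)) ≠ 1 := by decide

lemma part_i [Finite A] :
    ∃ s : Multiset G', Multiset.card s = smallDavenport A + 1 ∧ ProductOneFreeM s := by
  classical
  obtain ⟨s₀, hs₀, hc₀⟩ := exists_pof_card A
  set g₁ : G' := SemidirectProduct.inr τ with hg₁
  refine ⟨s₀.map SemidirectProduct.inl + {g₁}, by simp [hc₀], ?_⟩
  intro t ht htne l hl hprod
  have hlt : ∀ x ∈ l, x ∈ t := by
    intro x hx
    rw [← hl]
    exact Multiset.mem_coe.mpr hx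
  have hlmem : ∀ x ∈ l, x.right = 1 ∨ x = g₁ := by
    intro x hx
    have hxt := Multiset.mem_of_le ht (hlt x hx)
    rcases Multiset.mem_add.mp hxt with h | h
    · obtain ⟨a, _, rfl⟩ := Multiset.mem_map.mp h
      exact Or.inl (SemidirectProduct.right_inl a)
    · exact Or.inr (by simpa using h)
  have hcount : l.count g₁ ≤ 1 := by
    have h1 := Multiset.count_le_of_le g₁ ht
    rw [Multiset.count_add] at h1
    have h2 : Multiset.count g₁ (s₀.map SemidirectProduct.inl) = 0 := by
      rw [Multiset.count_eq_zero]
      intro hmem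
      obtain ⟨a, _, ha⟩ := Multiset.mem_map.mp hmem
      have := congrArg SemidirectProduct.right ha
      rw [SemidirectProduct.right_inl, hg₁, SemidirectProduct.right_inr] at this
      exact tau_ne_one this.symm
    rw [h2, ← hl, Multiset.coe_count] at h1
    simpa using h1
  by_cases hmem : g₁ ∈ l
  · obtain ⟨l₁, l₂, hl12⟩ := List.append_of_mem hmem
    subst hl12
    rw [List.count_append, List.count_cons_self] at hcount
    have hr1 : ∀ x ∈ l₁, x.right = 1 := by
      intro x hx
      refine (hlmem x (by simp [hx])).resolve_right ?_
      intro hxg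
      subst hxg
      have : 0 < l₁.count g₁ := List.count_pos_iff.mpr hx
      omega
    have hr2 : ∀ x ∈ l₂, x.right = 1 := by
      intro x hx
      refine (hlmem x (by simp [hx])).resolve_right ?_
      intro hxg
      subst hxg
      have : 0 < l₂.count g₁ := List.count_pos_iff.mpr hx
      omega
    have := congrArg SemidirectProduct.right hprod
    rw [List.prod_append, List.prod_cons] at this
    have hr : (l₁.prod * (g₁ * l₂.prod)).right = τ := by
      have e1 := right_prod_one l₁ hr1
      have e2 := right_prod_one l₂ hr2
      rw [SemidirectProduct.mul_right, SemidirectProduct.mul_right, e1, e2, hg₁,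
        SemidirectProduct.right_inr]
      simp
    rw [hr] at this
    exact tau_ne_one (by simpa using this)
  · have hr : ∀ x ∈ l, x.right = 1 := by
      intro x hx
      refine (hlmem x hx).resolve_right ?_
      intro hxg
      subst hxg
      exact hmem hx
    have hp2 : (l.map SemidirectProduct.left).prod = 1 := by
      have := hprod
      rw [list_prod_inl l hr] at this
      have h0 : (SemidirectProduct.inl (1 : A) : G') = 1 := map_one _
      exact SemidirectProduct.inl_injective (by rw [this, ← h0])
    have htle : t ≤ s₀.map SemidirectProduct.inl := by
      rw [Multiset.le_iff_count]
      intro y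
      have h1 := Multiset.count_le_of_le y ht
      rw [Multiset.count_add] at h1
      by_cases hy : y = g₁
      · subst hy
        have : Multiset.count g₁ t = 0 := by
          rw [← hl, Multiset.coe_count]
          exact List.count_eq_zero.mpr hmem
        omega
      · rw [Multiset.count_singleton, if_neg hy] at h1
        omega
    obtain ⟨v, hv, hvmap⟩ := exists_of_le_map' htle
    have hvne : v ≠ 0 := by
      intro h0
      rw [h0] at hvmap
      exact htne (by rw [← hvmap]; rfl)
    have hcoe : ((l.map SemidirectProduct.left : List A) : Multiset A) = v := by
      rw [← Multiset.map_coe, hl, ← hvmap, Multiset.map_map]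
      simp [Function.comp_def]
    exact hs₀ v hv hvne (l.map SemidirectProduct.left) hcoe hp2

lemma part_ii [Finite A] (s : Multiset G')
    (hcard : Multiset.card s = smallDavenport A + 2) : ¬ ProductOneFreeM s := by
  classical
  intro hpof
  set t1 := s.filter (fun x => x.right = τ) with ht1
  set t0 := s.filter (fun x => ¬ (x.right = τ)) with ht0
  have hsplit : t1 + t0 = s := Multiset.filter_add_not _ s
  set k := Multiset.card t1 with hk
  have hm : k + Multiset.card t0 = smallDavenport A + 2 := by
    rw [← hcard, ← hsplit, Multiset.card_add]
  obtain ⟨l1, hl1⟩ : ∃ l : List G', (l : Multiset G') = t1 := ⟨t1.toList, t1.coe_toList⟩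
  have hlen1 : l1.length = k := by rw [hk, ← hl1, Multiset.coe_card]
  set g : ℕ → G' := fun i => l1.getD i (SemidirectProduct.inr τ) with hgdef
  have hg : ∀ i, (g i).right = τ := by
    intro i
    by_cases h : i < l1.length
    · have hmem : l1.getD i (SemidirectProduct.inr τ) ∈ t1 := by
        rw [← hl1, List.getD_eq_getElem _ _ h]
        exact Multiset.mem_coe.mpr (List.getElem_mem h)
      have := Multiset.of_mem_filter hmem
      exact this
    · show (l1.getD i (SemidirectProduct.inr τ)).right = τ
      rw [List.getD_eq_default _ _ (by omega)]
      exact SemidirectProduct.right_inr τ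
  set c : ℕ → A := fun i => (g i).left * ((g (i + 1)).left)⁻¹ with hcdef
  set w : Multiset A := (Finset.range (k - 1)).val.map c
      + t0.map SemidirectProduct.left with hw
  have hwcard : smallDavenport A < Multiset.card w := by
    rw [hw, Multiset.card_add, Multiset.card_map, Multiset.card_map]
    have : Multiset.card (Finset.range (k - 1)).val = k - 1 := by
      rw [Finset.range_val, Multiset.card_range]
    omega
  have hnpof := not_pof_of_gt w hwcard
  rw [ProductOneFreeM] at hnpof
  push_neg at hnpof
  obtain ⟨u, hu_le, hu_ne, lu, hlu, hluprod⟩ := hnpof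
  obtain ⟨u₁, u₂, hu₁, hu₂, hu12⟩ := split_le_add hu_le
  obtain ⟨v₁, hv₁, hv₁map⟩ := exists_of_le_map' hu₁
  have hv₁nodup : v₁.Nodup := Multiset.nodup_of_le hv₁
    (by rw [Finset.range_val]; exact Multiset.nodup_range _)
  set J : Finset ℕ := ⟨v₁, hv₁nodup⟩ with hJ
  have hJsub : ∀ i ∈ J, i < k - 1 := by
    intro i hi
    have : i ∈ (Finset.range (k - 1)).val := Multiset.mem_of_le hv₁ hi
    rw [Finset.range_val] at this
    exact Multiset.mem_range.mp this
  obtain ⟨L, hLne, hLle, hLprod⟩ := realize g hg J.card J le_rfl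
  have hLle' : (L : Multiset G') ≤ t1 := by
    refine hLle.trans ?_
    rw [← hl1]
    refine map_getD_le _ (J ∪ J.image (· + 1)).card l1 _ le_rfl ?_
    intro i hi
    rw [hlen1]
    rcases Finset.mem_union.mp hi with h | h
    · have := hJsub i h; omega
    · obtain ⟨j, hj, rfl⟩ := Finset.mem_image.mp h
      have := hJsub j hj; omega
  obtain ⟨v₂, hv₂, hv₂map⟩ := exists_of_le_map' hu₂
  obtain ⟨lv, hlv⟩ : ∃ l : List G', (l : Multiset G') = v₂ := ⟨v₂.toList, v₂.coe_toList⟩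
  have hlvr : ∀ x ∈ lv, x.right = 1 := by
    intro x hx
    have hxt0 : x ∈ t0 := Multiset.mem_of_le hv₂ (by rw [← hlv]; exact Multiset.mem_coe.mpr hx)
    have hne := Multiset.of_mem_filter hxt0
    have hall : ∀ σ : Multiplicative (ZMod 2), σ ≠ τ → σ = 1 := by decide
    exact hall _ hne
  have hlvprod : lv.prod = SemidirectProduct.inl u₂.prod := by
    rw [list_prod_inl lv hlvr]
    congr 1
    have hcoe : ((lv.map SemidirectProduct.left : List A) : Multiset A) = u₂ := by
      rw [← Multiset.map_coe, hlv, hv₂map]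
    rw [← hcoe, Multiset.prod_coe]
  have hLfinle : ((L ++ lv : List G') : Multiset G') ≤ s := by
    have : ((L ++ lv : List G') : Multiset G') = (L : Multiset G') + (lv : Multiset G') := by
      rfl
    rw [this, ← hsplit]
    exact add_le_add hLle' (hlv ▸ hv₂)
  have hLfinne : (L ++ lv) ≠ [] := by
    intro hnil
    rcases List.append_eq_nil_iff.mp hnil with ⟨hL0, hlv0⟩
    have hJ0 : J = ∅ := hLne hL0
    have hv₁0 : v₁ = 0 := by
      have : J.val = ∅ := by rw [hJ0]; rfl
      rw [hJ] at this
      exact this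
    have hu₁0 : u₁ = 0 := by rw [← hv₁map, hv₁0]; rfl
    have hu₂0 : u₂ = 0 := by
      rw [← hv₂map, ← hlv, hlv0]
      rfl
    exact hu_ne (by rw [hu12, hu₁0, hu₂0]; rfl)
  have hprodfin : (L ++ lv).prod = 1 := by
    rw [List.prod_append, hLprod, hlvprod, ← map_mul]
    have h1 : (∏ i ∈ J, ((g i).left * ((g (i + 1)).left)⁻¹)) = u₁.prod := by
      rw [Finset.prod_eq_multiset_prod, ← hv₁map]
    have h2 : u₁.prod * u₂.prod = (1 : A) := by
      rw [← Multiset.prod_add, ← hu12, ← hlu, Multiset.prod_coe, hluprod]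
    rw [h1, h2]
    try rw [map_one]
  exact hpof ((L ++ lv : List G') : Multiset G') hLfinle
    (by simpa using hLfinne) (L ++ lv) rfl hprodfin

end GSpecific

/-- For a finite abelian group `A` and `G = A ⋊₋₁ C₂`, the small Davenport
constant of `G` equals `d(A) + 1`: (i) there is a product-one free multiset over `G` of
cardinality `d(A) + 1`, and (ii) no multiset over `G` of cardinality `d(A) + 2` is
product-one free. -/
theorem smallDavenport_generalizedDihedral (A : Type*) [CommGroup A] [Finite A] :
    (∃ s : Multiset (A ⋊[invActionHom A] Multiplicative (ZMod 2)),
        Multiset.card s = smallDavenport A + 1 ∧ ProductOneFreeM s) ∧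
    (∀ s : Multiset (A ⋊[invActionHom A] Multiplicative (ZMod 2)),
        Multiset.card s = smallDavenport A + 2 → ¬ ProductOneFreeM s) := by
  exact ⟨part_i, fun s hs => part_ii s hs⟩
end

section
/- Let α ≥ β ≥ γ ≥ 1 be integers and let G be a finite group of order 2^(α+β+γ) together with elements a, b, c such that G is generated by {a, b, c}, the commutator [a,b] = a⁻¹b⁻¹ab equals c, c commutes with both a and b, orderOf a = 2^α, orderOf b = 2^β, orderOf c = 2^γ, the cyclic subgroups ⟨a⟩ and ⟨c⟩ intersect trivially, and the subgroups ⟨a, c⟩ and ⟨b⟩ intersect trivially (this is the group G₁ = (⟨c⟩ × ⟨a⟩) ⋊ ⟨b⟩). Then the Loewy length of G satisfies L(G) = 2^α + 2^β + 2^(γ+1) − 3. -/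
/-- The Loewy length of a finite `p`-group `G`: the least positive integer `n` such that
the `n`-th power of the Jacobson radical of the group algebra `𝔽_p[G]` vanishes. -/
noncomputable def loewyLength (p : ℕ) (G : Type*) [Group G] : ℕ :=
  sInf {n : ℕ | 0 < n ∧ (Ideal.jacobson (⊥ : Ideal (MonoidAlgebra (ZMod p) G))) ^ n = ⊥}


open Finset

section Filtration
variable {R : Type*} [Ring R] [Algebra (ZMod 2) R]

def Wf (x y z : R) (n : ℕ) : Submodule (ZMod 2) R :=
  Submodule.span (ZMod 2) {v | ∃ k i j : ℕ, n ≤ 2*k+i+j ∧ v = z^k * x^i * y^j}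

variable {x y z : R}

lemma mem_Wf {n k i j : ℕ} (h : n ≤ 2*k+i+j) : z^k * x^i * y^j ∈ Wf x y z n :=
  Submodule.subset_span ⟨k, i, j, h, rfl⟩

lemma Wf_mono {m n : ℕ} (h : m ≤ n) : Wf x y z n ≤ Wf x y z m :=
  Submodule.span_mono (fun v ⟨k,i,j,hk,hv⟩ => ⟨k,i,j, le_trans h hk, hv⟩)

omit [Algebra (ZMod 2) R] in
lemma mono_mul_z (hzx : Commute z x) (hzy : Commute z y) (k i j : ℕ) :
    (z^k * x^i * y^j) * z = z^(k+1) * x^i * y^j := by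
  rw [mul_assoc (z^k * x^i), ← (hzy.pow_right j).eq, ← mul_assoc,
    mul_assoc (z^k), ← (hzx.pow_right i).eq, ← mul_assoc, ← pow_succ]

omit [Algebra (ZMod 2) R] in
lemma mono_mul_x (k i : ℕ) : (z^k * x^i * y^0) * x = z^k * x^(i+1) * y^0 := by
  simp only [pow_zero, mul_one, pow_succ, mul_assoc]

lemma Wf_mul_y {n : ℕ} {w : R} (hw : w ∈ Wf x y z n) : w * y ∈ Wf x y z (n+1) := by
  induction hw using Submodule.span_induction with
  | mem v hv =>
    obtain ⟨k,i,j,hk,rfl⟩ := hv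
    rw [mul_assoc, ← pow_succ]
    exact mem_Wf (by omega)
  | zero => rw [zero_mul]; exact zero_mem _
  | add _ _ _ _ h1 h2 => rw [add_mul]; exact add_mem h1 h2
  | smul r _ _ h => rw [smul_mul_assoc]; exact Submodule.smul_mem _ r h

lemma Wf_mul_z (hzx : Commute z x) (hzy : Commute z y) {n : ℕ} {w : R}
    (hw : w ∈ Wf x y z n) : w * z ∈ Wf x y z (n+2) := by
  induction hw using Submodule.span_induction with
  | mem v hv =>
    obtain ⟨k,i,j,hk,rfl⟩ := hv
    rw [mono_mul_z hzx hzy]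
    exact mem_Wf (by omega)
  | zero => rw [zero_mul]; exact zero_mem _
  | add _ _ _ _ h1 h2 => rw [add_mul]; exact add_mem h1 h2
  | smul r _ _ h => rw [smul_mul_assoc]; exact Submodule.smul_mem _ r h

lemma Wf_aux (hzx : Commute z x) (hzy : Commute z y)
    (hswap : y*x = x*y - (y*x*z + y*z + x*z + z))
    {Q : ℕ} (hz0 : z^Q = 0) :
    ∀ t k i j : ℕ, (Q - k) + j ≤ t → (z^k * x^i * y^j) * x ∈ Wf x y z (2*k+i+j+1) := by
  intro t
  induction t with
  | zero =>
    intro k i j h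
    have hj : j = 0 := by omega
    subst hj
    rw [mono_mul_x]
    exact mem_Wf (by omega)
  | succ t ih =>
    intro k i j h
    rcases Nat.eq_zero_or_pos j with hj | hj
    · subst hj
      rw [mono_mul_x]
      exact mem_Wf (by omega)
    rcases Nat.lt_or_ge k Q with hk | hk
    swap
    · have : z ^ k = 0 := pow_eq_zero_of_le hk hz0
      rw [this, zero_mul, zero_mul, zero_mul]; exact zero_mem _
    obtain ⟨j', rfl⟩ : ∃ j', j = j' + 1 := ⟨j - 1, by omega⟩
    have hP1 : ∀ k' : ℕ, z^k' * x^i * y^(j'+1) = (z^k' * x^i * y^j') * y := by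
      intro k'; rw [pow_succ, ← mul_assoc]
    have key : (z^k * x^i * y^(j'+1)) * x
        = ((z^k * x^i * y^j') * x) * y
          - ( (z^(k+1) * x^i * y^(j'+1)) * x + (z^(k+1) * x^i * y^(j'+1))
            + ((z^k * x^i * y^j') * x) * z + z^(k+1) * x^i * y^j' ) := by
      have e2 : (z^k * x^i * y^j') * (y*x*z) = (z^(k+1) * x^i * y^(j'+1)) * x := by
        rw [((hzy.mul_right hzx).eq).symm, ← mul_assoc (z^k * x^i * y^j') z (y*x),
          mono_mul_z hzx hzy, ← mul_assoc, ← hP1 (k+1)]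
      have e3 : (z^k * x^i * y^j') * (y*z) = z^(k+1) * x^i * y^(j'+1) := by
        rw [← mul_assoc, ← hP1 k, mono_mul_z hzx hzy]
      have e4 : (z^k * x^i * y^j') * (x*z) = ((z^k * x^i * y^j') * x) * z :=
        (mul_assoc _ x z).symm
      have e5 : (z^k * x^i * y^j') * z = z^(k+1) * x^i * y^j' :=
        mono_mul_z hzx hzy k i j'
      rw [hP1 k, mul_assoc _ y x, hswap, mul_sub, mul_add, mul_add, mul_add,
        e2, e3, e4, e5, ← mul_assoc _ x y]
    rw [key]
    refine sub_mem ?_ (add_mem (add_mem (add_mem ?_ ?_) ?_) ?_)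
    · have h1 : (z^k * x^i * y^j') * x ∈ Wf x y z (2*k+i+j'+1) :=
        ih k i j' (by omega)
      have := Wf_mul_y h1
      exact Wf_mono (by omega) this
    · have h2 : (z^(k+1) * x^i * y^(j'+1)) * x ∈ Wf x y z (2*(k+1)+i+(j'+1)+1) :=
        ih (k+1) i (j'+1) (by omega)
      exact Wf_mono (by omega) h2
    · exact Wf_mono (by omega) (mem_Wf (le_refl _))
    · have h1 : (z^k * x^i * y^j') * x ∈ Wf x y z (2*k+i+j'+1) :=
        ih k i j' (by omega)
      exact Wf_mono (by omega) (Wf_mul_z hzx hzy h1)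
    · exact Wf_mono (by omega) (mem_Wf (le_refl _))

lemma Wf_mul_x (hzx : Commute z x) (hzy : Commute z y)
    (hswap : y*x = x*y - (y*x*z + y*z + x*z + z))
    {Q : ℕ} (hz0 : z^Q = 0) {n : ℕ} {w : R}
    (hw : w ∈ Wf x y z n) : w * x ∈ Wf x y z (n+1) := by
  induction hw using Submodule.span_induction with
  | mem v hv =>
    obtain ⟨k,i,j,hk,rfl⟩ := hv
    exact Wf_mono (by omega) (Wf_aux hzx hzy hswap hz0 ((Q-k)+j) k i j le_rfl)
  | zero => rw [zero_mul]; exact zero_mem _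
  | add _ _ _ _ h1 h2 => rw [add_mul]; exact add_mem h1 h2
  | smul r _ _ h => rw [smul_mul_assoc]; exact Submodule.smul_mem _ r h

end Filtration

section Rel
variable {R : Type*} [Ring R]

lemma swap_of_rel (A B C : R) (h : A*B = B*A*C) :
    (B-1)*(A-1) = (A-1)*(B-1)
      - ((B-1)*(A-1)*(C-1) + (B-1)*(C-1) + (A-1)*(C-1) + (C-1)) := by
  have e : (B-1)*(A-1) - ((A-1)*(B-1)
      - ((B-1)*(A-1)*(C-1) + (B-1)*(C-1) + (A-1)*(C-1) + (C-1))) = B*A*C - A*B := by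
    noncomm_ring
  have h0 : B*A*C - A*B = 0 := by rw [← h, sub_self]
  exact sub_eq_zero.mp (e.trans h0)

lemma commute_sub_one (A C : R) (h : A*C = C*A) : Commute (C-1) (A-1) := by
  have e : (C-1)*(A-1) - (A-1)*(C-1) = C*A - A*C := by noncomm_ring
  have h0 : C*A - A*C = 0 := by rw [h, sub_self]
  have h1 : (C-1)*(A-1) = (A-1)*(C-1) := sub_eq_zero.mp (e.trans h0)
  exact h1

lemma ideal_pow_add (I : Ideal R) (m n : ℕ) : I^(m+(n+1)) = I^m * I^(n+1) := by
  induction n with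
  | zero => rw [Submodule.pow_succ, Submodule.pow_one]
  | succ n ih =>
    rw [show m+(n+1+1) = (m+(n+1))+1 by ring, Submodule.pow_succ, ih,
      Submodule.pow_succ (M := I) (n := n+1), mul_assoc]

lemma ideal_mem_pow_two_mul (I : Ideal R) {u : R} (hu : u ∈ I * I) (m : ℕ) :
    u^m ∈ I^(2*m) := by
  induction m with
  | zero =>
    rw [pow_zero, Nat.mul_zero, Submodule.pow_zero, Ideal.one_eq_top]
    trivial
  | succ m ih =>
    rw [pow_succ, show 2*(m+1) = 2*m+(1+1) by ring, ideal_pow_add]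
    have h2 : I^(1+1) = I * I := by
      rw [Submodule.pow_succ, Submodule.pow_one]
    rw [h2]
    exact Ideal.mul_mem_mul ih hu
end Rel

open Finset

section Aug
variable (G : Type*) [Group G]

/-- The augmentation map. -/
noncomputable def augM : MonoidAlgebra (ZMod 2) G →ₐ[ZMod 2] ZMod 2 :=
  MonoidAlgebra.lift (ZMod 2) (ZMod 2) G 1

/-- The augmentation ideal. -/
noncomputable def Iaug : Ideal (MonoidAlgebra (ZMod 2) G) :=
  RingHom.ker (augM G).toRingHom

variable {G}

lemma augM_single (g : G) (r : ZMod 2) : augM G (MonoidAlgebra.single g r) = r := by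
  rw [augM, MonoidAlgebra.lift_single]; simp

lemma mem_Iaug_iff {v : MonoidAlgebra (ZMod 2) G} : v ∈ Iaug G ↔ augM G v = 0 :=
  RingHom.mem_ker

lemma of_sub_one_mem (g : G) : MonoidAlgebra.of (ZMod 2) G g - 1 ∈ Iaug G := by
  rw [mem_Iaug_iff, map_sub, map_one, MonoidAlgebra.of_apply, augM_single, sub_self]

lemma charP2 : CharP (MonoidAlgebra (ZMod 2) G) 2 := by
  refine charP_of_injective_algebraMap (R := ZMod 2) ?_ 2
  intro r s h
  have : MonoidAlgebra.single (1:G) r = MonoidAlgebra.single 1 s := by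
    simpa [Algebra.algebraMap_eq_smul_one, MonoidAlgebra.smul_single',
      MonoidAlgebra.one_def] using h
  exact MonoidAlgebra.single_right_injective this

lemma Iaug_le_span (v : MonoidAlgebra (ZMod 2) G) (hv : v ∈ Iaug G) :
    v ∈ Submodule.span (ZMod 2) {w | ∃ g : G, w = MonoidAlgebra.of (ZMod 2) G g - 1} := by
  have key : ∀ v : MonoidAlgebra (ZMod 2) G,
      v - (augM G v) • 1 ∈ Submodule.span (ZMod 2)
        {w | ∃ g : G, w = MonoidAlgebra.of (ZMod 2) G g - 1} := by
    intro v
    induction v using MonoidAlgebra.induction_linear with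
    | zero => simp
    | add f g hf hg =>
      have := add_mem hf hg
      rw [map_add] at *
      convert this using 1
      module
    | single g r =>
      rw [augM_single]
      have : MonoidAlgebra.single g r - r • 1
          = r • (MonoidAlgebra.of (ZMod 2) G g - 1) := by
        rw [smul_sub, MonoidAlgebra.of_apply, MonoidAlgebra.smul_single']; simp
      rw [this]
      exact Submodule.smul_mem _ _ (Submodule.subset_span ⟨g, rfl⟩)
  have := key v
  rw [mem_Iaug_iff.mp hv, zero_smul, sub_zero] at this
  exact this

lemma Iaug_isMaximal : (Iaug G).IsMaximal := by
  rw [Ideal.isMaximal_iff]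
  constructor
  · rw [mem_Iaug_iff, map_one]; exact one_ne_zero
  · intro J v hIJ hvI hvJ
    have hne : augM G v ≠ 0 := fun h => hvI (mem_Iaug_iff.mpr h)
    have hone : augM G v = 1 := by
      have : ∀ t : ZMod 2, t ≠ 0 → t = 1 := by decide
      exact this _ hne
    have hv1 : v - 1 ∈ Iaug G := by
      rw [mem_Iaug_iff, map_sub, map_one, hone, sub_self]
    have := J.sub_mem hvJ (hIJ hv1)
    simpa using this

lemma geom_char2 {R : Type*} [Ring R] [CharP R 2] (u : R) (m : ℕ) :
    (u - 1)^(2^m - 1) = ∑ k ∈ Finset.range (2^m), u^k := by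
  induction m with
  | zero => simp
  | succ m ih =>
    have h2 : (0:ℕ) < 2^m := Nat.two_pow_pos m
    rw [show (2:ℕ)^(m+1) - 1 = 2^m + (2^m - 1) by omega, pow_add,
      sub_pow_char_pow_of_commute 2 m (Commute.one_right u), one_pow, ih,
      show (2:ℕ)^(m+1) = 2^m + 2^m by ring, Finset.sum_range_add,
      sub_mul, one_mul, CharTwo.sub_eq_add, Finset.mul_sum]
    simp_rw [← pow_add]
    rw [add_comm]

end Aug

section Bot
variable {R : Type*} [Ring R] [Algebra (ZMod 2) R] {x y z : R}

lemma Wf_eq_bot {p q Q N : ℕ} (hx0 : x^p = 0) (hy0 : y^q = 0) (hz0 : z^Q = 0)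
    (hN : p + q + 2*Q ≤ N + 3) :
    Wf x y z N = ⊥ := by
  rw [eq_bot_iff, Wf, Submodule.span_le]
  rintro v ⟨k, i, j, hw, rfl⟩
  have hcase : Q ≤ k ∨ p ≤ i ∨ q ≤ j := by omega
  rcases hcase with h | h | h
  · rw [pow_eq_zero_of_le h hz0, zero_mul, zero_mul]; exact Submodule.zero_mem _
  · rw [pow_eq_zero_of_le h hx0, mul_zero, zero_mul]; exact Submodule.zero_mem _
  · rw [pow_eq_zero_of_le h hy0, mul_zero]; exact Submodule.zero_mem _
end Bot

/-- For the group `G₁ = (⟨c⟩ × ⟨a⟩) ⋊ ⟨b⟩` with `[a,b] = c`,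
`[a,c] = [b,c] = 1`, `o(a) = 2^α`, `o(b) = 2^β`, `o(c) = 2^γ` and `α ≥ β ≥ γ ≥ 1`,
the Loewy length satisfies `L(G) = 2^α + 2^β + 2^(γ+1) - 3`. -/
theorem loewyLength_G1 (α β γ : ℕ) (hβα : β ≤ α) (hγβ : γ ≤ β) (hγ : 1 ≤ γ)
    (G : Type*) [Group G] [Fintype G] (a b c : G)
    (hcard : Fintype.card G = 2 ^ (α + β + γ))
    (hgen : Subgroup.closure {a, b, c} = ⊤)
    (hab : a⁻¹ * b⁻¹ * a * b = c)
    (hac : a * c = c * a) (hbc : b * c = c * b)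
    (hoa : orderOf a = 2 ^ α) (hob : orderOf b = 2 ^ β) (hoc : orderOf c = 2 ^ γ)
    (hint1 : Subgroup.zpowers a ⊓ Subgroup.zpowers c = ⊥)
    (hint2 : Subgroup.closure {a, c} ⊓ Subgroup.zpowers b = ⊥) :
    loewyLength 2 G = 2 ^ α + 2 ^ β + 2 ^ (γ + 1) - 3 := by
  classical
  haveI : CharP (MonoidAlgebra (ZMod 2) G) 2 := charP2
  unfold loewyLength
  -- arithmetic facts
  have pγ : 2 ≤ 2^γ := by
    calc 2 = 2^1 := (pow_one 2).symm
    _ ≤ 2^γ := Nat.pow_le_pow_right (by norm_num) hγ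
  have pβ : 2^γ ≤ 2^β := Nat.pow_le_pow_right (by norm_num) hγβ
  have pα : 2^β ≤ 2^α := Nat.pow_le_pow_right (by norm_num) hβα
  have pγ1 : 2^(γ+1) = 2*2^γ := by ring
  set N := 2^α + 2^β + 2^(γ+1) - 3 with hNdef
  -- algebra elements
  set x := MonoidAlgebra.of (ZMod 2) G a - 1 with hxd
  set y := MonoidAlgebra.of (ZMod 2) G b - 1 with hyd
  set z := MonoidAlgebra.of (ZMod 2) G c - 1 with hzd
  have hAC : MonoidAlgebra.of (ZMod 2) G a * MonoidAlgebra.of (ZMod 2) G c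
      = MonoidAlgebra.of (ZMod 2) G c * MonoidAlgebra.of (ZMod 2) G a := by
    rw [← map_mul, ← map_mul, hac]
  have hBC : MonoidAlgebra.of (ZMod 2) G b * MonoidAlgebra.of (ZMod 2) G c
      = MonoidAlgebra.of (ZMod 2) G c * MonoidAlgebra.of (ZMod 2) G b := by
    rw [← map_mul, ← map_mul, hbc]
  have hzx : Commute z x := commute_sub_one _ _ hAC
  have hzy : Commute z y := commute_sub_one _ _ hBC
  have habc : a * b = b * a * c := by rw [← hab]; group
  have hAB : MonoidAlgebra.of (ZMod 2) G a * MonoidAlgebra.of (ZMod 2) G b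
      = MonoidAlgebra.of (ZMod 2) G b * MonoidAlgebra.of (ZMod 2) G a
        * MonoidAlgebra.of (ZMod 2) G c := by
    rw [← map_mul, ← map_mul, ← map_mul, habc]
  have hswap : y*x = x*y - (y*x*z + y*z + x*z + z) := swap_of_rel _ _ _ hAB
  have hx0 : x^(2^α) = 0 := by
    rw [hxd, sub_pow_char_pow_of_commute 2 α (Commute.one_right _), one_pow,
      ← map_pow, ← hoa, pow_orderOf_eq_one, map_one, sub_self]
  have hy0 : y^(2^β) = 0 := by
    rw [hyd, sub_pow_char_pow_of_commute 2 β (Commute.one_right _), one_pow,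
      ← map_pow, ← hob, pow_orderOf_eq_one, map_one, sub_self]
  have hz0 : z^(2^γ) = 0 := by
    rw [hzd, sub_pow_char_pow_of_commute 2 γ (Commute.one_right _), one_pow,
      ← map_pow, ← hoc, pow_orderOf_eq_one, map_one, sub_self]
  -- every g - 1 multiplies Wf n into Wf (n+1)
  have Hg : ∀ g : G, ∀ n : ℕ, ∀ w ∈ Wf x y z n,
      w * (MonoidAlgebra.of (ZMod 2) G g - 1) ∈ Wf x y z (n+1) := by
    set P : G → Prop := fun g => ∀ n : ℕ, ∀ w ∈ Wf x y z n,
      w * (MonoidAlgebra.of (ZMod 2) G g - 1) ∈ Wf x y z (n+1) with hPdef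
    have hone : P 1 := by
      intro n w hw
      simp only [map_one, sub_self, mul_zero]
      exact zero_mem _
    have hmul : ∀ g h, P g → P h → P (g*h) := by
      intro g h hg hh n w hw
      have e : w * (MonoidAlgebra.of (ZMod 2) G (g*h) - 1)
          = (w * MonoidAlgebra.of (ZMod 2) G g) * (MonoidAlgebra.of (ZMod 2) G h - 1)
            + w * (MonoidAlgebra.of (ZMod 2) G g - 1) := by
        rw [map_mul]; noncomm_ring
      rw [e]
      have h1 : w * MonoidAlgebra.of (ZMod 2) G g ∈ Wf x y z n := by
        have e2 : w * MonoidAlgebra.of (ZMod 2) G g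
            = w * (MonoidAlgebra.of (ZMod 2) G g - 1) + w := by noncomm_ring
        rw [e2]
        exact add_mem (Wf_mono (Nat.le_succ n) (hg n w hw)) hw
      exact add_mem (hh n _ h1) (hg n w hw)
    have hpow : ∀ g, P g → ∀ m : ℕ, P (g^m) := by
      intro g hg m
      induction m with
      | zero => rw [pow_zero]; exact hone
      | succ m ih => rw [pow_succ]; exact hmul _ _ ih hg
    have hinv : ∀ g, P g → P g⁻¹ := by
      intro g hg
      have hgo : g⁻¹ = g^(orderOf g - 1) := by
        apply inv_eq_of_mul_eq_one_right
        have h1 : g * g^(orderOf g - 1) = g^(orderOf g) := by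
          rw [← pow_succ']
          congr 1
          have := orderOf_pos g
          omega
        rw [h1, pow_orderOf_eq_one]
      rw [hgo]
      exact hpow g hg _
    intro g
    have hmemT : ∀ g ∈ Subgroup.closure ({a,b,c} : Set G), P g := by
      intro g hgc
      induction hgc using Subgroup.closure_induction with
      | mem w hw =>
        rcases hw with rfl | rfl | rfl
        · intro n u hu; exact Wf_mul_x hzx hzy hswap hz0 hu
        · intro n u hu; exact Wf_mul_y hu
        · intro n u hu
          exact Wf_mono (Nat.le_succ _) (Wf_mul_z hzx hzy hu)
      | one => exact hone
      | mul u v _ _ hu hv => exact hmul u v hu hv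
      | inv u _ hu => exact hinv u hu
    exact hmemT g (by rw [hgen]; trivial)
  -- powers of the augmentation ideal
  have hmulW : ∀ n : ℕ, ∀ p ∈ Wf x y z (n+1), ∀ q ∈ Iaug G,
      p * q ∈ Wf x y z (n+2) := by
    intro n p hp q hq
    have hq' := Iaug_le_span q hq
    clear hq
    induction hq' using Submodule.span_induction with
    | mem w hw => obtain ⟨g, rfl⟩ := hw; exact Hg g _ p hp
    | zero => rw [mul_zero]; exact zero_mem _
    | add u v _ _ hu hv => rw [mul_add]; exact add_mem hu hv
    | smul r u _ hu => rw [mul_smul_comm]; exact Submodule.smul_mem _ r hu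
  have hIW : ∀ n : ℕ, ∀ v ∈ (Iaug G)^(n+1), v ∈ Wf x y z (n+1) := by
    intro n
    induction n with
    | zero =>
      intro v hv
      rw [zero_add, Submodule.pow_one] at hv
      refine Submodule.span_le.mpr ?_ (Iaug_le_span v hv)
      rintro w ⟨g, rfl⟩
      have h1 : (1 : MonoidAlgebra (ZMod 2) G) ∈ Wf x y z 0 := by
        have := mem_Wf (x := x) (y := y) (z := z) (k := 0) (i := 0) (j := 0)
          (n := 0) (by omega)
        simpa using this
      simpa using Hg g 0 1 h1
    | succ n ih =>
      intro v hv
      rw [Submodule.pow_succ] at hv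
      exact Submodule.mul_induction_on hv
        (fun p hp q hq => hmulW n p (ih p hp) q hq)
        (fun _ _ h1 h2 => add_mem h1 h2)
  have hWbot : Wf x y z N = ⊥ :=
    Wf_eq_bot hx0 hy0 hz0 (by omega)
  have hupper : (Iaug G)^N = ⊥ := by
    rw [eq_bot_iff]
    intro v hv
    rw [show N = (N-1)+1 by omega] at hv
    have hvW := hIW (N-1) v hv
    rw [show (N-1)+1 = N by omega, hWbot] at hvW
    exact hvW
  -- Jacobson radical equals the augmentation ideal
  have hjac : Ideal.jacobson (⊥ : Ideal (MonoidAlgebra (ZMod 2) G)) = Iaug G := by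
    apply le_antisymm
    · rw [Ideal.jacobson]
      exact sInf_le ⟨bot_le, Iaug_isMaximal⟩
    · rw [Ideal.jacobson]
      refine le_sInf ?_
      rintro M ⟨-, hM⟩
      by_contra hnle
      have hlt : M < M ⊔ Iaug G := left_lt_sup.mpr hnle
      have htop : M ⊔ Iaug G = ⊤ := hM.out.2 _ hlt
      have h1 : (1 : MonoidAlgebra (ZMod 2) G) ∈ M ⊔ Iaug G := by
        rw [htop]; trivial
      obtain ⟨m, hm, s, hs, hms⟩ := Submodule.mem_sup.mp h1
      have hsN : s^N = 0 := by
        have hp := Ideal.pow_mem_pow hs N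
        rw [hupper] at hp
        exact (Submodule.mem_bot _).mp hp
      have hgeom : (∑ i ∈ Finset.range N, s^i) * m = 1 := by
        have hm1 : m = 1 - s := eq_sub_of_add_eq hms
        rw [hm1, show (1 : MonoidAlgebra (ZMod 2) G) - s = -(s-1) from (neg_sub s 1).symm,
          mul_neg, geom_sum_mul, hsN]
        simp
      have hone : (1 : MonoidAlgebra (ZMod 2) G) ∈ M := hgeom ▸ Ideal.mul_mem_left M _ hm
      exact hM.ne_top ((Ideal.eq_top_iff_one M).mpr hone)
  -- lower bound
  have hxI : x ∈ Iaug G := of_sub_one_mem a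
  have hyI : y ∈ Iaug G := of_sub_one_mem b
  have hzI : z ∈ Iaug G := of_sub_one_mem c
  have hz2 : z ∈ Iaug G * Iaug G := by
    have e2 : x*y - y*x = MonoidAlgebra.of (ZMod 2) G a * MonoidAlgebra.of (ZMod 2) G b
        - MonoidAlgebra.of (ZMod 2) G b * MonoidAlgebra.of (ZMod 2) G a := by
      rw [hxd, hyd]; noncomm_ring
    have e : z = MonoidAlgebra.of (ZMod 2) G (a⁻¹*b⁻¹) * (x*y - y*x) := by
      rw [e2, mul_sub, ← map_mul, ← map_mul, ← map_mul, ← map_mul,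
        show a⁻¹*b⁻¹*(a*b) = c by rw [← hab]; group,
        show a⁻¹*b⁻¹*(b*a) = 1 by group, map_one, hzd]
    rw [e]
    exact Ideal.mul_mem_left _ _
      (sub_mem (Ideal.mul_mem_mul hxI hyI) (Ideal.mul_mem_mul hyI hxI))
  have heI : z^(2^γ-1) * x^(2^α-1) * y^(2^β-1) ∈ (Iaug G)^(N-1) := by
    obtain ⟨A', hA'⟩ : ∃ t, 2^α-1 = t+1 := ⟨2^α-1-1, by omega⟩
    obtain ⟨B', hB'⟩ : ∃ t, 2^β-1 = t+1 := ⟨2^β-1-1, by omega⟩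
    have hzp : z^(2^γ-1) ∈ (Iaug G)^(2*(2^γ-1)) := ideal_mem_pow_two_mul _ hz2 _
    have hxp : x^(2^α-1) ∈ (Iaug G)^(A'+1) := by rw [← hA']; exact Ideal.pow_mem_pow hxI _
    have hyp : y^(2^β-1) ∈ (Iaug G)^(B'+1) := by rw [← hB']; exact Ideal.pow_mem_pow hyI _
    have h2 := Ideal.mul_mem_mul (Ideal.mul_mem_mul hzp hxp) hyp
    rw [← ideal_pow_add, ← ideal_pow_add] at h2
    rwa [show 2*(2^γ-1)+(A'+1)+(B'+1) = N-1 by omega] at h2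
  have hcond : ∀ k, k < 2^γ → ∀ i, i < 2^α → ∀ j, j < 2^β →
      c^k*a^i*b^j = 1 → k = 0 ∧ i = 0 ∧ j = 0 := by
    intro k hk i hi j hj h
    have hbj : b^j = 1 := by
      have h1 : b^j ∈ Subgroup.closure ({a,c} : Set G) := by
        have hb : b^j = (c^k*a^i)⁻¹ := eq_inv_of_mul_eq_one_right h
        rw [hb]
        exact Subgroup.inv_mem _ (Subgroup.mul_mem _
          (Subgroup.pow_mem _ (Subgroup.subset_closure (by simp)) k)
          (Subgroup.pow_mem _ (Subgroup.subset_closure (by simp)) i))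
      have h2 : b^j ∈ Subgroup.zpowers b := Subgroup.npow_mem_zpowers b j
      have h3 := Subgroup.mem_inf.mpr ⟨h1, h2⟩
      rw [hint2] at h3
      exact Subgroup.mem_bot.mp h3
    have hj0 : j = 0 := by
      have hd : (2:ℕ)^β ∣ j := hob ▸ orderOf_dvd_of_pow_eq_one hbj
      rcases Nat.eq_zero_or_pos j with h0 | hpos
      · exact h0
      · exact absurd (Nat.le_of_dvd hpos hd) (by omega)
    subst hj0
    rw [pow_zero, mul_one] at h
    have hai : a^i = 1 := by
      have h1 : a^i ∈ Subgroup.zpowers a := Subgroup.npow_mem_zpowers a i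
      have h2 : a^i ∈ Subgroup.zpowers c := by
        have ha : a^i = (c^k)⁻¹ := eq_inv_of_mul_eq_one_right h
        rw [ha]
        exact Subgroup.inv_mem _ (Subgroup.npow_mem_zpowers c k)
      have h3 := Subgroup.mem_inf.mpr ⟨h1, h2⟩
      rw [hint1] at h3
      exact Subgroup.mem_bot.mp h3
    have hck : c^k = 1 := by rwa [hai, mul_one] at h
    have hi0 : i = 0 := by
      have hd : (2:ℕ)^α ∣ i := hoa ▸ orderOf_dvd_of_pow_eq_one hai
      rcases Nat.eq_zero_or_pos i with h0 | hpos
      · exact h0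
      · exact absurd (Nat.le_of_dvd hpos hd) (by omega)
    have hk0 : k = 0 := by
      have hd : (2:ℕ)^γ ∣ k := hoc ▸ orderOf_dvd_of_pow_eq_one hck
      rcases Nat.eq_zero_or_pos k with h0 | hpos
      · exact h0
      · exact absurd (Nat.le_of_dvd hpos hd) (by omega)
    exact ⟨hk0, hi0, rfl⟩
  have hesum : z^(2^γ-1) * x^(2^α-1) * y^(2^β-1)
      = ∑ k ∈ Finset.range (2^γ), ∑ i ∈ Finset.range (2^α), ∑ j ∈ Finset.range (2^β),
          MonoidAlgebra.single (c^k*a^i*b^j) (1 : ZMod 2) := by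
    rw [hxd, hyd, hzd, geom_char2, geom_char2, geom_char2, Finset.sum_mul_sum,
      Finset.sum_mul]
    refine Finset.sum_congr rfl fun k _ => ?_
    rw [Finset.sum_mul]
    refine Finset.sum_congr rfl fun i _ => ?_
    rw [Finset.mul_sum]
    refine Finset.sum_congr rfl fun j _ => ?_
    rw [← map_pow, ← map_pow, ← map_pow, ← map_mul, ← map_mul,
      MonoidAlgebra.of_apply]
  have happ : (z^(2^γ-1) * x^(2^α-1) * y^(2^β-1)).coeff (1 : G) = 1 := by
    simp only [hesum, MonoidAlgebra.coeff_sum, Finset.sum_apply', MonoidAlgebra.coeff_single]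
    simp only [Finsupp.single_apply]
    have hstep : ∀ k ∈ Finset.range (2^γ), ∀ i ∈ Finset.range (2^α),
        ∀ j ∈ Finset.range (2^β),
        (if c^k*a^i*b^j = 1 then (1 : ZMod 2) else 0)
          = if j = 0 then (if i = 0 then (if k = 0 then 1 else 0) else 0) else 0 := by
      intro k hk i hi j hj
      rw [Finset.mem_range] at hk hi hj
      by_cases h : c^k*a^i*b^j = 1
      · obtain ⟨hk0, hi0, hj0⟩ := hcond k hk i hi j hj h
        subst hk0; subst hi0; subst hj0
        simp
      · rw [if_neg h]
        have hnot : ¬(k = 0 ∧ i = 0 ∧ j = 0) := by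
          rintro ⟨rfl, rfl, rfl⟩
          apply h; simp
        split_ifs with h1 h2 h3
        · exact absurd ⟨h3, h2, h1⟩ hnot
        · rfl
        · rfl
        · rfl
    rw [Finset.sum_congr rfl fun k hk => Finset.sum_congr rfl fun i hi =>
      Finset.sum_congr rfl fun j hj => hstep k hk i hi j hj]
    simp [Finset.sum_ite_eq', Finset.mem_range, Nat.two_pow_pos]
  have hene : z^(2^γ-1) * x^(2^α-1) * y^(2^β-1) ≠ 0 := by
    intro h0
    rw [h0] at happ
    simp at happ
  have hlower : (Iaug G)^(N-1) ≠ ⊥ := by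
    intro hb
    rw [hb] at heI
    exact hene ((Submodule.mem_bot _).mp heI)
  -- conclusion
  have hNpos : 0 < N := by omega
  simp only [hjac]
  apply le_antisymm
  · exact Nat.sInf_le ⟨hNpos, hupper⟩
  · refine le_csInf ⟨N, hNpos, hupper⟩ ?_
    rintro m ⟨hm0, hmB⟩
    by_contra hlt
    push_neg at hlt
    have hle : (Iaug G)^(N-1) ≤ (Iaug G)^m := Ideal.pow_le_pow_right (by omega)
    rw [hmB] at hle
    exact hlower (le_bot_iff.mp hle)
end

section
/- Let α, β, γ be integers with α ≥ 2γ, β ≥ γ ≥ 1 and α + β > 3, and let G be a finite group of order 2^(α+β) together with elements a, b such that G is generated by {a, b}, orderOf a = 2^α, orderOf b = 2^β, b⁻¹ a b = a^(1 + 2^(α−γ)) (equivalently, the commutator [a,b] equals a^(2^(α−γ)) and has order 2^γ), and the cyclic subgroups ⟨a⟩ and ⟨b⟩ intersect trivially (this is the group G₂ = ⟨a⟩ ⋊ ⟨b⟩). Then the Loewy length of G satisfies L(G) = 2^α + 2^β − 1. -/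
namespace LoewyAux
open Submodule Finset

variable {R : Type*} [Ring R] [Algebra (ZMod 2) R]

/-- Span of monomials `X^p * Y^q` with `p + q ≥ n`. -/
def F (X Y : R) (n : ℕ) : Submodule (ZMod 2) R :=
  Submodule.span (ZMod 2) {r | ∃ p q : ℕ, n ≤ p + q ∧ r = X ^ p * Y ^ q}

/-- Span of powers of `X`. -/
def P (X : R) : Submodule (ZMod 2) R := Submodule.span (ZMod 2) (Set.range (X ^ ·))

variable (X Y : R)

lemma mem_F {p q n : ℕ} (h : n ≤ p + q) : X ^ p * Y ^ q ∈ F X Y n :=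
  subset_span ⟨p, q, h, rfl⟩

lemma F_anti {n n' : ℕ} (h : n ≤ n') : F X Y n' ≤ F X Y n :=
  span_mono fun r ⟨p, q, h', hr⟩ => ⟨p, q, h.trans h', hr⟩

lemma mulx {k n : ℕ} {v : R} (hv : v ∈ F X Y n) : X ^ k * v ∈ F X Y (k + n) := by
  induction hv using span_induction with
  | mem r hr =>
    obtain ⟨p, q, hpq, rfl⟩ := hr
    rw [← mul_assoc, ← pow_add]
    exact mem_F X Y (by omega)
  | zero => rw [mul_zero]; exact zero_mem _
  | add v w _ _ hv hw => rw [mul_add]; exact add_mem hv hw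
  | smul c v _ hv => rw [mul_smul_comm]; exact smul_mem _ _ hv

lemma muly {l n : ℕ} {v : R} (hv : v ∈ F X Y n) : v * Y ^ l ∈ F X Y (n + l) := by
  induction hv using span_induction with
  | mem r hr =>
    obtain ⟨p, q, hpq, rfl⟩ := hr
    rw [mul_assoc, ← pow_add]
    exact mem_F X Y (by omega)
  | zero => rw [zero_mul]; exact zero_mem _
  | add v w _ _ hv hw => rw [add_mul]; exact add_mem hv hw
  | smul c v _ hv => rw [smul_mul_assoc]; exact smul_mem _ _ hv

lemma pow_mem_P (k : ℕ) : X ^ k ∈ P X := subset_span ⟨k, rfl⟩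

lemma P_mul_F {w v : R} {n : ℕ} (hw : w ∈ P X) (hv : v ∈ F X Y n) : w * v ∈ F X Y n := by
  induction hw using span_induction with
  | mem r hr =>
    obtain ⟨k, rfl⟩ := hr
    exact F_anti X Y (Nat.le_add_left n k) (mulx X Y hv)
  | zero => rw [zero_mul]; exact zero_mem _
  | add v w _ _ hv hw => rw [add_mul]; exact add_mem hv hw
  | smul c v _ hv => rw [smul_mul_assoc]; exact smul_mem _ _ hv

lemma P_mul_x {v : R} (hv : v ∈ P X) : v * X ∈ P X := by
  induction hv using span_induction with
  | mem r hr => obtain ⟨k, rfl⟩ := hr; rw [← pow_succ]; exact pow_mem_P X _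
  | zero => rw [zero_mul]; exact zero_mem _
  | add v w _ _ hv hw => rw [add_mul]; exact add_mem hv hw
  | smul c v _ hv => rw [smul_mul_assoc]; exact smul_mem _ _ hv

lemma apow_mem_P (e : ℕ) : (1 + X) ^ e ∈ P X := by
  induction e with
  | zero => simpa using pow_mem_P X 0
  | succ e ih =>
    rw [pow_succ, mul_add, mul_one]
    exact add_mem ih (P_mul_x X ih)

section rel

variable (D : R) (m : ℕ) (hm : 2 ≤ m) (hD : D ∈ P X)
  (hrel : Y * X = X * Y + X ^ m * (D * (1 + Y)))

include hm hD hrel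

lemma yx_pow : ∀ k : ℕ, Y * X ^ k ∈ F X Y (k + 1) := by
  intro k
  induction k with
  | zero =>
    simpa using mem_F X Y (p := 0) (q := 1) (n := 0 + 1) (by omega)
  | succ k ih =>
    have e1 : Y * X ^ (k + 1) = X * (Y * X ^ k) + X ^ m * (D * (X ^ k + Y * X ^ k)) := by
      rw [pow_succ', ← mul_assoc, hrel]
      simp only [add_mul, mul_add, mul_one, one_mul, mul_assoc]
    rw [e1]
    have hxk : (X ^ k : R) ∈ F X Y k := by
      simpa using mem_F X Y (p := k) (q := 0) (n := k) (by omega)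
    have h2 : X ^ k + Y * X ^ k ∈ F X Y k :=
      add_mem hxk (F_anti X Y (Nat.le_succ k) ih)
    have h3 : D * (X ^ k + Y * X ^ k) ∈ F X Y k := P_mul_F X Y hD h2
    have h4 : X ^ m * (D * (X ^ k + Y * X ^ k)) ∈ F X Y (m + k) := mulx X Y h3
    have h5 : X * (Y * X ^ k) ∈ F X Y (1 + (k + 1)) := by
      have := mulx X Y (k := 1) ih
      simpa using this
    exact add_mem (F_anti X Y (by omega) h5) (F_anti X Y (by omega) h4)

lemma y_mul_F {v : R} {n : ℕ} (hv : v ∈ F X Y n) : Y * v ∈ F X Y (n + 1) := by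
  induction hv using span_induction with
  | mem r hr =>
    obtain ⟨p, q, hpq, rfl⟩ := hr
    rw [← mul_assoc]
    have := muly X Y (l := q) (yx_pow X Y D m hm hD hrel p)
    exact F_anti X Y (by omega) this
  | zero => rw [mul_zero]; exact zero_mem _
  | add v w _ _ hv hw => rw [mul_add]; exact add_mem hv hw
  | smul c v _ hv => rw [mul_smul_comm]; exact smul_mem _ _ hv

lemma ypow_xpow (q k : ℕ) : Y ^ q * X ^ k ∈ F X Y (q + k) := by
  induction q with
  | zero =>
    simpa using mem_F X Y (p := k) (q := 0) (n := 0 + k) (by omega)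
  | succ q ih =>
    have e1 : Y ^ (q + 1) * X ^ k = Y * (Y ^ q * X ^ k) := by
      rw [pow_succ', mul_assoc]
    rw [e1]
    have := y_mul_F X Y D m hm hD hrel ih
    exact F_anti X Y (by omega) this

lemma F_mul_F {v w : R} {nv nw : ℕ} (hv : v ∈ F X Y nv) (hw : w ∈ F X Y nw) :
    v * w ∈ F X Y (nv + nw) := by
  induction hv using span_induction with
  | mem r hr =>
    obtain ⟨p, q, hpq, rfl⟩ := hr
    induction hw using span_induction with
    | mem r' hr' =>
      obtain ⟨p', q', hpq', rfl⟩ := hr'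
      have h1 : X ^ p * Y ^ q * (X ^ p' * Y ^ q') = X ^ p * (Y ^ q * X ^ p' * Y ^ q') := by
        simp only [mul_assoc]
      rw [h1]
      have h2 : Y ^ q * X ^ p' * Y ^ q' ∈ F X Y (q + p' + q') :=
        muly X Y (ypow_xpow X Y D m hm hD hrel q p')
      have h3 := mulx X Y (k := p) h2
      exact F_anti X Y (by omega) h3
    | zero => rw [mul_zero]; exact zero_mem _
    | add v w _ _ hv hw => rw [mul_add]; exact add_mem hv hw
    | smul c v _ hv => rw [mul_smul_comm]; exact smul_mem _ _ hv
  | zero => rw [zero_mul]; exact zero_mem _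
  | add v w _ _ hv hw => rw [add_mul]; exact add_mem hv hw
  | smul c v _ hv => rw [smul_mul_assoc]; exact smul_mem _ _ hv

lemma A_pow_sub_one (e : ℕ) : (1 + X) ^ e - 1 ∈ F X Y 1 := by
  induction e with
  | zero => simp only [pow_zero, sub_self]; exact zero_mem _
  | succ e ih =>
    have e1 : (1 + X) ^ (e + 1) - 1 = (1 + X) * ((1 + X) ^ e - 1) + X := by
      rw [mul_sub, mul_one, ← pow_succ']; abel
    rw [e1]
    have hX : (X : R) ∈ F X Y 1 := by
      simpa using mem_F X Y (p := 1) (q := 0) (n := 1) (by omega)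
    exact add_mem (P_mul_F X Y (show (1 + X : R) ∈ P X by simpa using apow_mem_P X 1) ih) hX

lemma B_pow_sub_one (e : ℕ) : (1 + Y) ^ e - 1 ∈ F X Y 1 := by
  induction e with
  | zero => simp only [pow_zero, sub_self]; exact zero_mem _
  | succ e ih =>
    have e1 : (1 + Y) ^ (e + 1) - 1 = ((1 + Y) ^ e - 1) + ((1 + Y) ^ e - 1) * Y + Y := by
      rw [pow_succ, mul_add, mul_one, sub_mul, one_mul]; abel
    rw [e1]
    have hY : (Y : R) ∈ F X Y 1 := by
      simpa using mem_F X Y (p := 0) (q := 1) (n := 1) (by omega)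
    have h2 : ((1 + Y) ^ e - 1) * Y ∈ F X Y 1 := by
      have := muly X Y (l := 1) ih
      rw [pow_one] at this
      exact F_anti X Y (by omega) this
    exact add_mem (add_mem ih h2) hY

lemma AB_sub_one (i j : ℕ) : (1 + X) ^ i * (1 + Y) ^ j - 1 ∈ F X Y 1 := by
  have e1 : (1 + X) ^ i * (1 + Y) ^ j - 1
      = (1 + X) ^ i * ((1 + Y) ^ j - 1) + ((1 + X) ^ i - 1) := by
    rw [mul_sub, mul_one]; abel
  rw [e1]
  exact add_mem (P_mul_F X Y (apow_mem_P X i) (B_pow_sub_one X Y D m hm hD hrel j))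
    (A_pow_sub_one X Y D m hm hD hrel i)

lemma pow_subset {I : Ideal R} (hI : ∀ z ∈ I, z ∈ F X Y 1) :
    ∀ n, ∀ z ∈ I ^ (n + 1), z ∈ F X Y (n + 1) := by
  intro n
  induction n with
  | zero => intro z hz; rw [Submodule.pow_one] at hz; exact hI z hz
  | succ n ih =>
    intro z hz
    rw [Submodule.pow_succ] at hz
    refine Submodule.mul_induction_on hz (fun r hr s hs => ?_) (fun a b ha hb => add_mem ha hb)
    have := F_mul_F X Y D m hm hD hrel (ih r hr) (hI s hs)
    exact F_anti X Y (by omega) this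

end rel

end LoewyAux
namespace LoewyAux

lemma geom_char2 {R : Type*} [Ring R] [CharP R 2] (w : R) (k : ℕ) :
    (w - 1) ^ (2 ^ k - 1) = ∑ i ∈ Finset.range (2 ^ k), w ^ i := by
  induction k with
  | zero => simp
  | succ k ih =>
    have h1 : (1 : ℕ) ≤ 2 ^ k := Nat.one_le_two_pow
    have h2 : 2 ^ (k + 1) - 1 = 2 ^ k + (2 ^ k - 1) := by
      have : 2 ^ (k + 1) = 2 ^ k + 2 ^ k := by rw [pow_succ]; omega
      omega
    rw [h2, pow_add, sub_pow_char_pow_of_commute 2 k (Commute.one_right w), ih,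
      show (2:ℕ) ^ (k + 1) = 2 ^ k + 2 ^ k from by rw [pow_succ]; omega,
      Finset.sum_range_add, one_pow, sub_mul, one_mul, Finset.mul_sum]
    simp_rw [← pow_add]
    rw [CharTwo.sub_eq_add, add_comm]

lemma conj_pow_nat {G : Type*} [Group G] (a b : G) {t : ℕ} (h : b⁻¹ * a * b = a ^ t) (k : ℕ) :
    b⁻¹ * a ^ k * b = a ^ (k * t) := by
  induction k with
  | zero => simp
  | succ k ih =>
    have h1 : b⁻¹ * a ^ (k + 1) * b = (b⁻¹ * a ^ k * b) * (b⁻¹ * a * b) := by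
      rw [pow_succ]; group
    rw [h1, ih, h, ← pow_add, Nat.succ_mul]

end LoewyAux



/-- For the group `G₂ = ⟨a⟩ ⋊ ⟨b⟩` with `o(a) = 2^α`, `o(b) = 2^β`,
`b⁻¹ a b = a^(1 + 2^(α−γ))`, where `α ≥ 2γ`, `β ≥ γ ≥ 1` and `α + β > 3`,
the Loewy length satisfies `L(G) = 2^α + 2^β - 1`. -/
theorem loewyLength_G2 (α β γ : ℕ) (h1 : 2 * γ ≤ α) (h2 : γ ≤ β) (h3 : 1 ≤ γ) (h4 : 3 < α + β)
    (G : Type*) [Group G] [Fintype G] (a b : G)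
    (hcard : Fintype.card G = 2 ^ (α + β))
    (hgen : Subgroup.closure {a, b} = ⊤)
    (hoa : orderOf a = 2 ^ α) (hob : orderOf b = 2 ^ β)
    (hconj : b⁻¹ * a * b = a ^ (1 + 2 ^ (α - γ)))
    (hint : Subgroup.zpowers a ⊓ Subgroup.zpowers b = ⊥) :
    loewyLength 2 G = 2 ^ α + 2 ^ β - 1 := by
    classical
  -- numerics
  have hαγ : 1 ≤ α - γ := by omega
  have hα2 : 2 ≤ α := by omega
  have hβ1 : 1 ≤ β := by omega
  set m : ℕ := 2 ^ (α - γ) with hm_def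
  have hm2 : 2 ≤ m := by
    calc (2:ℕ) = 2 ^ 1 := by norm_num
    _ ≤ 2 ^ (α - γ) := Nat.pow_le_pow_right (by norm_num) hαγ
  have hNα : (1:ℕ) ≤ 2 ^ α := Nat.one_le_two_pow
  have hNβ : (1:ℕ) ≤ 2 ^ β := Nat.one_le_two_pow
  have hNα2 : (2:ℕ) ≤ 2 ^ α := by
    calc (2:ℕ) = 2 ^ 1 := by norm_num
    _ ≤ 2 ^ α := Nat.pow_le_pow_right (by norm_num) (by omega)
  -- basic group facts
  have haA : a ^ (2 ^ α) = 1 := by rw [← hoa]; exact pow_orderOf_eq_one a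
  have hbB : b ^ (2 ^ β) = 1 := by rw [← hob]; exact pow_orderOf_eq_one b
  have hconjk : ∀ k : ℕ, b⁻¹ * a ^ k * b = a ^ (k * (1 + m)) :=
    LoewyAux.conj_pow_nat a b hconj
  -- the inverse exponent s = 1 + m * u
  have hcop : Nat.Coprime (1 + m) (2 ^ α) := by
    apply Nat.Coprime.pow_right
    rw [Nat.coprime_two_right]
    rw [add_comm]
    exact Even.add_one (Nat.even_pow.mpr ⟨even_two, by omega⟩)
  haveI : NeZero (2 ^ α) := ⟨by positivity⟩
  set t : ZMod (2 ^ α) := (((1 + m : ℕ) : ZMod (2 ^ α)))⁻¹ with ht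
  have hunit : IsUnit ((1 + m : ℕ) : ZMod (2 ^ α)) := (ZMod.isUnit_iff_coprime _ _).mpr hcop
  have hmul : ((1 + m : ℕ) : ZMod (2 ^ α)) * t = 1 := ZMod.mul_inv_of_unit _ hunit
  set s := t.val with hs_def
  have hcast : ((s : ℕ) : ZMod (2 ^ α)) = t := by
    rw [hs_def, ZMod.natCast_val, ZMod.cast_id]
  have hmod : s * (1 + m) ≡ 1 [MOD 2 ^ α] := by
    have hh : ((s * (1 + m) : ℕ) : ZMod (2 ^ α)) = ((1 : ℕ) : ZMod (2 ^ α)) := by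
      rw [Nat.cast_mul, hcast, Nat.cast_one, mul_comm]
      exact hmul
    exact (ZMod.natCast_eq_natCast_iff _ _ _).mp hh
  have h1mod : 1 % 2 ^ α = 1 := Nat.mod_eq_of_lt (by omega)
  have hs1 : 1 ≤ s := by
    rcases Nat.eq_zero_or_pos s with h | h
    · exfalso
      have := hmod
      unfold Nat.ModEq at this
      rw [h] at this
      simp at this
      omega
    · exact h
  obtain ⟨c, hc⟩ : ∃ c, s * (1 + m) = 1 + 2 ^ α * c := by
    have hd := Nat.div_add_mod (s * (1 + m)) (2 ^ α)
    have : s * (1 + m) % 2 ^ α = 1 := by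
      have := hmod
      unfold Nat.ModEq at this
      omega
    exact ⟨s * (1 + m) / 2 ^ α, by omega⟩
  obtain ⟨u, hu⟩ : ∃ u, s = 1 + m * u := by
    have hm2a : (m : ℤ) ∣ (2 ^ α : ℕ) := by
      have : m ∣ 2 ^ α := ⟨2 ^ γ, by rw [hm_def, ← pow_add]; congr 1; omega⟩
      exact_mod_cast this
    have hc' : (s : ℤ) * (1 + m) = 1 + (2 ^ α : ℕ) * c := by exact_mod_cast hc
    have hzd : (m : ℤ) ∣ (s : ℤ) - 1 := by
      have h1 : (s : ℤ) - 1 = ((2 ^ α : ℕ) : ℤ) * c - (s : ℤ) * m := by linear_combination hc'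
      rw [h1]
      exact dvd_sub (hm2a.mul_right c) (dvd_mul_left _ _)
    obtain ⟨w, hw⟩ := hzd
    have hw0 : 0 ≤ w := by
      have hms : (0:ℤ) < m := by positivity
      by_contra hneg
      push_neg at hneg
      have : (m : ℤ) * w < 0 := mul_neg_of_pos_of_neg hms hneg
      have hs1' : (1:ℤ) ≤ (s:ℤ) := by exact_mod_cast hs1
      omega
    refine ⟨w.toNat, ?_⟩
    have : (s : ℤ) = 1 + (m : ℤ) * (w.toNat : ℤ) := by
      rw [Int.toNat_of_nonneg hw0]; linarith [hw]
    exact_mod_cast this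
  have hpow_a : a ^ (s * (1 + m)) = a := by
    conv_rhs => rw [← pow_one a]
    rw [pow_eq_pow_iff_modEq, hoa]
    exact hmod
  have hba : b * a = a ^ (1 + m * u) * b := by
    have h1 := hconjk s
    rw [hpow_a] at h1
    rw [← hu]
    calc b * a = b * (b⁻¹ * a ^ s * b) := by rw [h1]
    _ = a ^ s * b := by group
  -- injectivity of normal form
  have hinj : ∀ i j k l : ℕ, i < 2 ^ α → j < 2 ^ β → k < 2 ^ α → l < 2 ^ β →
      a ^ i * b ^ j = a ^ k * b ^ l → i = k ∧ j = l := by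
    intro i j k l hi hj hk hl heq
    have h2 : (a ^ k)⁻¹ * a ^ i = b ^ l * (b ^ j)⁻¹ := by
      rw [inv_mul_eq_iff_eq_mul, ← mul_assoc, ← heq, mul_assoc, mul_inv_cancel, mul_one]
    have hz : a ^ ((i : ℤ) - k) = b ^ ((l : ℤ) - j) := by
      rw [zpow_sub, zpow_natCast, zpow_natCast, zpow_sub, zpow_natCast, zpow_natCast,
        ← (((Commute.refl a).pow_pow k i).inv_left).eq]
      exact h2
    have hmem : a ^ ((i : ℤ) - k) ∈ Subgroup.zpowers a ⊓ Subgroup.zpowers b := by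
      refine Subgroup.mem_inf.mpr ⟨Subgroup.mem_zpowers_iff.mpr ⟨(i : ℤ) - k, rfl⟩, ?_⟩
      rw [hz]
      exact Subgroup.mem_zpowers_iff.mpr ⟨(l : ℤ) - j, rfl⟩
    rw [hint, Subgroup.mem_bot] at hmem
    have hmem' : b ^ ((l : ℤ) - j) = 1 := by rw [← hz]; exact hmem
    have hdvd1 : ((2 ^ α : ℕ) : ℤ) ∣ (i : ℤ) - k := by
      rw [← hoa]; exact orderOf_dvd_iff_zpow_eq_one.mpr hmem
    have hdvd2 : ((2 ^ β : ℕ) : ℤ) ∣ (l : ℤ) - j := by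
      rw [← hob]; exact orderOf_dvd_iff_zpow_eq_one.mpr hmem'
    constructor
    · have h0 : (i : ℤ) - k = 0 := by
        refine Int.eq_zero_of_dvd_of_natAbs_lt_natAbs hdvd1 (by omega)
      omega
    · have h0 : (l : ℤ) - j = 0 := by
        refine Int.eq_zero_of_dvd_of_natAbs_lt_natAbs hdvd2 (by omega)
      omega
  -- surjectivity of normal form
  have hsurj : ∀ g : G, ∃ i j : ℕ, i < 2 ^ α ∧ j < 2 ^ β ∧ g = a ^ i * b ^ j := by
    have hf : Function.Bijective
        (fun p : Fin (2 ^ α) × Fin (2 ^ β) => a ^ (p.1 : ℕ) * b ^ (p.2 : ℕ)) := by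
      rw [Fintype.bijective_iff_injective_and_card]
      constructor
      · rintro ⟨i, j⟩ ⟨k, l⟩ h
        obtain ⟨e1, e2⟩ := hinj i j k l i.2 j.2 k.2 l.2 h
        ext
        · exact e1
        · exact e2
      · simp [hcard, pow_add]
    intro g
    obtain ⟨⟨i, j⟩, hg⟩ := hf.2 g
    exact ⟨i, j, i.2, j.2, hg.symm⟩
  
  -- ===== monoid algebra part =====
  have halg_inj : Function.Injective (algebraMap (ZMod 2) (MonoidAlgebra (ZMod 2) G)) :=
    (algebraMap (ZMod 2) (MonoidAlgebra (ZMod 2) G)).injective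
  haveI : CharP (MonoidAlgebra (ZMod 2) G) 2 := charP_of_injective_ringHom halg_inj 2
  obtain ⟨A, hA_def⟩ : ∃ A', A' = MonoidAlgebra.of (ZMod 2) G a := ⟨_, rfl⟩
  obtain ⟨B, hB_def⟩ : ∃ B', B' = MonoidAlgebra.of (ZMod 2) G b := ⟨_, rfl⟩
  obtain ⟨x, hx_def⟩ : ∃ x', x' = A - 1 := ⟨_, rfl⟩
  obtain ⟨y, hy_def⟩ : ∃ y', y' = B - 1 := ⟨_, rfl⟩
  have frob : ∀ (w : MonoidAlgebra (ZMod 2) G) (n : ℕ), (w - 1) ^ (2 ^ n) = w ^ (2 ^ n) - 1 := by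
    intro w n
    rw [sub_pow_char_pow_of_commute 2 n (Commute.one_right w), one_pow]
  have hAx : A = 1 + x := by rw [hx_def]; abel
  have hBy : (1 : MonoidAlgebra (ZMod 2) G) + y = B := by rw [hy_def]; abel
  have hx0 : x ^ (2 ^ α) = 0 := by
    rw [hx_def, frob, hA_def, ← map_pow, haA, map_one, sub_self]
  have hy0 : y ^ (2 ^ β) = 0 := by
    rw [hy_def, frob, hB_def, ← map_pow, hbB, map_one, sub_self]
  have hxm : x ^ m = A ^ m - 1 := by rw [hx_def, hm_def]; exact frob A (α - γ)
  obtain ⟨D, hD_def⟩ : ∃ D', D' = ∑ r ∈ Finset.range u, A ^ (1 + m * r) := ⟨_, rfl⟩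
  have hD : D ∈ LoewyAux.P x := by
    rw [hD_def]
    refine Submodule.sum_mem _ fun r _ => ?_
    rw [hAx]
    exact LoewyAux.apow_mem_P x _
  have hBA : B * A = A ^ (1 + m * u) * B := by
    rw [hA_def, hB_def, ← map_pow, ← map_mul, ← map_mul, hba]
  have hgeom : A ^ (m * u) - 1 = (A ^ m - 1) * ∑ r ∈ Finset.range u, (A ^ m) ^ r := by
    rw [mul_geom_sum, ← pow_mul]
  have hAD : A * ((A ^ m - 1) * ∑ r ∈ Finset.range u, (A ^ m) ^ r) = (A ^ m - 1) * D := by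
    rw [← mul_assoc, (((Commute.refl A).pow_right m).sub_right (Commute.one_right A)).eq,
      mul_assoc, Finset.mul_sum, hD_def]
    congr 1
    refine Finset.sum_congr rfl fun r _ => ?_
    rw [← pow_mul, pow_add, pow_one]
  have hAs : A ^ (1 + m * u) - A = x ^ m * D := by
    rw [hxm]
    calc A ^ (1 + m * u) - A = A * (A ^ (m * u) - 1) := by
          rw [pow_add, pow_one, mul_sub, mul_one]
    _ = (A ^ m - 1) * D := by rw [hgeom, hAD]
  have hrel : y * x = x * y + x ^ m * (D * (1 + y)) := by
    have e : y * x - x * y = B * A - A * B := by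
      rw [hx_def, hy_def]; noncomm_ring
    rw [hBA] at e
    have e2 : y * x - x * y = x ^ m * D * B := by
      rw [e, ← sub_mul, hAs]
    calc y * x = (y * x - x * y) + x * y := by abel
    _ = x ^ m * D * B + x * y := by rw [e2]
    _ = x * y + x ^ m * (D * (1 + y)) := by rw [hBy, ← mul_assoc]; exact add_comm _ _
  -- augmentation ideal
  obtain ⟨ε, hε_def⟩ : ∃ e', e' = (MonoidAlgebra.lift (ZMod 2) (ZMod 2) G) 1 := ⟨_, rfl⟩
  obtain ⟨I, hI_def⟩ : ∃ I', I' = RingHom.ker ε.toRingHom := ⟨_, rfl⟩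
  have hmemI : ∀ z, z ∈ I ↔ ε z = 0 := fun z => by
    rw [hI_def]; exact RingHom.mem_ker
  have hεof : ∀ g : G, ε (MonoidAlgebra.of (ZMod 2) G g) = 1 := fun g => by
    rw [hε_def, MonoidAlgebra.lift_of]; rfl
  have hxI : x ∈ I := by
    rw [hmemI, hx_def, map_sub, map_one, hA_def, hεof, sub_self]
  have hyI : y ∈ I := by
    rw [hmemI, hy_def, map_sub, map_one, hB_def, hεof, sub_self]
  have hIF : ∀ z ∈ I, z ∈ LoewyAux.F x y 1 := by
    intro z hz
    have hεz : ε z = 0 := (hmemI z).mp hz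
    have hsum : ∑ g ∈ z.coeff.support, z.coeff g = 0 := by
      have h1 : ε z = ∑ g ∈ z.coeff.support, z.coeff g := by
        rw [hε_def, MonoidAlgebra.lift_apply]
        simp [Finsupp.sum]
      rw [← h1, hεz]
    have hrep : z = ∑ g ∈ z.coeff.support, z.coeff g • (MonoidAlgebra.of (ZMod 2) G g - 1) := by
      have h2 : ∑ g ∈ z.coeff.support, z.coeff g • (MonoidAlgebra.of (ZMod 2) G g - 1)
          = (∑ g ∈ z.coeff.support, z.coeff g • MonoidAlgebra.of (ZMod 2) G g)
            - (∑ g ∈ z.coeff.support, z.coeff g) • (1 : MonoidAlgebra (ZMod 2) G) := by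
        rw [Finset.sum_smul, ← Finset.sum_sub_distrib]
        exact Finset.sum_congr rfl fun g _ => smul_sub _ _ _
      rw [h2, hsum, zero_smul, sub_zero]
      conv_lhs => rw [← MonoidAlgebra.sum_coeff_single z]
      rw [Finsupp.sum]
      refine Finset.sum_congr rfl fun g _ => ?_
      simp [MonoidAlgebra.of_apply, Finsupp.smul_single]
    rw [hrep]
    refine Submodule.sum_mem _ fun g _ => Submodule.smul_mem _ _ ?_
    obtain ⟨i, j, hi, hj, rfl⟩ := hsurj g
    have hofg : MonoidAlgebra.of (ZMod 2) G (a ^ i * b ^ j) = (1 + x) ^ i * (1 + y) ^ j := by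
      rw [map_mul, map_pow, map_pow, ← hA_def, ← hB_def, hAx, hBy]
    rw [hofg]
    exact LoewyAux.AB_sub_one x y D m hm2 hD hrel i j
  -- nilpotency (upper bound)
  have hFbot : LoewyAux.F x y ((2 ^ α - 1) + (2 ^ β - 1) + 1) ≤ ⊥ := by
    rw [LoewyAux.F, Submodule.span_le]
    rintro r ⟨p, q, hpq, rfl⟩
    simp only [SetLike.mem_coe, Submodule.mem_bot]
    rcases le_or_gt (2 ^ α) p with hp | hp
    · rw [show p = 2 ^ α + (p - 2 ^ α) from by omega, pow_add, hx0, zero_mul, zero_mul]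
    · have hq : 2 ^ β ≤ q := by omega
      rw [show q = 2 ^ β + (q - 2 ^ β) from by omega, pow_add, hy0, zero_mul, mul_zero]
  have hIN : I ^ ((2 ^ α - 1) + (2 ^ β - 1) + 1) = ⊥ := by
    rw [eq_bot_iff]
    intro z hz
    rw [Ideal.mem_bot]
    exact (Submodule.mem_bot _).mp
      (hFbot (LoewyAux.pow_subset x y D m hm2 hD hrel hIF ((2 ^ α - 1) + (2 ^ β - 1)) z hz))
  -- lower bound element
  have key : ∀ p q : ℕ, x ^ p * y ^ q ∈ I ^ (p + q) := by
    intro p q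
    induction q with
    | zero => simpa using Ideal.pow_mem_pow hxI p
    | succ q ih =>
      rw [show p + (q + 1) = (p + q) + 1 from by omega, Submodule.pow_succ,
        show x ^ p * y ^ (q + 1) = (x ^ p * y ^ q) * y from by rw [pow_succ, mul_assoc]]
      exact Submodule.mul_mem_mul ih hyI
  have gsumA : x ^ (2 ^ α - 1) = ∑ i ∈ Finset.range (2 ^ α), A ^ i := by
    rw [hx_def]; exact LoewyAux.geom_char2 A α
  have gsumB : y ^ (2 ^ β - 1) = ∑ j ∈ Finset.range (2 ^ β), B ^ j := by
    rw [hy_def]; exact LoewyAux.geom_char2 B β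
  have hz_ne : x ^ (2 ^ α - 1) * y ^ (2 ^ β - 1) ≠ 0 := by
    intro h0
    have hz_eq : x ^ (2 ^ α - 1) * y ^ (2 ^ β - 1)
        = ∑ i ∈ Finset.range (2 ^ α), ∑ j ∈ Finset.range (2 ^ β),
            MonoidAlgebra.of (ZMod 2) G (a ^ i * b ^ j) := by
      rw [gsumA, gsumB, Finset.sum_mul_sum]
      refine Finset.sum_congr rfl fun i _ => Finset.sum_congr rfl fun j _ => ?_
      rw [map_mul, map_pow, map_pow, ← hA_def, ← hB_def]
    rw [hz_eq] at h0
    have h1 := congrArg (fun f => MonoidAlgebra.coeff f (1 : G)) h0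
    simp only [MonoidAlgebra.coeff_sum, Finsupp.coe_finset_sum, Finset.sum_apply,
      MonoidAlgebra.coeff_zero, Finsupp.coe_zero, Pi.zero_apply] at h1
    simp only [MonoidAlgebra.of_apply, MonoidAlgebra.coeff_single,
      Finsupp.single_apply] at h1
    have hval : (∑ i ∈ Finset.range (2 ^ α), ∑ j ∈ Finset.range (2 ^ β),
        if a ^ i * b ^ j = (1 : G) then (1 : ZMod 2) else 0) = 1 := by
      rw [Finset.sum_eq_single 0]
      · rw [Finset.sum_eq_single 0]
        · rw [if_pos (by simp)]
        · intro j hj hj0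
          rw [if_neg]
          intro hgj
          exact hj0 ((hinj 0 j 0 0 (by omega) (Finset.mem_range.mp hj) (by omega) (by omega)
            (by simpa using hgj)).2)
        · intro h; exact (h (Finset.mem_range.mpr (by omega))).elim
      · intro i hi hi0
        refine Finset.sum_eq_zero fun j hj => ?_
        rw [if_neg]
        intro hg
        exact hi0 ((hinj i j 0 0 (Finset.mem_range.mp hi) (Finset.mem_range.mp hj) (by omega)
          (by omega) (by simpa using hg)).1)
      · intro h; exact (h (Finset.mem_range.mpr (by omega))).elim
    rw [hval] at h1
    exact one_ne_zero h1
  -- maximality and the Jacobson radical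
  have hImax : I.IsMaximal := by
    rw [Ideal.isMaximal_def]
    constructor
    · intro hI_top
      have h1 : (1 : MonoidAlgebra (ZMod 2) G) ∈ I := hI_top ▸ Submodule.mem_top
      rw [hmemI, map_one] at h1
      exact one_ne_zero h1
    · intro J hJ
      obtain ⟨z, hzJ, hzI⟩ := SetLike.exists_of_lt hJ
      have hz1 : ε z = 1 := by
        have hne : ε z ≠ 0 := fun h => hzI ((hmemI z).mpr h)
        have hd : ∀ t : ZMod 2, t ≠ 0 → t = 1 := by decide
        exact hd _ hne
      have hz2 : z - 1 ∈ I := (hmemI _).mpr (by rw [map_sub, map_one, hz1, sub_self])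
      have h1J : (1 : MonoidAlgebra (ZMod 2) G) ∈ J := by
        have := J.sub_mem hzJ (hJ.le hz2)
        simpa using this
      exact (Ideal.eq_top_iff_one J).mpr h1J
  have hnil : ∀ z ∈ I, IsNilpotent z := by
    intro z hz
    refine ⟨(2 ^ α - 1) + (2 ^ β - 1) + 1, ?_⟩
    have h1 := Ideal.pow_mem_pow hz ((2 ^ α - 1) + (2 ^ β - 1) + 1)
    rw [hIN] at h1
    exact (Ideal.mem_bot).mp h1
  have hJac : Ideal.jacobson (⊥ : Ideal (MonoidAlgebra (ZMod 2) G)) = I := by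
    apply le_antisymm
    · exact sInf_le ⟨bot_le, hImax⟩
    · intro z hz
      refine Submodule.mem_sInf.mpr fun M hM => ?_
      obtain ⟨-, hMmax⟩ := hM
      by_cases hIM : I ≤ M
      · exact hIM hz
      · exfalso
        have hlt : M < M ⊔ I :=
          lt_of_le_of_ne le_sup_left (fun h => hIM (le_trans le_sup_right h.ge))
        have htop : M ⊔ I = ⊤ := hMmax.1.2 _ hlt
        have h1 : (1 : MonoidAlgebra (ZMod 2) G) ∈ M ⊔ I := htop ▸ Submodule.mem_top
        obtain ⟨w, hwM, v, hvI, hwv⟩ := Submodule.mem_sup.mp h1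
        have hvnil : IsNilpotent (-v) := (hnil v hvI).neg
        have hwu : IsUnit w := by
          have hiu := hvnil.isUnit_one_add
          have hw_eq : w = 1 + (-v) := by rw [← hwv]; abel
          rwa [← hw_eq] at hiu
        exact hMmax.ne_top (Ideal.eq_top_of_isUnit_mem M hwM hwu)
  -- conclusion
  unfold loewyLength
  simp only [hJac]
  have hNmem : (2 ^ α + 2 ^ β - 1) ∈ {n : ℕ | 0 < n ∧ I ^ n = ⊥} := by
    constructor
    · omega
    · rw [show 2 ^ α + 2 ^ β - 1 = (2 ^ α - 1) + (2 ^ β - 1) + 1 from by omega]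
      exact hIN
  apply le_antisymm (Nat.sInf_le hNmem)
  refine le_csInf ⟨_, hNmem⟩ ?_
  rintro n ⟨hn0, hnbot⟩
  by_contra hlt
  push_neg at hlt
  have hle : I ^ ((2 ^ α - 1) + (2 ^ β - 1)) ≤ I ^ n := Ideal.pow_le_pow_right (by omega)
  have hz0 : x ^ (2 ^ α - 1) * y ^ (2 ^ β - 1) = 0 := by
    have hm' := hle (key (2 ^ α - 1) (2 ^ β - 1))
    rw [hnbot] at hm'
    exact (Ideal.mem_bot).mp hm'
  exact hz_ne hz0
end

section
/- Let α, β, γ be integers with α ≥ 2γ, β ≥ γ ≥ 1 and α + β > 3, and let G be a finite group of order 2^(α+β) together with elements a, b such that G is generated by {a, b}, orderOf a = 2^α, orderOf b = 2^β, b⁻¹ a b = a^(1 + 2^(α−γ)), and the cyclic subgroups ⟨a⟩ and ⟨b⟩ intersect trivially (this is the group G₂ = ⟨a⟩ ⋊ ⟨b⟩). Then D_o(G) = d(G) + 1; equivalently, the small Davenport constant of G equals 2^α + 2^β − 2, the multiset consisting of 2^α − 1 copies of a and 2^β − 1 copies of b being product-one free. -/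
noncomputable section
namespace DavAux
variable {G : Type*} [Group G]

abbrev R2 (G : Type*) [Group G] := MonoidAlgebra (ZMod 2) G

instance : CharP (R2 G) 2 := by
  apply charP_of_injective_algebraMap (R := ZMod 2)
  intro x y h
  have := congrArg (fun f => (f : MonoidAlgebra (ZMod 2) G).coeff 1) h
  simpa [MonoidAlgebra.coe_algebraMap, MonoidAlgebra.coeff_single, Finsupp.single_apply] using this

lemma two_eq_zero : (1 + 1 : R2 G) = 0 := by
  have := CharP.cast_eq_zero (R2 G) 2
  rwa [Nat.cast_ofNat, ← one_add_one_eq_two] at this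

def U (a : G) : R2 G := MonoidAlgebra.of (ZMod 2) G a + 1

lemma add_self (x : R2 G) : x + x = 0 := by
  have : (1+1 : R2 G) * x = x + x := by rw [add_mul, one_mul]
  rw [← this, two_eq_zero, zero_mul]

lemma of_eq (a : G) : MonoidAlgebra.of (ZMod 2) G a = U a + 1 := by
  rw [U, add_assoc, two_eq_zero, add_zero]

lemma U_pow_order (a : G) {n : ℕ} (h : orderOf a ∣ 2 ^ n) : (U a) ^ (2^n) = 0 := by
  have hc : Commute (MonoidAlgebra.of (ZMod 2) G a) (1 : R2 G) := Commute.one_right _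
  have h2 := add_pow_char_pow_of_commute (R := R2 G) (p := 2) (n := n) hc
  rw [U, h2, one_pow, ← map_pow, orderOf_dvd_iff_pow_eq_one.mp h, map_one, two_eq_zero]

lemma U_pow_eq_zero (a : G) {n i : ℕ} (h : orderOf a ∣ 2 ^ n) (hi : 2^n ≤ i) :
    (U a) ^ i = 0 := by
  rw [← Nat.sub_add_cancel hi, pow_add, U_pow_order a h, mul_zero]

end DavAux

noncomputable section
namespace DavAux
open Polynomial MonoidAlgebra
variable {G : Type*} [Group G]

lemma poly_two_eq_zero : (1 + 1 : (ZMod 2)[X]) = 0 := by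
  rw [← Polynomial.C_1, ← map_add, show (1+1 : ZMod 2) = 0 by decide, map_zero]

def hpoly (m : ℕ) : (ZMod 2)[X] := (((X+1) : (ZMod 2)[X])^m).divX

lemma hpoly_spec (m : ℕ) : X * hpoly m + 1 = ((X+1) : (ZMod 2)[X])^m := by
  have := X_mul_divX_add (((X+1) : (ZMod 2)[X])^m)
  rwa [coeff_X_add_one_pow, Nat.choose_zero_right, Nat.cast_one, map_one] at this

lemma hpoly_eval0 {m : ℕ} (hm : Odd m) : (hpoly m).eval 0 = 1 := by
  rw [← coeff_zero_eq_eval_zero, hpoly, coeff_divX, coeff_X_add_one_pow,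
    Nat.choose_one_right]
  obtain ⟨t, rfl⟩ := hm
  push_cast
  rw [show (2:ZMod 2) = 0 by decide]
  ring

lemma of_pow_eq_aeval (a : G) (n : ℕ) :
    MonoidAlgebra.of (ZMod 2) G (a ^ n) = aeval (U a) (((X+1) : (ZMod 2)[X])^n) := by
  rw [map_pow, map_pow, map_add, aeval_X, map_one, of_eq]

variable {a b : G} {m : ℕ}

lemma of_mul_U (hd : b * a = a ^ m * b) :
    MonoidAlgebra.of (ZMod 2) G b * U a = aeval (U a) (X * hpoly m) * MonoidAlgebra.of (ZMod 2) G b := by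
  have h1 : MonoidAlgebra.of (ZMod 2) G b * U a
      = MonoidAlgebra.of (ZMod 2) G (a ^ m) * MonoidAlgebra.of (ZMod 2) G b
        + MonoidAlgebra.of (ZMod 2) G b := by
    rw [U, mul_add, mul_one, ← map_mul, ← map_mul, hd]
  rw [h1, of_pow_eq_aeval, ← hpoly_spec m, map_add, map_one, add_mul, one_mul,
    add_assoc, add_self, add_zero]

lemma of_mul_pow (hd : b * a = a ^ m * b) (n : ℕ) :
    MonoidAlgebra.of (ZMod 2) G b * (U a)^n
      = (aeval (U a) (X * hpoly m))^n * MonoidAlgebra.of (ZMod 2) G b := by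
  induction n with
  | zero => rw [pow_zero, pow_zero, mul_one, one_mul]
  | succ k ih =>
    rw [pow_succ, ← mul_assoc, ih, mul_assoc, of_mul_U hd, ← mul_assoc, ← pow_succ]

lemma of_mul_aeval (hd : b * a = a ^ m * b) (p : (ZMod 2)[X]) :
    MonoidAlgebra.of (ZMod 2) G b * aeval (U a) p =
      aeval (U a) (p.comp (X * hpoly m)) * MonoidAlgebra.of (ZMod 2) G b := by
  induction p using Polynomial.induction_on' with
  | add p q hp hq => rw [map_add, mul_add, hp, hq, add_comp, map_add, add_mul]
  | monomial n c =>
    rw [← C_mul_X_pow_eq_monomial, mul_comp, C_comp, X_pow_comp, map_mul, map_mul,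
      map_pow, map_pow, aeval_C, aeval_X, ← mul_assoc, ← Algebra.commutes c, mul_assoc,
      of_mul_pow hd, ← mul_assoc]
end DavAux

noncomputable section
namespace DavAux
open Polynomial MonoidAlgebra
variable {G : Type*} [Group G]

def Gen (a b : G) (k : ℕ) : Set (R2 G) :=
  {x | ∃ (i j : ℕ) (p : (ZMod 2)[X]), k ≤ i + j ∧ x = aeval (U a) (X^i * p) * (U b)^j}

def F (a b : G) (k : ℕ) : Submodule (ZMod 2) (R2 G) := Submodule.span (ZMod 2) (Gen a b k)

lemma F_antitone (a b : G) {k k' : ℕ} (h : k ≤ k') : F a b k' ≤ F a b k :=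
  Submodule.span_mono (fun x ⟨i, j, p, hk, hx⟩ => ⟨i, j, p, h.trans hk, hx⟩)

lemma mem_F (a b : G) {k i j : ℕ} (p : (ZMod 2)[X]) (h : k ≤ i + j) :
    aeval (U a) (X^i * p) * (U b)^j ∈ F a b k :=
  Submodule.subset_span ⟨i, j, p, h, rfl⟩

variable {a b : G} {m : ℕ}

lemma vmul (hm : Odd m) (hd : b * a = a ^ m * b) (i : ℕ) (p : (ZMod 2)[X]) :
    ∃ p₁ p₂ : (ZMod 2)[X],
      U b * aeval (U a) (X^i * p) =
        aeval (U a) (X^i * p₁) * U b + aeval (U a) (X^(i+1) * p₂) := by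
  set h := hpoly m with hh
  set p₁ : (ZMod 2)[X] := h^i * p.comp (X * h) with hp₁
  have hcomp : (X^i * p).comp (X * h) = X^i * p₁ := by
    rw [mul_comp, X_pow_comp, mul_pow, hp₁]
    ring
  have heval : (p₁ + p).coeff 0 = 0 := by
    rw [coeff_zero_eq_eval_zero, eval_add, hp₁, eval_mul, eval_pow, hpoly_eval0 hm,
      one_pow, one_mul, eval_comp, eval_mul, eval_X, zero_mul, CharTwo.add_self_eq_zero]
  set p₂ : (ZMod 2)[X] := (p₁ + p).divX with hp₂
  have hXp₂ : X^(i+1) * p₂ = X^i * (p₁ + p) := by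
    have := X_mul_divX_add (p₁ + p)
    rw [heval, map_zero, add_zero] at this
    rw [pow_succ, mul_assoc, hp₂, this]
  refine ⟨p₁, p₂, ?_⟩
  have h1 : U b * aeval (U a) (X^i * p)
      = MonoidAlgebra.of (ZMod 2) G b * aeval (U a) (X^i * p) + aeval (U a) (X^i * p) := by
    rw [U, add_mul, one_mul]
  rw [h1, of_mul_aeval hd, hcomp, of_eq (a := b), mul_add, mul_one, hXp₂, mul_add,
    map_add, add_assoc]

lemma mulGen (hm : Odd m) (hd : b * a = a ^ m * b) :
    ∀ (j i : ℕ) (p : (ZMod 2)[X]) (i' : ℕ) (p' : (ZMod 2)[X]) (j' : ℕ),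
      (aeval (U a) (X^i * p) * (U b)^j) * (aeval (U a) (X^i' * p') * (U b)^j')
        ∈ F a b (i + j + i' + j') := by
  intro j
  induction j with
  | zero =>
    intro i p i' p' j'
    have : (aeval (U a) (X^i * p) * (U b)^0) * (aeval (U a) (X^i' * p') * (U b)^j')
        = aeval (U a) (X^(i+i') * (p * p')) * (U b)^j' := by
      rw [pow_zero, mul_one, ← mul_assoc, ← map_mul]
      ring_nf
    rw [this]
    exact mem_F a b _ (by omega)
  | succ j IH =>
    intro i p i' p' j'
    obtain ⟨p₁, p₂, hv⟩ := vmul hm hd i' p'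
    have e0 : (aeval (U a) (X^i * p) * (U b)^(j+1)) * (aeval (U a) (X^i' * p') * (U b)^j')
        = (aeval (U a) (X^i * p) * (U b)^j) * (aeval (U a) (X^i' * p₁) * (U b)^(j'+1))
          + (aeval (U a) (X^i * p) * (U b)^j) * (aeval (U a) (X^(i'+1) * p₂) * (U b)^j') := by
      rw [pow_succ]
      calc aeval (U a) (X^i * p) * ((U b)^j * U b) * (aeval (U a) (X^i' * p') * (U b)^j')
          = aeval (U a) (X^i * p) * (U b)^j * ((U b * aeval (U a) (X^i' * p')) * (U b)^j') := by
            noncomm_ring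
        _ = _ := by
            rw [hv, add_mul, mul_add, mul_assoc (aeval (U a) (X^i' * p₁)) (U b) ((U b)^j'),
              ← pow_succ']
    rw [e0]
    refine add_mem (F_antitone a b (by omega) (IH i p i' p₁ (j'+1)))
      (F_antitone a b (by omega) (IH i p (i'+1) p₂ j'))

lemma F_mul (hm : Odd m) (hd : b * a = a ^ m * b) {k k' : ℕ} {x y : R2 G}
    (hx : x ∈ F a b k) (hy : y ∈ F a b k') : x * y ∈ F a b (k + k') := by
  have h1 : F a b k * F a b k' ≤ F a b (k + k') := by
    rw [F, F, Submodule.span_mul_span]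
    rw [Submodule.span_le]
    rintro z ⟨x, hx, y, hy, rfl⟩
    obtain ⟨i, j, p, hk, rfl⟩ := hx
    obtain ⟨i', j', p', hk', rfl⟩ := hy
    exact F_antitone a b (by omega) (mulGen hm hd j i p i' p' j')
  exact h1 (Submodule.mul_mem_mul hx hy)

lemma F_top (α β : ℕ) (hua : (U a)^(2^α) = 0) (hvb : (U b)^(2^β) = 0) :
    F a b (2^α + 2^β - 1) = ⊥ := by
  rw [F, Submodule.span_eq_bot]
  rintro x ⟨i, j, p, hk, rfl⟩
  by_cases hj : 2^β ≤ j
  · rw [show j = 2^β + (j - 2^β) by omega, pow_add, hvb, zero_mul, mul_zero]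
  · have h1 : 1 ≤ 2^β := Nat.one_le_two_pow
    have hi : 2^α ≤ i := by omega
    rw [map_mul, map_pow, aeval_X, show i = 2^α + (i - 2^α) by omega, pow_add, hua,
      zero_mul, zero_mul, zero_mul]

end DavAux

noncomputable section
namespace DavAux
open Polynomial MonoidAlgebra
variable {G : Type*} [Group G] {a b : G} {m : ℕ}

lemma one_mem_F0 : (1 : R2 G) ∈ F a b 0 := by
  have h : aeval (U a) ((X : (ZMod 2)[X])^0 * 1) * (U b)^0 = 1 := by
    rw [pow_zero, one_mul, map_one, pow_zero, mul_one]
  have h2 := mem_F (a := a) (b := b) (k := 0) (i := 0) (j := 0) (1 : (ZMod 2)[X]) (le_refl 0)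
  rwa [h] at h2

lemma mul_Ub_aeval_mem (x : ℕ) (q : (ZMod 2)[X]) :
    MonoidAlgebra.of (ZMod 2) G (a^x) * (U b * aeval (U b) q) ∈ F a b 1 := by
  induction q using Polynomial.induction_on' with
  | add p q hp hq => rw [map_add, mul_add, mul_add]; exact add_mem hp hq
  | monomial n c =>
    rw [aeval_monomial]
    have h1 : aeval (U a) (X^0 * ((X+1):(ZMod 2)[X])^x) = MonoidAlgebra.of (ZMod 2) G (a^x) := by
      rw [pow_zero, one_mul, of_pow_eq_aeval]
    have he : MonoidAlgebra.of (ZMod 2) G (a^x) * (U b * (algebraMap (ZMod 2) (R2 G) c * (U b)^n))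
        = c • (aeval (U a) (X^0 * ((X+1):(ZMod 2)[X])^x) * (U b)^(n+1)) := by
      rw [Algebra.smul_def, h1, pow_succ', ← mul_assoc (U b), ← Algebra.commutes c (U b),
        mul_assoc (algebraMap (ZMod 2) (R2 G) c) (U b) ((U b)^n), ← mul_assoc,
        ← Algebra.commutes c, mul_assoc]
    rw [he]
    exact Submodule.smul_mem _ c (mem_F a b _ (by omega))

lemma of_add_one_mem (g : G) (hg : ∃ x y : ℕ, g = a^x * b^y) :
    MonoidAlgebra.of (ZMod 2) G g + 1 ∈ F a b 1 := by
  obtain ⟨x, y, rfl⟩ := hg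
  have key : MonoidAlgebra.of (ZMod 2) G (a^x * b^y) + 1
      = MonoidAlgebra.of (ZMod 2) G (a^x) * (MonoidAlgebra.of (ZMod 2) G (b^y) + 1)
        + (MonoidAlgebra.of (ZMod 2) G (a^x) + 1) := by
    rw [map_mul, mul_add, mul_one, add_assoc,
      ← add_assoc (MonoidAlgebra.of (ZMod 2) G (a^x)), add_self, zero_add]
  rw [key]
  refine add_mem ?_ ?_
  · -- of(b^y) + 1 = U b * aeval (U b) q
    have h0 : MonoidAlgebra.of (ZMod 2) G (b^y) + 1 = aeval (U b) (((X+1):(ZMod 2)[X])^y + 1) := by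
      rw [map_add, map_one, of_pow_eq_aeval]
    have hc : ((((X+1):(ZMod 2)[X])^y + 1)).coeff 0 = 0 := by
      rw [Polynomial.coeff_add, coeff_X_add_one_pow, Nat.choose_zero_right, Nat.cast_one, Polynomial.coeff_one]
      decide
    have h1 : (((X+1):(ZMod 2)[X])^y + 1) = X * ((((X+1):(ZMod 2)[X])^y + 1)).divX := by
      have := X_mul_divX_add ((((X+1):(ZMod 2)[X])^y + 1))
      rw [hc, map_zero, add_zero] at this
      exact this.symm
    rw [h0, h1, map_mul, aeval_X]
    exact mul_Ub_aeval_mem x _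
  · have h0 : MonoidAlgebra.of (ZMod 2) G (a^x) + 1 = aeval (U a) (((X+1):(ZMod 2)[X])^x + 1) := by
      rw [map_add, map_one, of_pow_eq_aeval]
    have hc : ((((X+1):(ZMod 2)[X])^x + 1)).coeff 0 = 0 := by
      rw [Polynomial.coeff_add, coeff_X_add_one_pow, Nat.choose_zero_right, Nat.cast_one, Polynomial.coeff_one]
      decide
    have h1 : (((X+1):(ZMod 2)[X])^x + 1) = X^1 * ((((X+1):(ZMod 2)[X])^x + 1)).divX := by
      have := X_mul_divX_add ((((X+1):(ZMod 2)[X])^x + 1))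
      rw [hc, map_zero, add_zero] at this
      rw [pow_one]
      exact this.symm
    have : MonoidAlgebra.of (ZMod 2) G (a^x) + 1
        = aeval (U a) (X^1 * ((((X+1):(ZMod 2)[X])^x + 1)).divX) * (U b)^0 := by
      rw [← h1, ← h0, pow_zero, mul_one]
    rw [this]
    exact mem_F a b _ (by omega)

lemma list_prod_mem (hm : Odd m) (hd : b * a = a ^ m * b) (l : List G)
    (hall : ∀ g ∈ l, ∃ x y : ℕ, g = a^x * b^y) :
    (l.map (fun g => MonoidAlgebra.of (ZMod 2) G g + 1)).prod ∈ F a b l.length := by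
  induction l with
  | nil => exact one_mem_F0
  | cons g l ih =>
    rw [List.map_cons, List.prod_cons, List.length_cons]
    have := F_mul hm hd (of_add_one_mem g (hall g List.mem_cons_self))
      (ih (fun x hx => hall x (List.mem_cons_of_mem _ hx)))
    rw [Nat.add_comm] at this
    exact this

lemma expansion : ∀ l : List G,
    (l.map (fun g => MonoidAlgebra.of (ZMod 2) G g + 1)).prod
      = (l.sublists'.map (fun t => MonoidAlgebra.of (ZMod 2) G t.prod)).sum := by
  intro l
  induction l with
  | nil => simp [MonoidAlgebra.one_def]
  | cons g l ih =>
    rw [List.map_cons, List.prod_cons, ih, List.sublists'_cons, List.map_append,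
      List.sum_append, List.map_map, add_mul, one_mul,
      add_comm ((MonoidAlgebra.of (ZMod 2) G g) * (List.map (fun t => MonoidAlgebra.of (ZMod 2) G t.prod) l.sublists').sum)]
    congr 1
    rw [← List.sum_map_mul_left]
    apply congrArg
    apply List.map_congr_left
    intro t _
    show MonoidAlgebra.of (ZMod 2) G g * MonoidAlgebra.of (ZMod 2) G t.prod
        = MonoidAlgebra.of (ZMod 2) G ((g :: t).prod)
    rw [List.prod_cons, map_mul]

lemma count_nil_sublists' {α : Type*} [DecidableEq α] : ∀ l : List α, l.sublists'.count [] = 1 := by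
  intro l
  induction l with
  | nil => rw [List.sublists'_nil, List.count_cons]; simp
  | cons g l ih =>
    rw [List.sublists'_cons, List.count_append, ih]
    have : List.count [] (List.map (List.cons g) l.sublists') = 0 := by
      rw [List.count_eq_zero]
      intro hmem
      obtain ⟨t, _, ht⟩ := List.mem_map.mp hmem
      exact List.cons_ne_nil g t ht
    rw [this]

lemma sum_indicator {α : Type*} [DecidableEq α] (L : List (List α)) (f : List α → ZMod 2)
    (h : ∀ t ∈ L, f t = if t = [] then 1 else 0) :
    (L.map f).sum = (L.count ([] : List α) : ZMod 2) := by
  induction L with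
  | nil => simp
  | cons t L ih =>
    rw [List.map_cons, List.sum_cons, ih (fun x hx => h x (List.mem_cons_of_mem _ hx)),
      h t List.mem_cons_self, List.count_cons]
    by_cases ht : t = [] <;> simp [ht] <;> push_cast <;> ring

lemma upper (α β : ℕ) (hm : Odd m) (hd : b * a = a ^ m * b)
    (hdecomp : ∀ g : G, ∃ x y : ℕ, g = a^x * b^y)
    (hua : (U a)^(2^α) = 0) (hvb : (U b)^(2^β) = 0)
    (l : List G) (hlen : 2^α + 2^β - 1 ≤ l.length) :
    ∃ t : List G, t.Sublist l ∧ t ≠ [] ∧ t.prod = 1 := by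
  classical
  by_contra hcon
  push_neg at hcon
  set N := 2^α + 2^β - 1 with hN
  set l' := l.take N with hl'
  have hsub : l'.Sublist l := List.take_sublist N l
  have hlen' : l'.length = N := by rw [hl', List.length_take]; omega
  have hfree : ∀ t : List G, t.Sublist l' → t ≠ [] → t.prod ≠ 1 := by
    intro t ht hne
    exact hcon t (ht.trans hsub) hne
  set Q := (l'.map (fun g => MonoidAlgebra.of (ZMod 2) G g + 1)).prod with hQ
  have hQ0 : Q = 0 := by
    have h1 : Q ∈ F a b N := by
      rw [← hlen']
      exact list_prod_mem hm hd l' (fun g _ => hdecomp g)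
    rw [F_top α β hua hvb] at h1
    exact (Submodule.mem_bot _).mp h1
  have hQ1 : Q.coeff 1 = 1 := by
    rw [hQ, expansion]
    have happ := map_list_sum ((Finsupp.applyAddHom (1 : G) (M := ZMod 2)).comp (MonoidAlgebra.coeffAddEquiv (R := ZMod 2) (M := G)).toAddMonoidHom)
      (l'.sublists'.map (fun t => MonoidAlgebra.of (ZMod 2) G t.prod))
    have : ((l'.sublists'.map (fun t => MonoidAlgebra.of (ZMod 2) G t.prod)).sum).coeff 1
        = ((l'.sublists'.map (fun t => MonoidAlgebra.of (ZMod 2) G t.prod)).map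
            (fun x => x.coeff 1)).sum := by
      exact happ
    rw [this, List.map_map]
    have := sum_indicator l'.sublists'
      ((fun (x : R2 G) => x.coeff 1) ∘ (fun t : List G => MonoidAlgebra.of (ZMod 2) G t.prod))
      ?_
    · rw [this, count_nil_sublists']
      decide
    · intro t htmem
      simp only [Function.comp_apply, MonoidAlgebra.of_apply, MonoidAlgebra.coeff_single, Finsupp.single_apply]
      by_cases ht : t = []
      · subst ht; simp
      · have : t.prod ≠ 1 := hfree t (List.mem_sublists'.mp htmem) ht
        simp [this, ht]
  rw [hQ0, MonoidAlgebra.coeff_zero, Finsupp.zero_apply] at hQ1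
  exact absurd hQ1 (by decide)

end DavAux

noncomputable section
namespace DavAux
variable {G : Type*} [Group G] {a b : G} {m : ℕ}

lemma pull (hd : b * a = a ^ m * b) : ∀ x : ℕ, b * a^x = a^(m*x) * b := by
  intro x
  induction x with
  | zero => simp
  | succ k ih =>
    rw [pow_succ, ← mul_assoc, ih, mul_assoc, hd, ← mul_assoc, ← pow_add, Nat.mul_succ]

lemma pullpow (hd : b * a = a ^ m * b) : ∀ y x : ℕ, b^y * a^x = a^(m^y*x) * b^y := by
  intro y
  induction y with
  | zero => intro x; simp
  | succ k ih =>
    intro x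
    rw [pow_succ, mul_assoc, pull hd, ← mul_assoc, ih, mul_assoc, ← pow_succ,
      ← mul_assoc]
    all_goals congr 2
    all_goals ring

lemma inv_pow_eq (c : G) (hc : 0 < orderOf c) (x : ℕ) :
    (c^x)⁻¹ = c^(x*(orderOf c - 1)) := by
  apply inv_eq_of_mul_eq_one_right
  rw [← pow_add]
  have h1 : 1 ≤ orderOf c := hc
  obtain ⟨k, hk⟩ := Nat.exists_eq_add_of_le h1
  have : x + x * (orderOf c - 1) = orderOf c * x := by
    rw [hk, Nat.add_sub_cancel_left]
    ring
  rw [this, pow_mul, pow_orderOf_eq_one, one_pow]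

lemma decomp (hd : b * a = a ^ m * b) (hgen : Subgroup.closure {a, b} = ⊤)
    (hao : 0 < orderOf a) (hbo : 0 < orderOf b) (g : G) :
    ∃ x y : ℕ, g = a^x * b^y := by
  have hg : g ∈ Subgroup.closure {a, b} := hgen ▸ Subgroup.mem_top g
  induction hg using Subgroup.closure_induction with
  | mem x hx =>
    rcases hx with rfl | rfl
    · exact ⟨1, 0, by simp⟩
    · exact ⟨0, 1, by simp⟩
  | one => exact ⟨0, 0, by simp⟩
  | mul x y _ _ hx hy =>
    obtain ⟨x1, y1, rfl⟩ := hx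
    obtain ⟨x2, y2, rfl⟩ := hy
    refine ⟨x1 + m^y1 * x2, y1 + y2, ?_⟩
    rw [mul_assoc, ← mul_assoc (b^y1), pullpow hd, pow_add, pow_add, mul_assoc, mul_assoc]
  | inv x _ hx =>
    obtain ⟨x1, y1, rfl⟩ := hx
    rw [mul_inv_rev]
    rw [inv_pow_eq a hao, inv_pow_eq b hbo, pullpow hd]
    exact ⟨_, _, rfl⟩

lemma prod_eq_pow_count {M : Type*} [Monoid M] [DecidableEq M] (c : M) (hc : c ≠ 1) :
    ∀ L : List M, (∀ x ∈ L, x = 1 ∨ x = c) → L.prod = c ^ (L.count c) := by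
  intro L
  induction L with
  | nil => intro _; simp
  | cons x L ih =>
    intro h
    rcases h x List.mem_cons_self with hx | hx
    · subst hx
      rw [List.prod_cons, one_mul, ih (fun y hy => h y (List.mem_cons_of_mem _ hy)),
        List.count_cons]
      simp [Ne.symm hc]
    · subst hx
      rw [List.prod_cons, ih (fun y hy => h y (List.mem_cons_of_mem _ hy)),
        List.count_cons_self, pow_succ']

end DavAux

noncomputable section
namespace DavAux
variable {G : Type*} [Group G]

lemma freeM (α β : ℕ) (a b : G) (hα : 1 ≤ α) (hβ : 1 ≤ β)
    (hoa : orderOf a = 2^α) (hob : orderOf b = 2^β)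
    (hnorm : (Subgroup.zpowers a).Normal)
    (hint : Subgroup.zpowers a ⊓ Subgroup.zpowers b = ⊥) :
    ProductOneFreeM (Multiset.replicate (2^α-1) a + Multiset.replicate (2^β-1) b) := by
  classical
  have p2a : 2 ≤ 2^α := by
    calc 2 = 2^1 := (pow_one 2).symm
    _ ≤ 2^α := Nat.pow_le_pow_right (by norm_num) hα
  have p2b : 2 ≤ 2^β := by
    calc 2 = 2^1 := (pow_one 2).symm
    _ ≤ 2^β := Nat.pow_le_pow_right (by norm_num) hβ
  have ha1 : a ≠ 1 := by intro h; rw [h, orderOf_one] at hoa; omega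
  have hb1 : b ≠ 1 := by intro h; rw [h, orderOf_one] at hob; omega
  have hne : a ≠ b := by
    intro h
    have hmem : b ∈ Subgroup.zpowers a ⊓ Subgroup.zpowers b :=
      ⟨h ▸ Subgroup.mem_zpowers a, Subgroup.mem_zpowers b⟩
    rw [hint] at hmem
    exact hb1 (Subgroup.mem_bot.mp hmem)
  intro t ht htne l hl hprod
  set k := Multiset.count a t with hkdef
  set m' := Multiset.count b t with hm'def
  have hmem : ∀ x ∈ t, x = a ∨ x = b := by
    intro x hx
    have hx2 := Multiset.mem_of_le ht hx
    rw [Multiset.mem_add] at hx2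
    rcases hx2 with h | h
    · exact Or.inl (Multiset.eq_of_mem_replicate h)
    · exact Or.inr (Multiset.eq_of_mem_replicate h)
  have hk : k ≤ 2^α - 1 := by
    have h2 := Multiset.count_le_of_le a ht
    rwa [Multiset.count_add, Multiset.count_replicate_self, Multiset.count_replicate,
      if_neg (show ¬ b = a from fun h => hne h.symm), add_zero] at h2
  have hm' : m' ≤ 2^β - 1 := by
    have h2 := Multiset.count_le_of_le b ht
    rwa [Multiset.count_add, Multiset.count_replicate_self, Multiset.count_replicate,
      if_neg hne, zero_add] at h2
  have ht' : t = Multiset.replicate k a + Multiset.replicate m' b := by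
    ext x
    rw [Multiset.count_add, Multiset.count_replicate, Multiset.count_replicate]
    by_cases hxa : x = a
    · subst hxa
      rw [if_pos rfl, if_neg (show ¬ b = x from fun h => hne h.symm), add_zero]
    · by_cases hxb : x = b
      · subst hxb
        rw [if_neg (show ¬ a = x from hne), if_pos rfl, zero_add]
      · rw [if_neg (fun h => hxa h.symm), if_neg (fun h => hxb h.symm), Nat.add_zero]
        exact Multiset.count_eq_zero.mpr (fun hx => by rcases hmem x hx with h | h <;> tauto)
  haveI := hnorm
  set π := QuotientGroup.mk' (Subgroup.zpowers a) with hπdef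
  have hπa : π a = 1 := (QuotientGroup.eq_one_iff a).mpr (Subgroup.mem_zpowers a)
  have hπb : π b ≠ 1 := by
    intro h
    have h3 : b ∈ Subgroup.zpowers a := (QuotientGroup.eq_one_iff b).mp h
    have h4 : b ∈ Subgroup.zpowers a ⊓ Subgroup.zpowers b := ⟨h3, Subgroup.mem_zpowers b⟩
    rw [hint] at h4
    exact hb1 (Subgroup.mem_bot.mp h4)
  have hmemt : ∀ x ∈ l, x ∈ t := by
    intro x hx
    rw [← hl]
    exact Multiset.mem_coe.mpr hx
  have hmap : ∀ x ∈ l.map π, x = 1 ∨ x = π b := by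
    intro x hx
    obtain ⟨g, hg, rfl⟩ := List.mem_map.mp hx
    rcases hmem g (hmemt g hg) with rfl | rfl
    · exact Or.inl hπa
    · exact Or.inr rfl
  have hcount : (l.map π).count (π b) = m' := by
    have h1 : ((l.map π : List (G ⧸ Subgroup.zpowers a)) : Multiset (G ⧸ Subgroup.zpowers a))
        = Multiset.map π t := by
      rw [← hl, Multiset.map_coe]
    have h2 := congrArg (Multiset.count (π b)) h1
    rw [Multiset.coe_count] at h2
    rw [h2, ht', Multiset.map_add, Multiset.map_replicate, Multiset.map_replicate,
      Multiset.count_add, Multiset.count_replicate, Multiset.count_replicate,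
      if_neg (fun h => hπb (h.symm.trans hπa)), if_pos rfl, zero_add]
  have hone : (π b) ^ m' = 1 := by
    have h0 : (l.map π).prod = 1 := by
      rw [← map_list_prod (π : G →* G ⧸ Subgroup.zpowers a) l, hprod, map_one]
    rw [prod_eq_pow_count (π b) hπb _ hmap, hcount] at h0
    exact h0
  have hbm' : b ^ m' = 1 := by
    have h2 : π (b ^ m') = 1 := by rw [map_pow, hone]
    have h3 : b ^ m' ∈ Subgroup.zpowers a := (QuotientGroup.eq_one_iff _).mp h2
    have h4 : b ^ m' ∈ Subgroup.zpowers a ⊓ Subgroup.zpowers b :=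
      ⟨h3, Subgroup.mem_zpowers_iff.mpr ⟨(m' : ℤ), by rw [zpow_natCast]⟩⟩
    rw [hint] at h4
    exact Subgroup.mem_bot.mp h4
  have hm0 : m' = 0 := by
    have hd := orderOf_dvd_of_pow_eq_one hbm'
    rw [hob] at hd
    exact Nat.eq_zero_of_dvd_of_lt hd (by omega)
  have halla : ∀ x ∈ l, x = 1 ∨ x = a := by
    intro x hx
    rcases hmem x (hmemt x hx) with rfl | rfl
    · exact Or.inr rfl
    · exfalso
      have := Multiset.count_pos.mpr (hmemt x hx)
      omega
  have hcount_a : l.count a = k := by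
    have h2 := congrArg (Multiset.count a) hl
    rw [Multiset.coe_count] at h2
    exact h2
  have hk0 : k = 0 := by
    have h0 : a ^ k = 1 := by
      rw [← hcount_a, ← prod_eq_pow_count a ha1 l halla, hprod]
    have hd := orderOf_dvd_of_pow_eq_one h0
    rw [hoa] at hd
    exact Nat.eq_zero_of_dvd_of_lt hd (by omega)
  apply htne
  rw [ht', hk0, hm0]
  simp

end DavAux

end
end
end
end
end
end

open DavAux

/-- For the group `G₂ = ⟨a⟩ ⋊ ⟨b⟩` as above, `D_o(G) = d(G) + 1`;
equivalently, the small Davenport constant of `G` equals `2^α + 2^β - 2`, the multiset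
consisting of `2^α - 1` copies of `a` and `2^β - 1` copies of `b` being product-one
free. -/
theorem orderedDavenport_eq_smallDavenport_succ_G2 (α β γ : ℕ) (h1 : 2 * γ ≤ α) (h2 : γ ≤ β) (h3 : 1 ≤ γ) (h4 : 3 < α + β)
    (G : Type*) [Group G] [Fintype G] (a b : G)
    (hcard : Fintype.card G = 2 ^ (α + β))
    (hgen : Subgroup.closure {a, b} = ⊤)
    (hoa : orderOf a = 2 ^ α) (hob : orderOf b = 2 ^ β)
    (hconj : b⁻¹ * a * b = a ^ (1 + 2 ^ (α - γ)))
    (hint : Subgroup.zpowers a ⊓ Subgroup.zpowers b = ⊥) :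
    orderedDavenport G = smallDavenport G + 1 ∧
    smallDavenport G = 2 ^ α + 2 ^ β - 2 ∧
    ProductOneFreeM (Multiset.replicate (2 ^ α - 1) a + Multiset.replicate (2 ^ β - 1) b) := by
  classical
  have hα1 : 1 ≤ α := by omega
  have hβ1 : 1 ≤ β := by omega
  have p2a : 2 ≤ 2^α := by
    calc 2 = 2^1 := (pow_one 2).symm
    _ ≤ 2^α := Nat.pow_le_pow_right (by norm_num) hα1
  have p2b : 2 ≤ 2^β := by
    calc 2 = 2^1 := (pow_one 2).symm
    _ ≤ 2^β := Nat.pow_le_pow_right (by norm_num) hβ1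
  have ha1 : a ≠ 1 := by intro h; rw [h, orderOf_one] at hoa; omega
  -- normality of ⟨a⟩
  haveI hnorm : (Subgroup.zpowers a).Normal := by
    rw [← Subgroup.normalizer_eq_top_iff, eq_top_iff, ← hgen, Subgroup.closure_le]
    intro x hx
    simp only [Set.mem_insert_iff, Set.mem_singleton_iff] at hx
    rcases hx with rfl | rfl
    · exact Subgroup.le_normalizer (Subgroup.mem_zpowers x)
    · have hbinv : x⁻¹ ∈ (Subgroup.normalizer ((Subgroup.zpowers a : Subgroup G) : Set G)) := by
        have hmaps : ∀ n, n ∈ ((Subgroup.zpowers a : Subgroup G) : Set G) →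
            x⁻¹ * n * x⁻¹⁻¹ ∈ ((Subgroup.zpowers a : Subgroup G) : Set G) := by
          intro n hn
          obtain ⟨z, rfl⟩ := Subgroup.mem_zpowers_iff.mp hn
          have e1 : x⁻¹ * a^z * x⁻¹⁻¹ = (x⁻¹ * a * x)^z := by
            have h2 := map_zpow (MulAut.conj x⁻¹) a z
            simpa [MulAut.conj_apply, inv_inv] using h2
          rw [e1, hconj]
          exact Subgroup.zpow_mem _ (Subgroup.mem_zpowers_iff.mpr ⟨(1 + 2^(α-γ) : ℕ), by
            rw [zpow_natCast]⟩) z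
        have := Subgroup.mem_normalizer_fintype hmaps
        rw [Subgroup.mem_normalizer_iff]
        intro n
        exact this n
      have := (Subgroup.normalizer ((Subgroup.zpowers a : Subgroup G) : Set G)).inv_mem hbinv
      rwa [inv_inv] at this
  -- the conjugation exponent m
  have hd0 : b * a * b⁻¹ ∈ Subgroup.zpowers a := hnorm.conj_mem a (Subgroup.mem_zpowers a) b
  obtain ⟨z, hz⟩ := Subgroup.mem_zpowers_iff.mp hd0
  set m : ℕ := (z % (2^α : ℤ)).toNat with hmdef
  have hzm : a ^ (m:ℕ) = b * a * b⁻¹ := by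
    have hnonneg : 0 ≤ z % (2^α : ℤ) := Int.emod_nonneg z (by positivity)
    have e1 : a ^ (m:ℕ) = a ^ ((m:ℕ) : ℤ) := (zpow_natCast a m).symm
    rw [e1, hmdef, Int.toNat_of_nonneg hnonneg]
    have e2 : ((2:ℤ)^α) = ((orderOf a : ℕ) : ℤ) := by rw [hoa]; push_cast; ring
    rw [e2, zpow_mod_orderOf, hz]
  have hd : b * a = a ^ m * b := by rw [hzm, inv_mul_cancel_right]
  have hmodd : Odd m := by
    have hsodd : Odd (1 + 2^(α-γ)) := by
      obtain ⟨u, hu⟩ : Even (2^(α-γ)) := by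
        have hγ : 1 ≤ α - γ := by omega
        exact (Nat.even_pow' (by omega)).mpr even_two
      exact ⟨u, by omega⟩
    have haa : a = a ^ ((1 + 2^(α-γ)) * m) := by
      have e3 : b⁻¹ * a^m * b = (b⁻¹ * a * b)^m := by
        have h2 := map_pow (MulAut.conj b⁻¹) a m
        simpa [MulAut.conj_apply, inv_inv] using h2
      calc a = b⁻¹ * (b * a * b⁻¹) * b := by group
      _ = b⁻¹ * a^m * b := by rw [← hzm]
      _ = (b⁻¹ * a * b)^m := e3
      _ = (a^(1 + 2^(α-γ)))^m := by rw [hconj]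
      _ = a ^ ((1 + 2^(α-γ)) * m) := by rw [← pow_mul]
    by_cases hm0 : m = 0
    · exfalso
      rw [hm0, Nat.mul_zero, pow_zero] at haa
      exact ha1 haa
    · have hpe : a ^ ((1 + 2^(α-γ)) * m) = a ^ 1 := by rw [pow_one, ← haa]
      have hmod := pow_eq_pow_iff_modEq.mp hpe
      rw [hoa] at hmod
      have hge1 : 1 ≤ (1 + 2^(α-γ)) * m := by
        have h5 : 0 < 1 + 2^(α-γ) := Nat.lt_of_lt_of_le Nat.zero_lt_one (Nat.le_add_right 1 _)
        have := Nat.mul_pos h5 (Nat.pos_of_ne_zero hm0)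
        omega
      have hdvd : 2^α ∣ (1 + 2^(α-γ)) * m - 1 := (Nat.modEq_iff_dvd' hge1).mp hmod.symm
      have h2dvd : 2 ∣ (1 + 2^(α-γ)) * m - 1 :=
        dvd_trans (dvd_pow_self 2 (by omega)) hdvd
      have : Odd ((1 + 2^(α-γ)) * m) := by
        rw [Nat.odd_iff]
        omega
      exact (Nat.odd_mul.mp this).2
  -- the pieces
  have hdecomp : ∀ g : G, ∃ x y : ℕ, g = a^x * b^y :=
    decomp hd hgen (by rw [hoa]; positivity) (by rw [hob]; positivity)
  have hua : (U a)^(2^α) = 0 := U_pow_order a (by rw [hoa])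
  have hvb : (U b)^(2^β) = 0 := U_pow_order b (by rw [hob])
  have hupper := upper (a := a) (b := b) α β hmodd hd hdecomp hua hvb
  have hfree := freeM α β a b hα1 hβ1 hoa hob hnorm hint
  set N := 2^α + 2^β - 1 with hNdef
  set s₀ : Multiset G := Multiset.replicate (2^α-1) a + Multiset.replicate (2^β-1) b with hs₀
  have hcard₀ : Multiset.card s₀ = 2^α + 2^β - 2 := by
    rw [hs₀, Multiset.card_add, Multiset.card_replicate, Multiset.card_replicate]
    omega
  set L₀ := s₀.toList with hL₀def
  have hL₀ : (L₀ : Multiset G) = s₀ := Multiset.coe_toList s₀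
  have hlen₀ : L₀.length = 2^α + 2^β - 2 := by
    rw [← Multiset.coe_card, hL₀, hcard₀]
  have hfreeL₀ : OrderedProductOneFree L₀ := by
    intro t hsub htne
    refine hfree ↑t ?_ ?_ t rfl
    · rw [← hL₀]
      exact Multiset.coe_le.mpr hsub.subperm
    · intro h
      exact htne ((Multiset.coe_eq_zero t).mp h)
  have hup : ∀ l : List G, N ≤ l.length → ¬ OrderedProductOneFree l := by
    intro l hl hf
    obtain ⟨t, h1', h2', h3'⟩ := hupper l hl
    exact hf t h1' h2' h3'
  have hbound : ∀ n ∈ {n : ℕ | ∃ s : Multiset G, ProductOneFreeM s ∧ Multiset.card s = n},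
      n ≤ 2^α + 2^β - 2 := by
    rintro n ⟨s, hs, rfl⟩
    by_contra hgt
    push_neg at hgt
    have hlen : N ≤ s.toList.length := by
      rw [← Multiset.coe_card, Multiset.coe_toList]
      omega
    obtain ⟨t, h1', h2', h3'⟩ := hupper s.toList hlen
    refine hs ↑t ?_ ?_ t rfl h3'
    · rw [← Multiset.coe_toList s]
      exact Multiset.coe_le.mpr h1'.subperm
    · intro h
      exact h2' ((Multiset.coe_eq_zero t).mp h)
  have hmem₀ : (2^α + 2^β - 2) ∈ {n : ℕ | ∃ s : Multiset G, ProductOneFreeM s ∧ Multiset.card s = n} :=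
    ⟨s₀, hfree, hcard₀⟩
  have hSd : smallDavenport G = 2^α + 2^β - 2 := by
    apply le_antisymm
    · exact csSup_le ⟨_, hmem₀⟩ hbound
    · exact le_csSup ⟨2^α + 2^β - 2, hbound⟩ hmem₀
  have hmemN : N ∈ {k : ℕ | ∀ l : List G, k ≤ l.length → ¬ OrderedProductOneFree l} := hup
  have hOd : orderedDavenport G = N := by
    apply le_antisymm
    · exact Nat.sInf_le hmemN
    · apply le_csInf ⟨N, hmemN⟩
      intro k hk
      by_contra hlt
      push_neg at hlt
      have hklen : k ≤ L₀.length := by omega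
      exact hk L₀ hklen hfreeL₀
  refine ⟨?_, hSd, hfree⟩
  rw [hOd, hSd]
  omega
end

section
/- Let G be a finite 2-group such that the commutator subgroup [G,G] is nontrivial and is contained in the center of G (i.e. [[G,G],G] = 1). Define the Brauer–Jennings–Zassenhaus series of G (for p = 2) by M₁(G) = G and, for i ≥ 2, M_i(G) = [M_{i−1}(G), G] · M_{⌈i/2⌉}(G)², where for a subgroup H, H² denotes the subgroup generated by the squares of elements of H, and [H, G] is the subgroup generated by commutators. Then for every s ≥ 1 and every j with 2^(s−1) + 1 ≤ j ≤ 2^s, one has M_j(G) = G^(2^s), where G^(2^s) is the subgroup of G generated by the 2^s-th powers of elements of G. -/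
/-- For a subgroup `H` of `G`, the subgroup `H^n` generated by the `n`-th powers of the
elements of `H`. -/
def powSubgroup {G : Type*} [Group G] (n : ℕ) (H : Subgroup G) : Subgroup G :=
  Subgroup.closure ((fun x => x ^ n) '' (H : Set G))

/-- The Brauer–Jennings–Zassenhaus `M`-series of `G` for `p = 2`:
`M₁(G) = G` and `M_i(G) = [M_{i-1}(G), G] · M_{⌈i/2⌉}(G)²` for `i ≥ 2`. -/
def MSeries (G : Type*) [Group G] : ℕ → Subgroup G
  | 0 => ⊤
  | 1 => ⊤
  | n + 2 => ⁅MSeries G (n + 1), (⊤ : Subgroup G)⁆ ⊔ powSubgroup 2 (MSeries G ((n + 2 + 1) / 2))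
  decreasing_by all_goals omega

section Aux

open scoped commutatorElement

variable {G : Type*} [Group G]

lemma MSeries_one : MSeries G 1 = ⊤ := by rw [MSeries]

lemma MSeries_add_two (n : ℕ) :
    MSeries G (n + 2) =
      ⁅MSeries G (n + 1), (⊤ : Subgroup G)⁆ ⊔ powSubgroup 2 (MSeries G ((n + 2 + 1) / 2)) := by
  rw [MSeries]

lemma pow_mem_powSubgroup {n : ℕ} {H : Subgroup G} {x : G} (hx : x ∈ H) :
    x ^ n ∈ powSubgroup n H :=
  Subgroup.subset_closure ⟨x, hx, rfl⟩

lemma powSubgroup_le {n : ℕ} {H K : Subgroup G}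
    (h : ∀ x ∈ H, x ^ n ∈ K) : powSubgroup n H ≤ K := by
  refine (Subgroup.closure_le K).2 ?_
  rintro _ ⟨x, hx, rfl⟩
  exact h x hx

lemma aux_comm_mul_left (hc : ∀ a b z : G, Commute ⁅a, b⁆ z) (a b z : G) :
    ⁅a * b, z⁆ = ⁅a, z⁆ * ⁅b, z⁆ := by
  have h : ⁅a * b, z⁆ = a * ⁅b, z⁆ * a⁻¹ * ⁅a, z⁆ := by
    simp only [commutatorElement_def]; group
  have e : a * ⁅b, z⁆ * a⁻¹ = ⁅b, z⁆ := by
    rw [mul_assoc, (hc b z a⁻¹).eq, ← mul_assoc, mul_inv_cancel, one_mul]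
  rw [h, e, (hc b z ⁅a, z⁆).eq]

lemma aux_comm_one_left (z : G) : ⁅(1 : G), z⁆ = 1 := by
  simp [commutatorElement_def]

lemma aux_comm_inv_left (hc : ∀ a b z : G, Commute ⁅a, b⁆ z) (a z : G) :
    ⁅a⁻¹, z⁆ = ⁅a, z⁆⁻¹ := by
  have h := aux_comm_mul_left hc a⁻¹ a z
  rw [inv_mul_cancel, aux_comm_one_left] at h
  exact eq_inv_of_mul_eq_one_left h.symm

lemma aux_comm_pow_left (hc : ∀ a b z : G, Commute ⁅a, b⁆ z) (a z : G) (n : ℕ) :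
    ⁅a ^ n, z⁆ = ⁅a, z⁆ ^ n := by
  induction n with
  | zero => simpa using aux_comm_one_left z
  | succ n ih => rw [pow_succ, aux_comm_mul_left hc, ih, pow_succ]

lemma aux_swap (hc : ∀ a b z : G, Commute ⁅a, b⁆ z) (a b : G) :
    b * a = a * b * ⁅b, a⁆ := by
  have h : a * b * ⁅b, a⁆ = ⁅b, a⁆ * (a * b) := ((hc b a (a * b)).eq).symm
  rw [h, commutatorElement_def]; group

lemma aux_mul_pow (hc : ∀ a b z : G, Commute ⁅a, b⁆ z) (a b : G) (n : ℕ) :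
    (a * b) ^ n = a ^ n * b ^ n * ⁅b, a⁆ ^ n.choose 2 := by
  induction n with
  | zero => simp
  | succ n ih =>
    have hc' : ∀ z : G, Commute ⁅b, a⁆ z := hc b a
    have key : b ^ n * a = a * b ^ n * ⁅b, a⁆ ^ n := by
      rw [aux_swap hc a (b ^ n), aux_comm_pow_left hc]
    calc (a * b) ^ (n + 1) = a ^ n * b ^ n * ⁅b, a⁆ ^ n.choose 2 * (a * b) := by
          rw [pow_succ, ih]
      _ = a ^ n * b ^ n * (⁅b, a⁆ ^ n.choose 2 * (a * b)) := by group
      _ = a ^ n * b ^ n * ((a * b) * ⁅b, a⁆ ^ n.choose 2) := by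
          rw [((hc' (a * b)).pow_left _).eq]
      _ = a ^ n * (b ^ n * a) * (b * ⁅b, a⁆ ^ n.choose 2) := by group
      _ = a ^ n * (a * b ^ n * ⁅b, a⁆ ^ n) * (b * ⁅b, a⁆ ^ n.choose 2) := by rw [key]
      _ = a ^ (n + 1) * b ^ n * (⁅b, a⁆ ^ n * b) * ⁅b, a⁆ ^ n.choose 2 := by group
      _ = a ^ (n + 1) * b ^ n * (b * ⁅b, a⁆ ^ n) * ⁅b, a⁆ ^ n.choose 2 := by
          rw [((hc' b).pow_left _).eq]
      _ = a ^ (n + 1) * b ^ (n + 1) * ⁅b, a⁆ ^ (n + n.choose 2) := by group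
      _ = a ^ (n + 1) * b ^ (n + 1) * ⁅b, a⁆ ^ (n + 1).choose 2 := by
          rw [Nat.choose_succ_succ, Nat.choose_one_right]

lemma aux_pow_antitone (t : ℕ) :
    powSubgroup (2 ^ (t + 1)) (⊤ : Subgroup G) ≤ powSubgroup (2 ^ t) (⊤ : Subgroup G) := by
  apply powSubgroup_le
  intro x _
  have h : x ^ 2 ^ (t + 1) = (x ^ 2) ^ 2 ^ t := by rw [← pow_mul, pow_succ, Nat.mul_comm]
  rw [h]
  exact pow_mem_powSubgroup (Subgroup.mem_top _)

variable [Finite G]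

lemma aux_comm_pow_mem (hG : IsPGroup 2 G) (hc : ∀ a b z : G, Commute ⁅a, b⁆ z)
    (t : ℕ) (a b : G) :
    ⁅a, b⁆ ^ 2 ^ t ∈ powSubgroup (2 ^ (t + 1)) (⊤ : Subgroup G) := by
  set H := powSubgroup (2 ^ (t + 1)) (⊤ : Subgroup G) with hH
  set n := 2 ^ (t + 1) with hn
  have hn2 : n = 2 * 2 ^ t := by rw [hn, pow_succ]; ring
  have hmem : ⁅a, b⁆ ^ n.choose 2 ∈ H := by
    have h := aux_mul_pow hc b a n
    have h1 : (b * a) ^ n ∈ H := pow_mem_powSubgroup (Subgroup.mem_top _)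
    have h2 : (b : G) ^ n ∈ H := pow_mem_powSubgroup (Subgroup.mem_top _)
    have h3 : (a : G) ^ n ∈ H := pow_mem_powSubgroup (Subgroup.mem_top _)
    have he : ⁅a, b⁆ ^ n.choose 2 = (b ^ n * a ^ n)⁻¹ * (b * a) ^ n := by
      rw [h]; group
    rw [he]
    exact mul_mem (inv_mem (mul_mem h2 h3)) h1
  have hch : n.choose 2 = 2 ^ t * (n - 1) := by
    rw [Nat.choose_two_right]
    calc n * (n - 1) / 2 = 2 * (2 ^ t * (n - 1)) / 2 := by rw [hn2]; ring_nf
      _ = 2 ^ t * (n - 1) := Nat.mul_div_cancel_left _ (by norm_num)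
  set z := ⁅a, b⁆ ^ 2 ^ t with hz
  have hzmem : z ^ (n - 1) ∈ H := by
    rw [hz, ← pow_mul, ← hch]; exact hmem
  obtain ⟨e, he⟩ := hG z
  have hord : orderOf z ∣ 2 ^ e := orderOf_dvd_of_pow_eq_one he
  have hcop : (n - 1).Coprime (orderOf z) := by
    have hodd : ¬ (2 ∣ (n - 1)) := by
      have h1 : (1 : ℕ) ≤ 2 ^ t := Nat.one_le_two_pow
      omega
    exact Nat.Coprime.coprime_dvd_right hord
      (((Nat.Prime.coprime_iff_not_dvd Nat.prime_two).mpr hodd).symm.pow_right e)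
  by_cases ho : orderOf z = 1
  · rw [orderOf_eq_one_iff.mp ho]; exact one_mem H
  · have h1 : 1 < orderOf z := by
      have := orderOf_pos z
      omega
    obtain ⟨k, -, hk⟩ := Nat.exists_mul_mod_eq_one_of_coprime hcop h1
    have hzz : z = (z ^ (n - 1)) ^ k := by
      calc z = z ^ ((n - 1) * k % orderOf z) := by rw [hk, pow_one]
        _ = z ^ ((n - 1) * k) := pow_mod_orderOf z ((n - 1) * k)
        _ = (z ^ (n - 1)) ^ k := pow_mul z (n - 1) k
    rw [hzz]
    exact pow_mem hzmem k

lemma aux_comm_subgroup_le (hG : IsPGroup 2 G) (hc : ∀ a b z : G, Commute ⁅a, b⁆ z) (t : ℕ) :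
    ⁅powSubgroup (2 ^ t) (⊤ : Subgroup G), (⊤ : Subgroup G)⁆ ≤
      powSubgroup (2 ^ (t + 1)) (⊤ : Subgroup G) := by
  rw [Subgroup.commutator_le]
  intro g hg z _
  refine Subgroup.closure_induction
    (p := fun g _ => ⁅g, z⁆ ∈ powSubgroup (2 ^ (t + 1)) (⊤ : Subgroup G)) ?_ ?_ ?_ ?_ hg
  · rintro _ ⟨y, -, rfl⟩
    show ⁅y ^ 2 ^ t, z⁆ ∈ _
    rw [aux_comm_pow_left hc]
    exact aux_comm_pow_mem hG hc t y z
  · show ⁅(1 : G), z⁆ ∈ _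
    rw [aux_comm_one_left]; exact one_mem _
  · intro x y _ _ px py
    show ⁅x * y, z⁆ ∈ _
    rw [aux_comm_mul_left hc]
    exact mul_mem px py
  · intro x _ px
    show ⁅x⁻¹, z⁆ ∈ _
    rw [aux_comm_inv_left hc]
    exact inv_mem px

lemma aux_sq_powSubgroup (hG : IsPGroup 2 G) (hc : ∀ a b z : G, Commute ⁅a, b⁆ z) (t : ℕ) :
    powSubgroup 2 (powSubgroup (2 ^ t) (⊤ : Subgroup G)) =
      powSubgroup (2 ^ (t + 1)) (⊤ : Subgroup G) := by
  apply le_antisymm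
  · apply powSubgroup_le
    intro x hx
    refine Subgroup.closure_induction
      (p := fun x _ => x ^ 2 ∈ powSubgroup (2 ^ (t + 1)) (⊤ : Subgroup G)) ?_ ?_ ?_ ?_ hx
    · rintro _ ⟨y, -, rfl⟩
      show (y ^ 2 ^ t) ^ 2 ∈ _
      rw [← pow_mul, ← pow_succ]
      exact pow_mem_powSubgroup (Subgroup.mem_top _)
    · show (1 : G) ^ 2 ∈ _
      simpa using one_mem (powSubgroup (2 ^ (t + 1)) (⊤ : Subgroup G))
    · intro x y _ hy px py
      show (x * y) ^ 2 ∈ _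
      rw [aux_mul_pow hc x y 2]
      refine mul_mem (mul_mem px py) ?_
      have h : ⁅y, x⁆ ∈ ⁅powSubgroup (2 ^ t) (⊤ : Subgroup G), (⊤ : Subgroup G)⁆ :=
        Subgroup.commutator_mem_commutator hy (Subgroup.mem_top _)
      exact pow_mem (aux_comm_subgroup_le hG hc t h) _
    · intro x _ px
      show x⁻¹ ^ 2 ∈ _
      rw [inv_pow]
      exact inv_mem px
  · apply powSubgroup_le
    intro x _
    have h : x ^ 2 ^ (t + 1) = (x ^ 2 ^ t) ^ 2 := by rw [← pow_mul, ← pow_succ]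
    rw [h]
    exact pow_mem_powSubgroup (pow_mem_powSubgroup (Subgroup.mem_top _))

end Aux

/-- Let `G` be a finite 2-group with `[G,G] ≠ 1` and `[[G,G],G] = 1`.
Then for every `s ≥ 1` and every `j` with `2^(s-1) + 1 ≤ j ≤ 2^s`, the `j`-th term of the
Brauer–Jennings–Zassenhaus `M`-series of `G` equals `G^(2^s)`. -/
theorem mSeries_eq_powSubgroup (G : Type*) [Group G] [Finite G] (hG : IsPGroup 2 G)
    (h1 : ⁅(⊤ : Subgroup G), (⊤ : Subgroup G)⁆ ≠ ⊥)
    (h2 : ⁅⁅(⊤ : Subgroup G), (⊤ : Subgroup G)⁆, (⊤ : Subgroup G)⁆ = ⊥) :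
    ∀ s : ℕ, 1 ≤ s → ∀ j : ℕ, 2 ^ (s - 1) + 1 ≤ j → j ≤ 2 ^ s →
      MSeries G j = powSubgroup (2 ^ s) (⊤ : Subgroup G) := by
  open scoped commutatorElement in
  have hc : ∀ a b z : G, Commute ⁅a, b⁆ z := by
    intro a b z
    rw [← commutatorElement_eq_one_iff_commute]
    have h : ⁅⁅a, b⁆, z⁆ ∈ ⁅⁅(⊤ : Subgroup G), (⊤ : Subgroup G)⁆, (⊤ : Subgroup G)⁆ :=
      Subgroup.commutator_mem_commutator
        (Subgroup.commutator_mem_commutator (Subgroup.mem_top _) (Subgroup.mem_top _))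
        (Subgroup.mem_top _)
    rw [h2] at h
    exact h
  suffices Q : ∀ j : ℕ, ∀ s : ℕ, 1 ≤ s → 2 ^ (s - 1) + 1 ≤ j → j ≤ 2 ^ s →
      MSeries G j = powSubgroup (2 ^ s) (⊤ : Subgroup G) by
    intro s hs j hj1 hj2
    exact Q j s hs hj1 hj2
  intro j
  induction j using Nat.strong_induction_on with
  | _ j IH =>
  intro s hs hj1 hj2
  obtain ⟨t, rfl⟩ : ∃ t, s = t + 1 := ⟨s - 1, by omega⟩
  simp only [Nat.add_sub_cancel] at hj1
  cases t with
  | zero =>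
    have hj : j = 2 := by norm_num at hj1 hj2; omega
    subst hj
    have h0 := MSeries_add_two (G := G) 0
    norm_num at h0
    rw [h0, MSeries_one]
    have hle : ⁅(⊤ : Subgroup G), (⊤ : Subgroup G)⁆ ≤ powSubgroup 2 (⊤ : Subgroup G) := by
      rw [Subgroup.commutator_le]
      intro a _ b _
      have h := aux_comm_pow_mem hG hc 0 a b
      norm_num at h
      exact h
    have he2 : (2 : ℕ) ^ (0 + 1) = 2 := by norm_num
    rw [he2]
    exact sup_eq_right.mpr hle
  | succ u =>
    have hp : (1 : ℕ) ≤ 2 ^ u := Nat.one_le_two_pow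
    have e1 : 2 ^ (u + 1) = 2 * 2 ^ u := by rw [pow_succ]; ring
    have e2 : 2 ^ (u + 2) = 4 * 2 ^ u := by rw [pow_succ, pow_succ]; ring
    obtain ⟨n, rfl⟩ : ∃ n, j = n + 2 := ⟨j - 2, by omega⟩
    rw [MSeries_add_two]
    have hmlt : (n + 2 + 1) / 2 < n + 2 := by omega
    have hM : MSeries G ((n + 2 + 1) / 2) = powSubgroup (2 ^ (u + 1)) (⊤ : Subgroup G) :=
      IH _ hmlt (u + 1) (by omega)
        (by simp only [Nat.add_sub_cancel]; omega) (by omega)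
    have hprev : MSeries G (n + 1) ≤ powSubgroup (2 ^ (u + 1)) (⊤ : Subgroup G) := by
      rcases eq_or_lt_of_le (show 2 ^ (u + 1) ≤ n + 1 by omega) with h | h
      · rw [IH (n + 1) (by omega) (u + 1) (by omega)
          (by simp only [Nat.add_sub_cancel]; omega) (by omega)]
      · rw [IH (n + 1) (by omega) (u + 2) (by omega)
          (by simp only [show u + 2 - 1 = u + 1 from rfl]; omega) (by omega)]
        exact aux_pow_antitone (u + 1)
    have hcomm : ⁅MSeries G (n + 1), (⊤ : Subgroup G)⁆ ≤
        powSubgroup (2 ^ (u + 1 + 1)) (⊤ : Subgroup G) :=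
      le_trans (Subgroup.commutator_mono hprev le_rfl) (aux_comm_subgroup_le hG hc (u + 1))
    rw [hM, aux_sq_powSubgroup hG hc (u + 1)]
    exact sup_eq_right.mpr hcomm
end

section
/- Let G be a finite 2-group generated by two elements a and b such that the commutator subgroup [G,G] is nontrivial and is contained in the center of G (i.e. [[G,G],G] = 1). Then for every s ≥ 1, the subgroup G^(2^s) generated by the 2^s-th powers of elements of G equals the subgroup generated by {a^(2^s), b^(2^s), [a,b]^(2^(s−1))}, where [a,b] = a⁻¹b⁻¹ab. -/
open scoped commutatorElement

section Aux

variable {G : Type*} [Group G]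

lemma my_comm_mul_left (hc : ∀ x y z : G, Commute ⁅x,y⁆ z) (x y z : G) :
    ⁅x*y, z⁆ = ⁅x,z⁆ * ⁅y,z⁆ := by
  have h : ⁅x*y, z⁆ = x * ⁅y,z⁆ * x⁻¹ * ⁅x,z⁆ := by group
  rw [h, ← (hc y z x).eq]
  simp [mul_assoc, (hc y z ⁅x,z⁆).eq]

lemma my_comm_mul_right (hc : ∀ x y z : G, Commute ⁅x,y⁆ z) (x y z : G) :
    ⁅x, y*z⁆ = ⁅x,y⁆ * ⁅x,z⁆ := by
  have h : ⁅x, y*z⁆ = ⁅x,y⁆ * (y * ⁅x,z⁆ * y⁻¹) := by group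
  rw [h, ← (hc x z y).eq]
  simp [mul_assoc]

lemma my_comm_inv_left (hc : ∀ x y z : G, Commute ⁅x,y⁆ z) (x z : G) :
    ⁅x⁻¹, z⁆ = ⁅x,z⁆⁻¹ := by
  have h : ⁅x⁻¹, z⁆ = x⁻¹ * ⁅x,z⁆⁻¹ * x := by group
  rw [h, ← (hc x z x⁻¹).inv_left.eq]
  simp [mul_assoc]

lemma my_comm_inv_right (hc : ∀ x y z : G, Commute ⁅x,y⁆ z) (x z : G) :
    ⁅x, z⁻¹⁆ = ⁅x,z⁆⁻¹ := by
  have h : ⁅x, z⁻¹⁆ = z⁻¹ * ⁅x,z⁆⁻¹ * z := by group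
  rw [h, ← (hc x z z⁻¹).inv_left.eq]
  simp [mul_assoc]

lemma my_pow_aux (hc : ∀ x y z : G, Commute ⁅x,y⁆ z) (x y : G) :
    ∀ n : ℕ, y^n * x = x * y^n * ⁅y,x⁆^n := by
  intro n
  induction n with
  | zero => simp
  | succ n ih =>
    have hyx : y * x = x * y * ⁅y,x⁆ := by
      have : y * x = ⁅y,x⁆ * x * y := by group
      rw [this, (hc y x x).eq, mul_assoc, (hc y x y).eq, ← mul_assoc]
    calc y^(n+1) * x = y^n * (y * x) := by rw [pow_succ, mul_assoc]
    _ = y^n * (x * y * ⁅y,x⁆) := by rw [hyx]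
    _ = (y^n * x) * y * ⁅y,x⁆ := by simp [mul_assoc]
    _ = x * y^n * ⁅y,x⁆^n * y * ⁅y,x⁆ := by rw [ih]
    _ = x * y^(n+1) * ⁅y,x⁆^(n+1) := by
        rw [mul_assoc (x * y^n), ((hc y x y).pow_left n).eq]
        simp [pow_succ, mul_assoc]

lemma my_mul_pow (hc : ∀ x y z : G, Commute ⁅x,y⁆ z) (x y : G) :
    ∀ n : ℕ, (x*y)^n = x^n * y^n * ⁅y,x⁆^(n.choose 2) := by
  intro n
  induction n with
  | zero => simp
  | succ n ih =>
    have hzc : ∀ w : G, Commute ⁅y,x⁆ w := fun w => hc y x w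
    have hch : (n+1).choose 2 = n.choose 2 + n := by
      show (n+1).choose (1+1) = _
      rw [Nat.choose_succ_succ, Nat.choose_one_right, Nat.add_comm]
    have h2 : y^n * x = x * y^n * ⁅y,x⁆^n := my_pow_aux hc x y n
    calc (x*y)^(n+1) = x^n * y^n * (⁅y,x⁆^(n.choose 2) * x) * y := by
          rw [pow_succ, ih]; simp [mul_assoc]
    _ = x^n * y^n * (x * ⁅y,x⁆^(n.choose 2)) * y := by rw [((hzc x).pow_left _).eq]
    _ = x^n * (y^n * x) * (⁅y,x⁆^(n.choose 2) * y) := by simp [mul_assoc]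
    _ = x^n * (x * y^n * ⁅y,x⁆^n) * (y * ⁅y,x⁆^(n.choose 2)) := by
          rw [h2, ((hzc y).pow_left _).eq]
    _ = x^(n+1) * y^(n+1) * ⁅y,x⁆^((n+1).choose 2) := by
          rw [hch, pow_add,
            show x^n * (x * y^n * ⁅y,x⁆^n) * (y * ⁅y,x⁆^(n.choose 2))
              = x^n * x * (y^n * (⁅y,x⁆^n * y)) * ⁅y,x⁆^(n.choose 2) by simp [mul_assoc],
            ((hzc y).pow_left n).eq]
          simp only [pow_succ, mul_assoc, ← pow_add]
          rw [Nat.add_comm]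
          simp

end Aux

/-- Let `G = ⟨a, b⟩` be a finite 2-group with `[G,G] ≠ 1` and
`[[G,G],G] = 1`. Then for every `s ≥ 1`,
`G^(2^s) = ⟨a^(2^s), b^(2^s), [a,b]^(2^(s-1))⟩`. -/
theorem powSubgroup_eq_closure (G : Type*) [Group G] [Finite G] (hG : IsPGroup 2 G)
    (a b : G) (hgen : Subgroup.closure {a, b} = ⊤)
    (h1 : ⁅(⊤ : Subgroup G), (⊤ : Subgroup G)⁆ ≠ ⊥)
    (h2 : ⁅⁅(⊤ : Subgroup G), (⊤ : Subgroup G)⁆, (⊤ : Subgroup G)⁆ = ⊥) :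
    ∀ s : ℕ, 1 ≤ s →
      powSubgroup (2 ^ s) (⊤ : Subgroup G) =
        Subgroup.closure {a ^ 2 ^ s, b ^ 2 ^ s, (a⁻¹ * b⁻¹ * a * b) ^ 2 ^ (s - 1)} := by
  -- all commutators are central
  have hc : ∀ x y z : G, Commute ⁅x, y⁆ z := by
    intro x y z
    have hm : ⁅⁅x, y⁆, z⁆ ∈ (⊥ : Subgroup G) := by
      rw [← h2]
      exact Subgroup.commutator_mem_commutator
        (Subgroup.commutator_mem_commutator (Subgroup.mem_top x) (Subgroup.mem_top y))
        (Subgroup.mem_top z)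
    exact commutatorElement_eq_one_iff_commute.mp (Subgroup.mem_bot.mp hm)
  -- the element in the statement equals `⁅a, b⁆`
  have hcab : a⁻¹ * b⁻¹ * a * b = ⁅a, b⁆ := by
    have h0 : a⁻¹ * b⁻¹ * a * b = ⁅a⁻¹, b⁻¹⁆ := by rw [commutatorElement_def]; group
    rw [h0, my_comm_inv_left hc, my_comm_inv_right hc, inv_inv]
  -- every commutator is a power of `⁅a, b⁆`
  set N := Subgroup.zpowers ⁅a, b⁆ with hNdef
  have hmemtop : ∀ x : G, x ∈ Subgroup.closure ({a, b} : Set G) := by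
    intro x; rw [hgen]; exact Subgroup.mem_top x
  have step1 : ∀ x : G, ⁅x, a⁆ ∈ N ∧ ⁅x, b⁆ ∈ N := by
    intro x
    refine Subgroup.closure_induction (p := fun x _ => ⁅x, a⁆ ∈ N ∧ ⁅x, b⁆ ∈ N)
      ?_ ?_ ?_ ?_ (hmemtop x)
    · rintro x (rfl | rfl)
      · constructor
        · rw [show ⁅x, x⁆ = 1 by group]; exact one_mem N
        · exact Subgroup.mem_zpowers _
      · constructor
        · rw [← commutatorElement_inv]; exact inv_mem (Subgroup.mem_zpowers _)
        · rw [show ⁅x, x⁆ = 1 by group]; exact one_mem N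
    · refine ⟨?_, ?_⟩
      · rw [show ⁅(1:G), a⁆ = 1 by group]; exact one_mem N
      · rw [show ⁅(1:G), b⁆ = 1 by group]; exact one_mem N
    · intro x y _ _ hx hy
      constructor
      · rw [my_comm_mul_left hc]; exact mul_mem hx.1 hy.1
      · rw [my_comm_mul_left hc]; exact mul_mem hx.2 hy.2
    · intro x _ hx
      constructor
      · rw [my_comm_inv_left hc]; exact inv_mem hx.1
      · rw [my_comm_inv_left hc]; exact inv_mem hx.2
  have hN : ∀ x y : G, ⁅x, y⁆ ∈ N := by
    intro x y
    refine Subgroup.closure_induction (p := fun y _ => ∀ x : G, ⁅x, y⁆ ∈ N)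
      ?_ ?_ ?_ ?_ (hmemtop y) x
    · rintro y (rfl | rfl) x
      · exact (step1 x).1
      · exact (step1 x).2
    · intro x; rw [show ⁅x, (1:G)⁆ = 1 by group]; exact one_mem N
    · intro y z _ _ hy hz x
      rw [my_comm_mul_right hc]; exact mul_mem (hy x) (hz x)
    · intro y _ hy x
      rw [my_comm_inv_right hc]; exact inv_mem (hy x)
  intro s hs
  rw [hcab]
  have hq2 : (2:ℕ) ^ s = 2 ^ (s - 1) * 2 := by
    rw [← pow_succ]; congr 1; omega
  have hchoose : (2 ^ s).choose 2 = 2 ^ (s - 1) * (2 ^ s - 1) := by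
    rw [Nat.choose_two_right, hq2]
    rw [show 2 ^ (s-1) * 2 * (2 ^ (s-1) * 2 - 1) = 2 ^ (s-1) * (2 ^ (s-1) * 2 - 1) * 2 by ring]
    rw [Nat.mul_div_cancel _ (by norm_num)]
  set K := Subgroup.closure ({a ^ 2 ^ s, b ^ 2 ^ s, ⁅a, b⁆ ^ 2 ^ (s - 1)} : Set G) with hK
  set d := ⁅a, b⁆ ^ 2 ^ (s - 1) with hd
  have hdK : d ∈ K := Subgroup.subset_closure (by simp [hd])
  apply le_antisymm
  · -- `G^(2^s) ≤ K`
    refine (Subgroup.closure_le _).mpr ?_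
    rintro _ ⟨x, -, rfl⟩
    show x ^ 2 ^ s ∈ K
    refine Subgroup.closure_induction (p := fun x _ => x ^ 2 ^ s ∈ K)
      ?_ ?_ ?_ ?_ (hmemtop x)
    · rintro x (rfl | rfl)
      · exact Subgroup.subset_closure (by simp)
      · exact Subgroup.subset_closure (by simp)
    · show (1:G) ^ 2 ^ s ∈ K
      rw [one_pow]; exact one_mem K
    · intro x y _ _ hx hy
      rw [my_mul_pow hc]
      refine mul_mem (mul_mem hx hy) ?_
      obtain ⟨m, hm⟩ := hN y x
      have hmm : ⁅a, b⁆ ^ m = ⁅y, x⁆ := hm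
      have : ⁅y, x⁆ ^ (2 ^ s).choose 2 = d ^ (m * ((2 ^ s - 1 : ℕ) : ℤ)) := by
        rw [← hmm, hd]
        simp only [← zpow_natCast, ← zpow_mul]
        congr 1
        push_cast [hchoose]
        ring
      rw [this]
      exact Subgroup.zpow_mem K hdK _
    · intro x _ hx
      rw [inv_pow]; exact inv_mem hx
  · -- `K ≤ G^(2^s)`
    set P := powSubgroup (2 ^ s) (⊤ : Subgroup G) with hP
    have hxP : ∀ x : G, x ^ 2 ^ s ∈ P := by
      intro x
      exact Subgroup.subset_closure ⟨x, by simp, rfl⟩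
    refine (Subgroup.closure_le _).mpr ?_
    have hdP : d ∈ P := by
      -- from `(a*b)^(2^s)` we get `d^(2^s - 1) ∈ P`
      have hab : (a*b) ^ 2 ^ s = a ^ 2 ^ s * b ^ 2 ^ s * ⁅b, a⁆ ^ (2 ^ s).choose 2 :=
        my_mul_pow hc a b (2 ^ s)
      have hba : ⁅b, a⁆ ^ (2 ^ s).choose 2 ∈ P := by
        have : ⁅b, a⁆ ^ (2 ^ s).choose 2 = (a ^ 2 ^ s * b ^ 2 ^ s)⁻¹ * (a*b) ^ 2 ^ s := by
          rw [hab]; group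
        rw [this]
        exact mul_mem (inv_mem (mul_mem (hxP a) (hxP b))) (hxP (a*b))
      have hdpow : d ^ ((2 ^ s - 1 : ℕ) : ℤ) ∈ P := by
        have he : ⁅b, a⁆ ^ (2 ^ s).choose 2 = (d ^ ((2 ^ s - 1 : ℕ) : ℤ))⁻¹ := by
          rw [← commutatorElement_inv a b, hchoose, inv_pow, zpow_natCast, hd, ← pow_mul]
        have := hba
        rw [he] at this
        simpa using inv_mem this
      -- use that `2^s - 1` is odd and `d` has 2-power order
      obtain ⟨k, hk⟩ := hG d
      have hodd : Odd (2 ^ s - 1) := by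
        refine Nat.Even.sub_odd (Nat.one_le_two_pow) ?_ odd_one
        exact (Nat.even_pow.mpr ⟨even_two, by omega⟩)
      have hcop : Nat.Coprime (2 ^ s - 1) (2 ^ k) :=
        Nat.Coprime.pow_right k (Nat.coprime_two_right.mpr hodd)
      obtain ⟨u, v, huv⟩ := Nat.isCoprime_iff_coprime.mpr hcop
      have : d = (d ^ ((2 ^ s - 1 : ℕ) : ℤ)) ^ u * (d ^ ((2 ^ k : ℕ) : ℤ)) ^ v := by
        rw [← zpow_mul, ← zpow_mul, ← zpow_add, show ((2^s-1:ℕ):ℤ) * u + ((2^k:ℕ):ℤ) * v = 1 by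
          rw [mul_comm _ u, mul_comm _ v]; exact_mod_cast huv]
        simp
      rw [this, show d ^ ((2 ^ k : ℕ) : ℤ) = 1 by rw [zpow_natCast]; exact hk]
      simpa using Subgroup.zpow_mem P hdpow u
    rintro x (rfl | rfl | rfl)
    · exact hxP a
    · exact hxP b
    · exact hdP
end

section
/- Let G be a finite group. Then d(G) + 1 ≤ D_o(G) ≤ |G|. Moreover, if G is abelian then d(G) + 1 = D_o(G), and D_o(G) = |G| holds if and only if G is cyclic. -/
section Aux

variable {G : Type*} [Group G]

theorem OPOF.sublist {l l' : List G} (h : OrderedProductOneFree l) (hs : l'.Sublist l) :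
    OrderedProductOneFree l' := fun t ht => h t (ht.trans hs)

/-- The set of products of sublists of `u`. -/
noncomputable def sprod (u : List G) : Finset G :=
  @List.toFinset G (Classical.decEq G) (u.sublists'.map List.prod)

theorem mem_sprod {u : List G} {x : G} : x ∈ sprod u ↔ ∃ t : List G, t.Sublist u ∧ t.prod = x := by
  simp [sprod, List.mem_toFinset, List.mem_map, List.mem_sublists']

theorem one_mem_sprod (u : List G) : 1 ∈ sprod u :=
  mem_sprod.mpr ⟨[], List.nil_sublist u, rfl⟩

theorem sprod_nil : sprod ([] : List G) = {1} := by
  ext x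
  simp [mem_sprod, List.sublist_nil, eq_comm]

theorem sprod_cons [DecidableEq G] (a : G) (u : List G) :
    sprod (a :: u) = sprod u ∪ (sprod u).image (a * ·) := by
  ext x
  simp only [mem_sprod, Finset.mem_union, Finset.mem_image]
  constructor
  · rintro ⟨t, ht, rfl⟩
    rcases List.sublist_cons_iff.1 ht with h | ⟨r, rfl, hr⟩
    · exact Or.inl ⟨t, h, rfl⟩
    · exact Or.inr ⟨r.prod, ⟨r, hr, rfl⟩, by simp⟩
  · rintro (⟨t, ht, rfl⟩ | ⟨y, ⟨t, ht, rfl⟩, rfl⟩)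
    · exact ⟨t, ht.trans (List.sublist_cons_self a u), rfl⟩
    · exact ⟨a :: t, List.cons_sublist_cons.mpr ht, by simp⟩

theorem grow1 [DecidableEq G] {a : G} {v : List G} (h : OrderedProductOneFree (a :: v)) :
    (sprod v).card + 1 ≤ (sprod (a :: v)).card := by
  set B := (sprod v).image (a * ·) with hB
  have h1B : 1 ∉ B := by
    rintro hmem
    rw [hB, Finset.mem_image] at hmem
    obtain ⟨y, hy, hy1⟩ := hmem
    obtain ⟨t, ht, rfl⟩ := mem_sprod.1 hy
    exact h (a :: t) (List.cons_sublist_cons.mpr ht) (by simp) (by simpa using hy1)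
  have hsub : insert 1 B ⊆ sprod (a :: v) := by
    rw [sprod_cons]
    intro x hx
    rcases Finset.mem_insert.1 hx with rfl | hx
    · exact Finset.mem_union_left _ (one_mem_sprod v)
    · exact Finset.mem_union_right _ hx
  calc (sprod v).card + 1 = B.card + 1 := by
        rw [hB, Finset.card_image_of_injective _ (mul_right_injective a)]
    _ = (insert 1 B).card := (Finset.card_insert_of_notMem h1B).symm
    _ ≤ (sprod (a :: v)).card := Finset.card_le_card hsub

theorem growSuffix [DecidableEq G] :
    ∀ u : List G, OrderedProductOneFree u → ∀ v : List G, v <:+ u →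
      (sprod v).card + (u.length - v.length) ≤ (sprod u).card := by
  intro u
  induction u with
  | nil =>
    intro _ v hv
    rw [List.suffix_nil.1 hv]
    simp
  | cons a u ih =>
    intro hfree v hv
    obtain ⟨w, hw⟩ := hv
    cases w with
    | nil => simp at hw; subst hw; simp
    | cons b w' =>
      have hb : b = a := by injection hw
      have hw' : w' ++ v = u := by injection hw
      have hvu : v <:+ u := ⟨w', hw'⟩
      have hfu : OrderedProductOneFree u := OPOF.sublist hfree (List.sublist_cons_self a u)
      have h1 := ih hfu v hvu
      have h2 := grow1 hfree
      have h3 : v.length ≤ u.length := hvu.length_le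
      simp only [List.length_cons]
      omega

theorem lower_bound [DecidableEq G] {u : List G} (h : OrderedProductOneFree u) :
    u.length + 1 ≤ (sprod u).card := by
  have := growSuffix u h [] ⟨u, by simp⟩
  simpa [sprod_nil, Nat.add_comm] using this

theorem gen_lemma [DecidableEq G] :
    ∀ u : List G, (hne : u ≠ []) →
      (∀ v : List G, v <:+ u → (sprod v).card = v.length + 1) →
      ∀ x ∈ sprod u, x ∈ Subgroup.zpowers (u.getLast hne) := by
  intro u
  induction u with
  | nil => intro hne; exact absurd rfl hne
  | cons a v ih =>
    intro hne hcard x hx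
    cases v with
    | nil =>
      -- u = [a]
      obtain ⟨t, ht, rfl⟩ := mem_sprod.1 hx
      rcases List.sublist_cons_iff.1 ht with h | ⟨r, rfl, hr⟩
      · rw [List.sublist_nil.1 h]
        exact Subgroup.one_mem _
      · rw [List.sublist_nil.1 hr]
        simpa using Subgroup.mem_zpowers a
    | cons b v' =>
      set w : List G := b :: v' with hwdef
      have hwne : w ≠ [] := by simp [hwdef]
      have hlast : (a :: w).getLast hne = w.getLast hwne := List.getLast_cons hwne
      have hcardw : ∀ v₁ : List G, v₁ <:+ w → (sprod v₁).card = v₁.length + 1 := by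
        intro v₁ hv₁
        exact hcard v₁ (hv₁.trans (List.suffix_cons a w))
      have IH := ih hwne hcardw
      -- intersection is nonempty
      have hcu : (sprod (a :: w)).card = w.length + 2 := by
        have := hcard (a :: w) (List.suffix_refl _)
        simpa using this
      have hcw : (sprod w).card = w.length + 1 := hcardw w (List.suffix_refl _)
      set B := (sprod w).image (a * ·) with hB
      have hcB : B.card = w.length + 1 := by
        rw [hB, Finset.card_image_of_injective _ (mul_right_injective a), hcw]
      have hunion := Finset.card_union_add_card_inter (sprod w) B
      rw [← sprod_cons, hcu, hcw, hcB] at hunion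
      have hinter : (sprod w ∩ B).card = w.length := by omega
      have hpos : 0 < (sprod w ∩ B).card := by
        rw [hinter]; simp [hwdef]
    -- extract a ∈ zpowers
      obtain ⟨z, hz⟩ := Finset.card_pos.1 hpos
      have hz1 : z ∈ sprod w := (Finset.mem_inter.1 hz).1
      have hz2 : z ∈ B := (Finset.mem_inter.1 hz).2
      obtain ⟨y, hy, hyz⟩ := Finset.mem_image.1 hz2
      have ha : a ∈ Subgroup.zpowers (w.getLast hwne) := by
        have hzz := IH z hz1
        have hyy := IH y hy
        have : a = z * y⁻¹ := by rw [← hyz]; group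
        rw [this]
        exact Subgroup.mul_mem _ hzz (Subgroup.inv_mem _ hyy)
      rw [hlast]
      rw [sprod_cons] at hx
      rcases Finset.mem_union.1 hx with hx | hx
      · exact IH x hx
      · obtain ⟨y', hy', rfl⟩ := Finset.mem_image.1 hx
        exact Subgroup.mul_mem _ ha (IH y' hy')

end Aux

section Aux2

variable {G : Type*} [Group G] [Fintype G]

theorem not_free_of_card_le {l : List G} (hl : Fintype.card G ≤ l.length) :
    ¬ OrderedProductOneFree l := by
  intro hfree
  set n := Fintype.card G with hn
  have key : ∀ i j : Fin (n + 1), i < j → (l.take i.val).prod ≠ (l.take j.val).prod := by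
    intro i j hij heq
    set t := (l.take j.val).drop i.val with ht
    have hjl : j.val ≤ l.length := le_trans (Nat.lt_succ_iff.1 j.isLt) hl
    have hd : l.take i.val ++ t = l.take j.val := by
      have := List.take_append_drop i.val (l.take j.val)
      rwa [List.take_take, inf_eq_left.mpr (le_of_lt (show (i:ℕ) < (j:ℕ) from hij))] at this
    have hprod : (l.take i.val).prod * t.prod = (l.take j.val).prod := by
      rw [← List.prod_append, hd]
    have htprod : t.prod = 1 := by
      rw [← heq] at hprod
      have : (l.take i.val).prod * t.prod = (l.take i.val).prod * 1 := by
        rw [mul_one]; exact hprod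
      exact mul_left_cancel this
    have htne : t ≠ [] := by
      have hlen : t.length = j.val - i.val := by
        simp only [ht, List.length_drop, List.length_take]
        omega
      intro h
      rw [h] at hlen
      simp at hlen
      have : (i:ℕ) < (j:ℕ) := hij
      omega
    have htsub : t.Sublist l :=
      ((List.drop_suffix i.val (l.take j.val)).sublist).trans ((List.take_prefix j.val l).sublist)
    exact hfree t htsub htne htprod
  obtain ⟨i, j, hij, hfij⟩ := Fintype.exists_ne_map_eq_of_card_lt
    (fun i : Fin (n + 1) => (l.take i.val).prod) (by simp; omega)
  rcases (Ne.lt_or_gt hij) with h | h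
  · exact key i j h hfij
  · exact key j i h hfij.symm

omit [Fintype G] in
theorem perm_prod_of_comm (hcomm : ∀ x y : G, x * y = y * x) {l₁ l₂ : List G}
    (hp : l₁.Perm l₂) : l₁.prod = l₂.prod := by
  induction hp with
  | nil => rfl
  | cons a _ ih => simp [ih]
  | swap a b l => simp [← mul_assoc, hcomm a b]
  | trans _ _ ih₁ ih₂ => rw [ih₁, ih₂]

end Aux2

/-- For any finite group `G`: `d(G) + 1 ≤ D_o(G) ≤ |G|`; if `G` is
abelian then `d(G) + 1 = D_o(G)`; and `D_o(G) = |G|` if and only if `G` is cyclic. -/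
theorem smallDavenport_le_orderedDavenport_le_card (G : Type*) [Group G] [Fintype G] :
    smallDavenport G + 1 ≤ orderedDavenport G ∧
    orderedDavenport G ≤ Fintype.card G ∧
    ((∀ x y : G, x * y = y * x) → smallDavenport G + 1 = orderedDavenport G) ∧
    (orderedDavenport G = Fintype.card G ↔ IsCyclic G) := by
  classical
  set n := Fintype.card G with hn
  set S : Set ℕ := {k : ℕ | ∀ l : List G, k ≤ l.length → ¬ OrderedProductOneFree l} with hS
  have hDo : orderedDavenport G = sInf S := rfl
  set setD : Set ℕ := {m : ℕ | ∃ s : Multiset G, ProductOneFreeM s ∧ Multiset.card s = m}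
    with hsetD
  have hd : smallDavenport G = sSup setD := rfl
  have hnS : n ∈ S := fun l hl => not_free_of_card_le (hn ▸ hl)
  have listing : ∀ s : Multiset G, ProductOneFreeM s → OrderedProductOneFree s.toList := by
    intro s hs t ht htne
    refine hs ↑t ?_ ?_ t rfl
    · rw [← Multiset.coe_toList s]
      exact Multiset.coe_le.2 ht.subperm
    · simpa using htne
  have hbddlt : ∀ m ∈ setD, m < n := by
    rintro m ⟨s, hs, rfl⟩
    by_contra h
    push_neg at h
    exact not_free_of_card_le (l := s.toList)
      (by rw [Multiset.length_toList]; omega) (listing s hs)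
  have hbdd : BddAbove setD := ⟨n, fun m hm => le_of_lt (hbddlt m hm)⟩
  have hneD : setD.Nonempty :=
    ⟨0, 0, fun t ht htne => absurd (Multiset.le_zero.1 ht) htne, rfl⟩
  obtain ⟨s₀, hs₀, hcard₀⟩ := Nat.sSup_mem hneD hbdd
  have part1 : smallDavenport G + 1 ≤ orderedDavenport G := by
    rw [hDo, hd]
    refine le_csInf ⟨n, hnS⟩ ?_
    intro k hk
    by_contra h
    push_neg at h
    have hk' : k ≤ sSup setD := by omega
    exact hk s₀.toList (by rw [Multiset.length_toList, hcard₀]; exact hk') (listing s₀ hs₀)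
  have part2 : orderedDavenport G ≤ n := by
    rw [hDo]; exact Nat.sInf_le hnS
  have part3 : (∀ x y : G, x * y = y * x) → smallDavenport G + 1 = orderedDavenport G := by
    intro hcomm
    refine le_antisymm part1 ?_
    rw [hDo, hd]
    refine Nat.sInf_le (fun l hl hfree => ?_)
    have hfreeM : ProductOneFreeM (↑l : Multiset G) := by
      intro t ht htne l' hl' hprod
      rw [← hl'] at ht htne
      obtain ⟨l'', hperm, hsub⟩ := Multiset.coe_le.1 ht
      have hp1 : l''.prod = 1 := by rw [perm_prod_of_comm hcomm hperm, hprod]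
      have hl''ne : l'' ≠ [] := by
        rintro rfl
        exact htne (by rw [hperm.symm.eq_nil]; rfl)
      exact hfree l'' hsub hl''ne hp1
    have hmem : l.length ∈ setD := ⟨↑l, hfreeM, by simp⟩
    have := le_csSup hbdd hmem
    omega
  have part4a : IsCyclic G → orderedDavenport G = n := by
    intro hcyc
    refine le_antisymm part2 ?_
    rw [hDo]
    refine le_csInf ⟨n, hnS⟩ ?_
    intro k hk
    by_contra hlt
    push_neg at hlt
    obtain ⟨g, hg⟩ := hcyc.exists_generator
    have hord : orderOf g = n := by
      rw [orderOf_eq_card_of_forall_mem_zpowers hg, Nat.card_eq_fintype_card]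
    refine hk (List.replicate (n - 1) g) (by simp; omega) ?_
    intro t ht htne hprod
    obtain ⟨m, hm, rfl⟩ := List.sublist_replicate_iff.1 ht
    have hm0 : m ≠ 0 := by rintro rfl; exact htne rfl
    rw [List.prod_replicate] at hprod
    have hdvd := orderOf_dvd_of_pow_eq_one hprod
    rw [hord] at hdvd
    have := Nat.le_of_dvd (Nat.pos_of_ne_zero hm0) hdvd
    have hn1 : 0 < n := hn ▸ Fintype.card_pos
    omega
  have part4b : orderedDavenport G = n → IsCyclic G := by
    intro heq
    rcases Nat.lt_or_ge n 2 with hsmall | hbig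
    · have h1 : n = 1 := by have := hn ▸ (Fintype.card_pos (α := G)); omega
      have : Fintype.card G ≤ 1 := by omega
      have : Subsingleton G := Fintype.card_le_one_iff_subsingleton.1 this
      exact isCyclic_of_subsingleton
    · have hnm : (n - 1) ∉ S := by
        intro hmem
        have h1 : sInf S ≤ n - 1 := Nat.sInf_le hmem
        rw [← hDo, heq] at h1
        omega
      rw [hS, Set.mem_setOf_eq] at hnm
      push_neg at hnm
      obtain ⟨l, hllen, hlfree⟩ := hnm
      set l' := l.take (n - 1) with hl'
      have hl'len : l'.length = n - 1 := by
        rw [hl', List.length_take]; omega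
      have hl'free : OrderedProductOneFree l' :=
        OPOF.sublist hlfree (List.take_prefix _ l).sublist
      have hl'ne : l' ≠ [] := by
        intro h; rw [h] at hl'len; simp at hl'len; omega
      have hcards : ∀ v : List G, v <:+ l' → (sprod v).card = v.length + 1 := by
        intro v hv
        have hvfree := OPOF.sublist hl'free hv.sublist
        have h1 := lower_bound hvfree
        have h2 := growSuffix l' hl'free v hv
        have h3 : (sprod l').card ≤ n := by
          have := Finset.card_le_univ (sprod l')
          simpa [hn] using this
        have h4 := hv.length_le
        omega
      have huniv : sprod l' = Finset.univ := by
        refine Finset.eq_univ_of_card _ ?_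
        have := hcards l' (List.suffix_refl _)
        rw [this, hl'len]
        omega
      exact ⟨⟨l'.getLast hl'ne, fun x =>
        gen_lemma l' hl'ne hcards x (by rw [huniv]; exact Finset.mem_univ x)⟩⟩
  exact ⟨part1, part2, part3, ⟨part4b, part4a⟩⟩
end
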